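/- arXiv:1805.02519 — 5 statements merged into one kernel-verified Lean document; each statement's English description precedes it below -/
import Mathlib

section
/- If G is a graph of order n with independence number α < n, then the number of maximum independent sets of G is at most ⌈n/α⌉^(n mod α) · ⌊n/α⌋^(α − (n mod α)). -/
open SimpleGraph

/-- A set of vertices is independent if its vertices are pairwise non-adjacent. -/
def SimpleGraph.IsIndepSet' {V : Type*} (G : SimpleGraph V) (s : Set V) : Prop :=
  s.Pairwise (fun u v => ¬ G.Adj u v)

/-- The independence number of a graph. -/
noncomputable def indepNum {V : Type*} (G : SimpleGraph V) : ℕ :=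
  sSup {k | ∃ s : Finset V, G.IsIndepSet' ↑s ∧ s.card = k}

/-- The number of maximum independent sets of a graph. -/
noncomputable def numMaxIndep {V : Type*} (G : SimpleGraph V) : ℕ :=
  {s : Finset V | G.IsIndepSet' ↑s ∧ s.card = _root_.indepNum G}.ncard



/-- the balanced product bound, in floor form -/
def Bnd (n a : ℕ) : ℕ := (n / a + 1) ^ (n % a) * (n / a) ^ (a - n % a)

lemma exists_min_multiset : ∀ s : Multiset ℕ, s ≠ 0 → ∃ m ∈ s, ∀ x ∈ s, m ≤ x := by
  intro s
  induction s using Multiset.induction with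
  | empty => simp
  | cons a t ih =>
    intro _
    rcases eq_or_ne t 0 with rfl | ht
    · exact ⟨a, by simp, by simp⟩
    · obtain ⟨m, hm, hmin⟩ := ih ht
      refine ⟨min a m, ?_, ?_⟩
      · rcases le_total a m with h | h
        · simp [min_eq_left h]
        · simp only [min_eq_right h]
          exact Multiset.mem_cons_of_mem hm
      · intro x hx
        rcases Multiset.mem_cons.1 hx with rfl | hx
        · exact min_le_left _ _
        · exact le_trans (min_le_right _ _) (hmin x hx)

lemma prod_le_Bnd_aux (K : ℕ) : ∀ s : Multiset ℕ, (s.map (fun x => x * x)).sum ≤ K →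
    (∀ x ∈ s, 0 < x) → s.prod ≤ Bnd s.sum s.card := by
  induction K using Nat.strong_induction_on with
  | _ K IH =>
  intro s hK hpos
  by_cases hsm : ∃ a ∈ s, ∃ b ∈ s.erase a, b + 1 < a
  · -- smoothing step
    obtain ⟨a, ha, b, hb, hab⟩ := hsm
    set t := (s.erase a).erase b with hts
    have hs1 : s = a ::ₘ b ::ₘ t := by
      rw [hts, Multiset.cons_erase hb, Multiset.cons_erase ha]
    have ha2 : 2 ≤ a := by omega
    set s' := (a - 1) ::ₘ (b + 1) ::ₘ t with hs'
    have hsum : s'.sum = s.sum := by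
      rw [hs1, hs']; simp [Multiset.sum_cons]; omega
    have hcard : s'.card = s.card := by rw [hs1, hs']; simp
    obtain ⟨c, rfl⟩ : ∃ c, a = b + 2 + c := ⟨a - b - 2, by omega⟩
    have hP1 : (s.map (fun x => x * x)).sum =
        (b+2+c)*(b+2+c) + (b*b + (t.map (fun x => x * x)).sum) := by
      rw [hs1]; simp [Multiset.sum_cons]
    have hP2 : (s'.map (fun x => x * x)).sum =
        (b+1+c)*(b+1+c) + ((b+1)*(b+1) + (t.map (fun x => x * x)).sum) := by
      have e : b+2+c-1 = b+1+c := by omega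
      rw [hs', e]
      simp only [Multiset.map_cons, Multiset.sum_cons]
    have hμ : (s'.map (fun x => x * x)).sum < K := by
      rw [hP2]
      have : (b+1+c)*(b+1+c) + ((b+1)*(b+1)) < (b+2+c)*(b+2+c) + b*b := by nlinarith
      omega
    have hpos' : ∀ x ∈ s', 0 < x := by
      intro x hx
      rw [hs'] at hx
      rcases Multiset.mem_cons.1 hx with rfl | hx
      · omega
      rcases Multiset.mem_cons.1 hx with rfl | hx
      · omega
      · exact hpos x (by rw [hs1]; exact Multiset.mem_cons_of_mem (Multiset.mem_cons_of_mem hx))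
    have hple : s.prod ≤ s'.prod := by
      rw [hs1, hs']
      simp only [Multiset.prod_cons, ← mul_assoc]
      have hab2 : (b+2+c) * b ≤ (b+2+c-1) * (b+1) := by
        have : b+2+c-1 = b+1+c := by omega
        rw [this]; nlinarith
      exact Nat.mul_le_mul_right _ hab2
    calc s.prod ≤ s'.prod := hple
      _ ≤ Bnd s'.sum s'.card := IH _ hμ s' (le_refl _) hpos'
      _ = Bnd s.sum s.card := by rw [hsum, hcard]
  · -- balanced case
    push_neg at hsm
    rcases eq_or_ne s 0 with rfl | hs0
    · simp [Bnd]
    obtain ⟨m, hm, hmin⟩ := exists_min_multiset s hs0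
    have hub : ∀ x ∈ s, x ≤ m + 1 := by
      intro x hx
      rcases eq_or_ne x m with rfl | hxm
      · omega
      · have hmx : m ∈ s.erase x := Multiset.mem_erase_of_ne (Ne.symm hxm) |>.mpr hm
        have := hsm x hx m hmx
        omega
    -- s = replicate c1 m + replicate c2 (m+1)
    have hsplit : s = Multiset.replicate (s.count m) m +
        (s.filter (fun x => ¬ x = m)) := by
      conv_lhs => rw [← Multiset.filter_add_not (fun x => x = m) s]
      rw [Multiset.filter_eq']
    set c1 := s.count m with hc1
    set s2 := s.filter (fun x => ¬ x = m) with hs2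
    have hrep2 : s2 = Multiset.replicate s2.card (m + 1) := by
      rw [Multiset.eq_replicate_card]
      intro x hx
      rw [hs2, Multiset.mem_filter] at hx
      have := hmin x hx.1
      have := hub x hx.1
      have := hx.2
      omega
    set c2 := s2.card with hc2
    have hc1pos : 0 < c1 := by
      rw [hc1, Multiset.count_pos]; exact hm
    have hmpos : 0 < m := hpos m hm
    have hcard : s.card = c1 + c2 := by
      rw [hsplit, Multiset.card_add, Multiset.card_replicate]
    have hsum : s.sum = (c1 + c2) * m + c2 := by
      rw [hsplit, Multiset.sum_add, Multiset.sum_replicate, hrep2,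
        Multiset.sum_replicate]
      simp only [smul_eq_mul]
      ring
    have hprod : s.prod = m ^ c1 * (m + 1) ^ c2 := by
      rw [hsplit, Multiset.prod_add, Multiset.prod_replicate, hrep2,
        Multiset.prod_replicate]
    have hdiv : s.sum / (c1 + c2) = m := by
      rw [hsum]
      rw [Nat.mul_add_div (by omega), Nat.div_eq_of_lt (by omega)]
      omega
    have hmod : s.sum % (c1 + c2) = c2 := by
      rw [hsum, Nat.mul_add_mod, Nat.mod_eq_of_lt (by omega)]
    rw [hprod, hcard, Bnd, hdiv, hmod]
    have : c1 + c2 - c2 = c1 := by omega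
    rw [this]
    ring_nf
    exact le_refl _

lemma prod_le_Bnd_of_sum_le (s : Multiset ℕ) (hpos : ∀ x ∈ s, 0 < x) (n : ℕ)
    (hs : s.sum ≤ n) : s.prod ≤ Bnd n s.card := by
  rcases eq_or_ne s 0 with rfl | hs0
  · simp [Bnd]
  · obtain ⟨a, ha⟩ := Multiset.exists_mem_of_ne_zero hs0
    set t := s.erase a with hts
    have hs1 : s = a ::ₘ t := (Multiset.cons_erase ha).symm
    set s' := (a + (n - s.sum)) ::ₘ t with hs'
    have hsum' : s'.sum = n := by
      rw [hs']
      simp only [Multiset.sum_cons]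
      have : s.sum = a + t.sum := by rw [hs1]; simp
      omega
    have hcard' : s'.card = s.card := by rw [hs1, hs']; simp
    have hpos' : ∀ x ∈ s', 0 < x := by
      intro x hx
      rcases Multiset.mem_cons.1 hx with rfl | hx
      · have := hpos a ha; omega
      · exact hpos x (by rw [hs1]; exact Multiset.mem_cons_of_mem hx)
    have hple : s.prod ≤ s'.prod := by
      rw [hs1, hs']
      simp only [Multiset.prod_cons]
      exact Nat.mul_le_mul_right _ (by omega)
    calc s.prod ≤ s'.prod := hple
      _ ≤ Bnd s'.sum s'.card := prod_le_Bnd_aux _ s' (le_refl _) hpos'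
      _ = Bnd n s.card := by rw [hsum', hcard']

/-- the balanced multiset realizing `Bnd` -/
def balM (m b : ℕ) : Multiset ℕ :=
  Multiset.replicate (m % b) (m / b + 1) + Multiset.replicate (b - m % b) (m / b)

lemma balM_card (m b : ℕ) (hb : 0 < b) : (balM m b).card = b := by
  have := Nat.mod_lt m hb
  simp [balM]; omega

lemma balM_sum (m b : ℕ) (hb : 0 < b) : (balM m b).sum = m := by
  have h1 := Nat.mod_lt m hb
  have h2 := Nat.div_add_mod m b
  simp [balM, Multiset.sum_replicate, smul_eq_mul]
  nlinarith [Nat.sub_add_cancel (le_of_lt h1)]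

lemma balM_prod (m b : ℕ) : (balM m b).prod = Bnd m b := by
  simp [balM, Bnd, Multiset.prod_replicate]

lemma balM_pos (m b : ℕ) (hb : 0 < b) (hbm : b ≤ m) : ∀ x ∈ balM m b, 0 < x := by
  intro x hx
  have hq : 0 < m / b := Nat.div_pos hbm hb
  rcases Multiset.mem_add.1 hx with h | h <;>
    · have := Multiset.eq_of_mem_replicate h
      omega

lemma Bnd_mono (m m' b : ℕ) (h : m ≤ m') (hbm : b ≤ m) : Bnd m b ≤ Bnd m' b := by
  rcases Nat.eq_zero_or_pos b with rfl | hb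
  · simp [Bnd]
  · calc Bnd m b = (balM m b).prod := (balM_prod m b).symm
      _ ≤ Bnd m' (balM m b).card :=
        prod_le_Bnd_of_sum_le _ (balM_pos m b hb hbm) _ (by rw [balM_sum m b hb]; exact h)
      _ = Bnd m' b := by rw [balM_card m b hb]

lemma Bnd_key (a m b : ℕ) (ha : 0 < a) (hbm : b ≤ m) :
    a * Bnd m b ≤ Bnd (a + m) (b + 1) := by
  rcases Nat.eq_zero_or_pos b with rfl | hb
  · simp only [Bnd, Nat.mod_one, Nat.div_one, Nat.mod_zero, Nat.div_zero, pow_zero,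
      Nat.zero_sub, one_mul, mul_one, one_pow, pow_one, Nat.sub_zero, zero_add]
    omega
  · have h1 : (a ::ₘ balM m b).prod = a * Bnd m b := by
      rw [Multiset.prod_cons, balM_prod]
    have h2 : (a ::ₘ balM m b).sum = a + m := by
      rw [Multiset.sum_cons, balM_sum m b hb]
    have h3 : (a ::ₘ balM m b).card = b + 1 := by
      rw [Multiset.card_cons, balM_card m b hb]
    have h4 : ∀ x ∈ a ::ₘ balM m b, 0 < x := by
      intro x hx
      rcases Multiset.mem_cons.1 hx with rfl | hx
      · exact ha
      · exact balM_pos m b hb hbm x hx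
    calc a * Bnd m b = (a ::ₘ balM m b).prod := h1.symm
      _ ≤ Bnd (a ::ₘ balM m b).sum (a ::ₘ balM m b).card := prod_le_Bnd_aux _ _ (le_refl _) h4
      _ = Bnd (a + m) (b + 1) := by rw [h2, h3]

lemma Bnd_self (n : ℕ) : Bnd n n = 1 := by
  rcases Nat.eq_zero_or_pos n with rfl | hn
  · simp [Bnd]
  · simp [Bnd, Nat.mod_self, Nat.div_self hn]

lemma ceilDiv_eq (n a : ℕ) (ha : 0 < a) (hr : n % a ≠ 0) : n ⌈/⌉ a = n / a + 1 := by
  rw [Nat.ceilDiv_eq_add_pred_div]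
  have h1 := Nat.div_add_mod n a
  have h2 := Nat.mod_lt n ha
  have h4 : a * (n / a + 1) = a * (n / a) + a := by ring
  have h3 : n + a - 1 = a * (n / a + 1) + (n % a - 1) := by omega
  rw [h3, Nat.mul_add_div ha, Nat.div_eq_of_lt (show n % a - 1 < a by omega)]

lemma Bnd_eq_ceil (n a : ℕ) (ha : 0 < a) :
    Bnd n a = (n ⌈/⌉ a) ^ (n % a) * (n / a) ^ (a - n % a) := by
  rcases eq_or_ne (n % a) 0 with h | h
  · simp [Bnd, h]
  · rw [Bnd, ceilDiv_eq n a ha h]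

set_option linter.unusedSectionVars false

section GraphSide
variable {V : Type*} [Fintype V] [DecidableEq V] (G : SimpleGraph V)

open scoped Classical in
/-- the independence number of the induced subgraph on `A` -/
noncomputable def alphaA (A : Finset V) : ℕ :=
  (A.powerset.filter (fun s : Finset V => G.IsIndepSet' (↑s : Set V))).sup Finset.card

open scoped Classical in
/-- maximum independent subsets of `A` -/
noncomputable def misA (A : Finset V) : Finset (Finset V) :=
  A.powerset.filter (fun s : Finset V => G.IsIndepSet' (↑s : Set V) ∧ s.card = alphaA G A)

variable {G}

lemma indep_mono {s t : Set V} (h : t ⊆ s) (hs : G.IsIndepSet' s) : G.IsIndepSet' t :=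
  Set.Pairwise.mono h hs

lemma indep_insert {v : V} {s : Finset V} (hs : G.IsIndepSet' ↑s)
    (h : ∀ u ∈ s, ¬ G.Adj v u) : G.IsIndepSet' ↑(insert v s) := by
  rw [Finset.coe_insert]
  refine (letI : Std.Symm (fun u v : V => ¬ G.Adj u v) := ⟨?_⟩; Set.pairwise_insert_of_symmetric).2 ⟨hs, fun b hb _ => h b hb⟩
  intro x y hxy h'
  exact hxy (G.adj_symm h')

lemma mem_misA_iff {A s : Finset V} :
    s ∈ misA G A ↔ s ⊆ A ∧ G.IsIndepSet' ↑s ∧ s.card = alphaA G A := by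
  classical
  simp [misA, Finset.mem_filter, Finset.mem_powerset]

lemma le_alphaA {A s : Finset V} (hs : s ⊆ A) (hi : G.IsIndepSet' ↑s) :
    s.card ≤ alphaA G A := by
  classical
  exact Finset.le_sup (by simp [Finset.mem_filter, Finset.mem_powerset, hs, hi])

lemma alphaA_le_card (A : Finset V) : alphaA G A ≤ A.card := by
  classical
  exact Finset.sup_le fun s hs =>
    Finset.card_le_card (Finset.mem_powerset.1 (Finset.mem_filter.1 hs).1)

lemma exists_misA (A : Finset V) : ∃ s, s ∈ misA G A := by
  classical
  have hne : (A.powerset.filter (fun s : Finset V => G.IsIndepSet' (↑s : Set V))).Nonempty := by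
    refine ⟨∅, ?_⟩
    exact Finset.mem_filter.2 ⟨Finset.empty_mem_powerset _, by simp [SimpleGraph.IsIndepSet']⟩
  obtain ⟨b, hb, hsup⟩ := Finset.exists_mem_eq_sup _ hne Finset.card
  rw [Finset.mem_filter, Finset.mem_powerset] at hb
  exact ⟨b, mem_misA_iff.2 ⟨hb.1, hb.2, by rw [alphaA, hsup]⟩⟩

end GraphSide

section Main
variable {V : Type*} [Fintype V] [DecidableEq V]

theorem misA_card_le (G : SimpleGraph V) (A : Finset V) :
    (misA G A).card ≤ Bnd A.card (alphaA G A) := by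
  classical
  induction A using Finset.strongInductionOn with
  | _ A IH =>
  set α := alphaA G A with hαdef
  rcases eq_or_lt_of_le (alphaA_le_card (G := G) A) with heq | hlt
  · have hAmem : A ∈ misA G A := by
      obtain ⟨s, hs⟩ := exists_misA (G := G) A
      have hs' := mem_misA_iff.1 hs
      have hsA : s = A := Finset.eq_of_subset_of_card_le hs'.1 (by rw [hs'.2.2, ← heq])
      rwa [hsA] at hs
    have huniq : ∀ s ∈ misA G A, s = A := by
      intro s hs
      have hs' := mem_misA_iff.1 hs
      exact Finset.eq_of_subset_of_card_le hs'.1 (by rw [hs'.2.2, ← heq])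
    have hsing : misA G A = {A} := Finset.eq_singleton_iff_unique_mem.2 ⟨hAmem, huniq⟩
    rw [hsing, Finset.card_singleton, ← heq]
    exact le_of_eq (Bnd_self α).symm
  · have hA0 : A.Nonempty := Finset.card_pos.1 (by omega)
    have hα1 : 1 ≤ α := by
      obtain ⟨a, ha⟩ := hA0
      have h1 : ({a} : Finset V).card ≤ α :=
        le_alphaA (Finset.singleton_subset_iff.2 ha) (by simp [SimpleGraph.IsIndepSet'])
      simpa using h1
    obtain ⟨v, hv, hmin⟩ := Finset.exists_min_image A (fun u => (A.filter (G.Adj u)).card) hA0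
    set n := A.card with hn
    set d := (A.filter (G.Adj v)).card with hd
    have hvfilt : v ∉ A.filter (G.Adj v) := by simp
    set Nv := insert v (A.filter (G.Adj v)) with hNv
    have hNvA : Nv ⊆ A := Finset.insert_subset hv (Finset.filter_subset _ _)
    have hNvcard : Nv.card = d + 1 := by rw [hNv, Finset.card_insert_of_notMem hvfilt]
    have hmeet : ∀ s ∈ misA G A, ∃ u ∈ Nv, u ∈ s := by
      intro s hs
      obtain ⟨hsA, hsi, hsc⟩ := mem_misA_iff.1 hs
      by_cases hvs : v ∈ s
      · exact ⟨v, Finset.mem_insert_self _ _, hvs⟩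
      · by_contra hcon
        push_neg at hcon
        have hnadj : ∀ u ∈ s, ¬ G.Adj v u := by
          intro u hu hadj
          exact hcon u (Finset.mem_insert_of_mem (Finset.mem_filter.2 ⟨hsA hu, hadj⟩)) hu
        have hins : G.IsIndepSet' ↑(insert v s) := indep_insert hsi hnadj
        have hle : (insert v s).card ≤ α := le_alphaA (Finset.insert_subset hv hsA) hins
        rw [Finset.card_insert_of_notMem hvs, hsc] at hle
        omega
    have hdn : α + d ≤ n := by
      obtain ⟨s, hs⟩ := exists_misA (G := G) A
      obtain ⟨u, huNv, hus⟩ := hmeet s hs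
      have hs' := mem_misA_iff.1 hs
      have huA : u ∈ A := hNvA huNv
      have hdisj : Disjoint s (A.filter (G.Adj u)) := by
        rw [Finset.disjoint_left]
        intro x hxs hxf
        have hadj : G.Adj u x := (Finset.mem_filter.1 hxf).2
        rcases eq_or_ne x u with rfl | hne
        · exact G.irrefl hadj
        · exact hs'.2.1 (Finset.mem_coe.2 hus) (Finset.mem_coe.2 hxs) (Ne.symm hne) hadj
      have hsub : s ∪ A.filter (G.Adj u) ⊆ A :=
        Finset.union_subset hs'.1 (Finset.filter_subset _ _)
      have hcard := Finset.card_le_card hsub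
      rw [Finset.card_union_of_disjoint hdisj] at hcard
      have hdu : d ≤ (A.filter (G.Adj u)).card := hmin u huA
      have := hs'.2.2
      omega
    have hstep : ∀ u ∈ Nv, ((misA G A).filter (fun s => u ∈ s)).card ≤
        Bnd (n - d - 1) (α - 1) := by
      intro u huNv
      rcases Finset.eq_empty_or_nonempty ((misA G A).filter (fun s => u ∈ s)) with hemp | hne
      · simp [hemp]
      obtain ⟨s₀, hs₀⟩ := hne
      rw [Finset.mem_filter] at hs₀
      obtain ⟨hs₀m, hus₀⟩ := hs₀
      have hs₀' := mem_misA_iff.1 hs₀m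
      have huA : u ∈ A := hNvA huNv
      have hufilt : u ∉ A.filter (G.Adj u) := by simp
      set Bu := A \ insert u (A.filter (G.Adj u)) with hBu
      have hBusub : Bu ⊆ A := Finset.sdiff_subset
      have huBu : u ∉ Bu := by simp [hBu]
      have hBuss : Bu ⊂ A := (Finset.ssubset_iff_of_subset hBusub).2 ⟨u, huA, huBu⟩
      have hmemBu : ∀ x, x ∈ Bu ↔ x ∈ A ∧ x ≠ u ∧ ¬ G.Adj u x := by
        intro x
        simp only [hBu, Finset.mem_sdiff, Finset.mem_insert, Finset.mem_filter]
        tauto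
      have hBucard : Bu.card = n - ((A.filter (G.Adj u)).card + 1) := by
        rw [hBu, Finset.card_sdiff_of_subset (Finset.insert_subset huA (Finset.filter_subset _ _)),
          Finset.card_insert_of_notMem hufilt]
      have herase_sub : ∀ s, s ∈ misA G A → u ∈ s → s.erase u ⊆ Bu := by
        intro s hs hus
        have hs' := mem_misA_iff.1 hs
        intro x hx
        rw [Finset.mem_erase] at hx
        refine (hmemBu x).2 ⟨hs'.1 hx.2, hx.1, ?_⟩
        exact hs'.2.1 (Finset.mem_coe.2 hus) (Finset.mem_coe.2 hx.2) (Ne.symm hx.1)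
      have hαBu_ge : α - 1 ≤ alphaA G Bu := by
        have h1 : s₀.erase u ⊆ Bu := herase_sub s₀ hs₀m hus₀
        have h2 : G.IsIndepSet' ↑(s₀.erase u) :=
          indep_mono (by rw [Finset.coe_erase]; exact Set.diff_subset) hs₀'.2.1
        have h3 := le_alphaA h1 h2
        rwa [Finset.card_erase_of_mem hus₀, hs₀'.2.2] at h3
      have hαBu_le : alphaA G Bu ≤ α - 1 := by
        apply Finset.sup_le
        intro t ht
        rw [Finset.mem_filter, Finset.mem_powerset] at ht
        obtain ⟨htB, hti⟩ := ht
        have hut : u ∉ t := fun h => huBu (htB h)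
        have hins : G.IsIndepSet' ↑(insert u t) :=
          indep_insert hti (fun x hx => ((hmemBu x).1 (htB hx)).2.2)
        have hle : (insert u t).card ≤ α :=
          le_alphaA (Finset.insert_subset huA (htB.trans hBusub)) hins
        rw [Finset.card_insert_of_notMem hut] at hle
        omega
      have hαBu : alphaA G Bu = α - 1 := le_antisymm hαBu_le hαBu_ge
      have hinj : ((misA G A).filter (fun s => u ∈ s)).card ≤ (misA G Bu).card := by
        apply Finset.card_le_card_of_injOn (fun s => s.erase u)
        · intro s hs
          rw [Finset.mem_coe, Finset.mem_filter] at hs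
          obtain ⟨hsm, hus⟩ := hs
          have hsm' := mem_misA_iff.1 hsm
          refine mem_misA_iff.2 ⟨herase_sub s hsm hus, ?_, ?_⟩
          · exact indep_mono (by rw [Finset.coe_erase]; exact Set.diff_subset) hsm'.2.1
          · rw [Finset.card_erase_of_mem hus, hsm'.2.2, hαBu]
        · intro s hs s' hs' hss
          rw [Finset.mem_coe, Finset.mem_filter] at hs hs'
          rw [← Finset.insert_erase hs.2, ← Finset.insert_erase hs'.2]
          exact congrArg (insert u) hss
      calc ((misA G A).filter (fun s => u ∈ s)).card ≤ (misA G Bu).card := hinj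
        _ ≤ Bnd Bu.card (alphaA G Bu) := IH Bu hBuss
        _ = Bnd Bu.card (α - 1) := by rw [hαBu]
        _ ≤ Bnd (n - d - 1) (α - 1) :=
            Bnd_mono _ _ _ (by rw [hBucard]; have := hmin u huA; omega)
              (le_trans hαBu_ge (alphaA_le_card Bu))
    have hcov : misA G A ⊆ Nv.biUnion (fun u => (misA G A).filter (fun s => u ∈ s)) := by
      intro s hs
      obtain ⟨u, huNv, hus⟩ := hmeet s hs
      exact Finset.mem_biUnion.2 ⟨u, huNv, Finset.mem_filter.2 ⟨hs, hus⟩⟩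
    calc (misA G A).card
        ≤ (Nv.biUnion (fun u => (misA G A).filter (fun s => u ∈ s))).card :=
          Finset.card_le_card hcov
      _ ≤ ∑ u ∈ Nv, ((misA G A).filter (fun s => u ∈ s)).card := Finset.card_biUnion_le
      _ ≤ ∑ _u ∈ Nv, Bnd (n - d - 1) (α - 1) := Finset.sum_le_sum hstep
      _ = (d + 1) * Bnd (n - d - 1) (α - 1) := by
          rw [Finset.sum_const, hNvcard, smul_eq_mul]
      _ ≤ Bnd ((d + 1) + (n - d - 1)) ((α - 1) + 1) := Bnd_key _ _ _ (by omega) (by omega)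
      _ = Bnd n α := by congr 1 <;> omega

end Main


theorem stmt0 {V : Type*} [Fintype V] (G : SimpleGraph V) (n α : ℕ)
    (hn : Fintype.card V = n) (hα : _root_.indepNum G = α) (hlt : α < n) :
    numMaxIndep G ≤ (n ⌈/⌉ α) ^ (n % α) * (n / α) ^ (α - n % α) := by
  classical
  have h1 : _root_.indepNum G = alphaA G Finset.univ := by
    apply le_antisymm
    · refine csSup_le ⟨0, ∅, by simp [SimpleGraph.IsIndepSet'], by simp⟩ ?_
      rintro k ⟨s, hsi, rfl⟩
      exact le_alphaA (Finset.subset_univ s) hsi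
    · obtain ⟨s, hs⟩ := exists_misA (G := G) Finset.univ
      have hs' := mem_misA_iff.1 hs
      have hbdd : BddAbove {k | ∃ s : Finset V, G.IsIndepSet' ↑s ∧ s.card = k} := by
        refine ⟨Fintype.card V, ?_⟩
        rintro k ⟨t, _, rfl⟩
        exact Finset.card_le_univ t
      rw [← hs'.2.2]
      exact le_csSup hbdd ⟨s, hs'.2.1, rfl⟩
  have h2 : numMaxIndep G = (misA G Finset.univ).card := by
    rw [numMaxIndep]
    have hset : {s : Finset V | G.IsIndepSet' ↑s ∧ s.card = _root_.indepNum G} =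
        ↑(misA G Finset.univ) := by
      ext s
      simp only [Set.mem_setOf_eq, Finset.coe_sort_coe, Finset.mem_coe, mem_misA_iff]
      constructor
      · rintro ⟨h1', h2'⟩
        exact ⟨Finset.subset_univ s, h1', by rw [← h1]; exact h2'⟩
      · rintro ⟨_, h1', h2'⟩
        exact ⟨h1', by rw [h1]; exact h2'⟩
    rw [hset, Set.ncard_coe_finset]
  have h3 := misA_card_le G (Finset.univ : Finset V)
  rw [Finset.card_univ, hn, ← h1, hα] at h3
  have hα1 : 0 < α := by
    rcases Nat.eq_zero_or_pos α with h | h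
    · exfalso
      have hV : Nonempty V := by
        rw [← Fintype.card_pos_iff]; omega
      obtain ⟨a⟩ := hV
      have : ({a} : Finset V).card ≤ alphaA G Finset.univ :=
        le_alphaA (Finset.subset_univ _) (by simp [SimpleGraph.IsIndepSet'])
      rw [← h1, hα] at this
      simp at this
      omega
    · exact h
  rw [h2, ← Bnd_eq_ceil n α hα1]
  exact h3
end

section
/- Let n, q, p be integers with 2 ≤ q < p ≤ n. If G is a graph of order n with no clique of order p, then the number of cliques of order q in G is at most the number of cliques of order q in the Turán graph T_{p−1}(n). -/
open SimpleGraph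

/-- The number of cliques of order `q` in a graph. -/
noncomputable def numCliques {V : Type*} (G : SimpleGraph V) (q : ℕ) : ℕ :=
  {s : Finset V | G.IsNClique q s}.ncard

open Finset

set_option linter.unusedSectionVars false
set_option linter.unusedVariables false

namespace Zykov
variable {V : Type*} [Fintype V] [DecidableEq V]

noncomputable def cfin (G : SimpleGraph V) : Finset (Finset V) :=
  @Finset.filter _ (fun S => G.IsClique (S : Set V)) (Classical.decPred _) Finset.univ

lemma mem_cfin {G : SimpleGraph V} {S : Finset V} : S ∈ cfin G ↔ G.IsClique (S : Set V) := by
  classical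
  simp [cfin]

noncomputable def W (w : ℕ → ℕ) (G : SimpleGraph V) : ℕ := ∑ S ∈ cfin G, w S.card

noncomputable def WP (w : ℕ → ℕ) (G : SimpleGraph V) (P : Finset V → Prop) : ℕ :=
  ∑ S ∈ (@Finset.filter _ P (Classical.decPred _) (cfin G)), w S.card

lemma sum_filter_eq_WP (w : ℕ → ℕ) (G : SimpleGraph V) (P : Finset V → Prop)
    [DecidablePred P] : ∑ S ∈ (cfin G).filter P, w S.card = WP w G P := by
  unfold WP
  apply Finset.sum_congr _ (fun _ _ => rfl)
  ext S
  simp [Finset.mem_filter]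

lemma W_split (w : ℕ → ℕ) (G : SimpleGraph V) (Q : Finset V → Prop) :
    W w G = WP w G Q + WP w G (fun S => ¬ Q S) := by
  classical
  unfold W
  rw [← Finset.sum_filter_add_sum_filter_not (cfin G) Q, sum_filter_eq_WP, sum_filter_eq_WP]

lemma adj_of_mem_clique {G : SimpleGraph V} {S : Finset V} (h : G.IsClique (S : Set V))
    {x y : V} (hx : x ∈ S) (hy : y ∈ S) (hxy : x ≠ y) : G.Adj x y :=
  h (by simpa using hx) (by simpa using hy) hxy

lemma isClique_replaceVertex_of_not_mem {G : SimpleGraph V} {s t : V} {S : Finset V}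
    (ht : t ∉ S) : (G.replaceVertex s t).IsClique (S : Set V) ↔ G.IsClique (S : Set V) := by
  constructor <;> intro h x hx y hy hxy
  · have := h hx hy hxy
    rwa [G.adj_replaceVertex_iff_of_ne s (fun e => ht (by rw [← e]; exact hx))
      (fun e => ht (by rw [← e]; exact hy))] at this
  · rw [G.adj_replaceVertex_iff_of_ne s (fun e => ht (by rw [← e]; exact hx))
      (fun e => ht (by rw [← e]; exact hy))]
    exact h hx hy hxy

lemma isClique_replaceVertex_of_mem {G : SimpleGraph V} {s t : V} (hst : s ≠ t) {S : Finset V}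
    (ht : t ∈ S) : (G.replaceVertex s t).IsClique (S : Set V) ↔
      s ∉ S ∧ G.IsClique ((insert s (S.erase t) : Finset V) : Set V) := by
  constructor
  · intro h
    have hs : s ∉ S := by
      intro hs
      exact (G.not_adj_replaceVertex_same s t) (adj_of_mem_clique h hs ht hst)
    refine ⟨hs, ?_⟩
    intro x hx y hy hxy
    simp only [coe_insert, Set.mem_insert_iff, mem_coe, Finset.mem_erase] at hx hy
    rcases hx with hxs | ⟨hxt, hxS⟩
    · rcases hy with hys | ⟨hyt, hyS⟩
      · exact absurd (hxs.trans hys.symm) hxy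
      · have := adj_of_mem_clique h ht hyS (Ne.symm hyt)
        rw [G.adj_replaceVertex_iff_of_ne_right s hyt] at this
        rw [hxs]
        exact this
    · rcases hy with hys | ⟨hyt, hyS⟩
      · have := adj_of_mem_clique h ht hxS (Ne.symm hxt)
        rw [G.adj_replaceVertex_iff_of_ne_right s hxt] at this
        rw [hys]
        exact this.symm
      · have := adj_of_mem_clique h hxS hyS hxy
        rwa [G.adj_replaceVertex_iff_of_ne s hxt hyt] at this
  · rintro ⟨hs, h⟩ x hx y hy hxy
    simp only [mem_coe] at hx hy
    by_cases hxt : x = t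
    · have hyt : y ≠ t := fun e => hxy (by rw [hxt, e])
      rw [hxt, G.adj_replaceVertex_iff_of_ne_right s hyt]
      have hy' : y ∈ insert s (S.erase t) := by simp [Finset.mem_erase, hyt, hy]
      exact adj_of_mem_clique h (by simp) (by simpa using hy') (fun e => hs (e ▸ hy))
    · by_cases hyt : y = t
      · rw [hyt, adj_comm, G.adj_replaceVertex_iff_of_ne_right s hxt]
        have hx' : x ∈ insert s (S.erase t) := by simp [Finset.mem_erase, hxt, hx]
        exact adj_of_mem_clique h (by simp) (by simpa using hx') (fun e => hs (e ▸ hx))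
      · rw [G.adj_replaceVertex_iff_of_ne s hxt hyt]
        have hx' : x ∈ insert s (S.erase t) := by simp [Finset.mem_erase, hxt, hx]
        have hy' : y ∈ insert s (S.erase t) := by simp [Finset.mem_erase, hyt, hy]
        exact adj_of_mem_clique h (by simpa using hx') (by simpa using hy') hxy

lemma W_replaceVertex (w : ℕ → ℕ) (G : SimpleGraph V) {s t : V} (hst : s ≠ t) :
    W w (G.replaceVertex s t) + WP w G (fun S => t ∈ S) =
      W w G + WP w G (fun S => s ∈ S ∧ t ∉ S) := by
  classical
  rw [W_split w (G.replaceVertex s t) (fun S => t ∉ S), W_split w G (fun S => t ∉ S)]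
  have e1 : WP w (G.replaceVertex s t) (fun S => t ∉ S) = WP w G (fun S => t ∉ S) := by
    unfold WP
    apply Finset.sum_congr _ (fun _ _ => rfl)
    ext S
    simp only [Finset.mem_filter, mem_cfin]
    constructor
    · rintro ⟨h1, h2⟩; exact ⟨(isClique_replaceVertex_of_not_mem h2).1 h1, h2⟩
    · rintro ⟨h1, h2⟩; exact ⟨(isClique_replaceVertex_of_not_mem h2).2 h1, h2⟩
  have e2 : WP w (G.replaceVertex s t) (fun S => ¬ t ∉ S) =
      WP w G (fun S => s ∈ S ∧ t ∉ S) := by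
    unfold WP
    refine Finset.sum_nbij' (fun S => insert s (S.erase t)) (fun S => insert t (S.erase s))
      ?_ ?_ ?_ ?_ ?_
    · intro S hS
      simp only [Finset.mem_filter, mem_cfin, not_not] at hS ⊢
      obtain ⟨h1, h2⟩ := hS
      obtain ⟨hs, hc⟩ := (isClique_replaceVertex_of_mem hst h2).1 h1
      exact ⟨hc, by simp, by simp [Finset.mem_erase, Ne.symm hst]⟩
    · intro S hS
      simp only [Finset.mem_filter, mem_cfin, not_not] at hS ⊢
      obtain ⟨h1, hs, ht⟩ := hS
      have htm : t ∈ insert t (S.erase s) := by simp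
      refine ⟨?_, htm⟩
      rw [isClique_replaceVertex_of_mem hst htm]
      refine ⟨by simp [Finset.mem_erase, hst], ?_⟩
      rw [Finset.erase_insert (by simp [Finset.mem_erase, ht]), Finset.insert_erase hs]
      exact h1
    · intro S hS
      simp only [Finset.mem_filter, mem_cfin, not_not] at hS
      obtain ⟨h1, h2⟩ := hS
      obtain ⟨hs, _⟩ := (isClique_replaceVertex_of_mem hst h2).1 h1
      show insert t ((insert s (S.erase t)).erase s) = S
      rw [Finset.erase_insert (by simp [Finset.mem_erase, hs]), Finset.insert_erase h2]
    · intro S hS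
      simp only [Finset.mem_filter, mem_cfin, not_not] at hS
      obtain ⟨h1, hs, ht⟩ := hS
      show insert s ((insert t (S.erase s)).erase t) = S
      rw [Finset.erase_insert (by simp [Finset.mem_erase, ht]), Finset.insert_erase hs]
    · intro S hS
      simp only [Finset.mem_filter, mem_cfin, not_not] at hS
      obtain ⟨h1, h2⟩ := hS
      obtain ⟨hs, _⟩ := (isClique_replaceVertex_of_mem hst h2).1 h1
      show w S.card = w (insert s (S.erase t)).card
      congr 1
      rw [Finset.card_insert_of_notMem (by simp [Finset.mem_erase, hs]),
        Finset.card_erase_of_mem h2]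
      have : S.card ≠ 0 := fun e => by simp [Finset.card_eq_zero.1 e] at h2
      omega
  have e3 : WP w G (fun S => ¬ t ∉ S) = WP w G (fun S => t ∈ S) := by
    unfold WP
    apply Finset.sum_congr _ (fun _ _ => rfl)
    ext S
    simp [Finset.mem_filter]
  rw [e1, e2, e3]
  omega

lemma WP_congr (w : ℕ → ℕ) {G H : SimpleGraph V} {P Q : Finset V → Prop}
    (h : ∀ S : Finset V, (S ∈ cfin G ∧ P S) ↔ (S ∈ cfin H ∧ Q S)) :
    WP w G P = WP w H Q := by
  unfold WP
  apply Finset.sum_congr _ (fun _ _ => rfl)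
  ext S
  simp only [Finset.mem_filter]
  exact h S

lemma WP_split (w : ℕ → ℕ) (G : SimpleGraph V) (P Q : Finset V → Prop) :
    WP w G P = WP w G (fun S => P S ∧ Q S) + WP w G (fun S => P S ∧ ¬ Q S) := by
  classical
  unfold WP
  rw [← Finset.sum_filter_add_sum_filter_not (@Finset.filter _ P (Classical.decPred _) (cfin G)) Q]
  congr 1 <;>
  · apply Finset.sum_congr _ (fun _ _ => rfl)
    ext S
    simp only [Finset.mem_filter]
    tauto

lemma WP_zero (w : ℕ → ℕ) {G : SimpleGraph V} {P : Finset V → Prop}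
    (h : ∀ S : Finset V, S ∈ cfin G → P S → False) : WP w G P = 0 := by
  unfold WP
  apply Finset.sum_eq_zero
  intro S hS
  exact absurd hS (by simp only [Finset.mem_filter]; rintro ⟨h1, h2⟩; exact h S h1 h2)

lemma le_WP (w : ℕ → ℕ) {G : SimpleGraph V} {P : Finset V → Prop} {S₀ : Finset V}
    (h1 : S₀ ∈ cfin G) (h2 : P S₀) : w S₀.card ≤ WP w G P := by
  classical
  unfold WP
  refine Finset.single_le_sum (f := fun (S : Finset V) => w S.card) (fun _ _ => Nat.zero_le _) ?_
  simp only [Finset.mem_filter]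
  exact ⟨h1, h2⟩

section Max

variable (w : ℕ → ℕ) (p : ℕ) {G : SimpleGraph V}

/-- `G` is a `W w`-maximal `p`-cliquefree graph. -/
def IsWMax (w : ℕ → ℕ) (p : ℕ) (G : SimpleGraph V) : Prop :=
  G.CliqueFree p ∧ ∀ H : SimpleGraph V, H.CliqueFree p → W w H ≤ W w G

variable {w p}

lemma IsWMax.pair_clique (hG : IsWMax w p G) {s t : V} (ha : G.Adj s t) :
    ({s, t} : Finset V) ∈ cfin G ∧ ({s, t} : Finset V).card = 2 := by
  constructor
  · rw [mem_cfin]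
    intro x hx y hy hxy
    simp only [coe_insert, Set.mem_insert_iff, Set.mem_singleton_iff, coe_singleton] at hx hy
    rcases hx with rfl | rfl <;> rcases hy with rfl | rfl <;>
      first | exact absurd rfl hxy | exact ha | exact ha.symm
  · rw [Finset.card_insert_of_notMem (by simp [ha.ne]), Finset.card_singleton]

lemma IsWMax.WP_mem_eq_avoid (hG : IsWMax w p G) {s t : V} (hst : s ≠ t) (hna : ¬ G.Adj s t) :
    WP w G (fun S => s ∈ S) = WP w G (fun S => s ∈ S ∧ t ∉ S) := by
  apply WP_congr
  intro S
  simp only [and_congr_right_iff]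
  intro hS
  constructor
  · intro hs
    refine ⟨hs, fun ht => hna (adj_of_mem_clique (mem_cfin.1 hS) hs ht hst)⟩
  · exact fun h => h.1

lemma IsWMax.WP_mem_le (hG : IsWMax w p G) {s t : V} (hst : s ≠ t) (hna : ¬ G.Adj s t) :
    WP w G (fun S => s ∈ S) ≤ WP w G (fun S => t ∈ S) := by
  have h1 := W_replaceVertex w G hst
  rw [← hG.WP_mem_eq_avoid hst hna] at h1
  have h2 := hG.2 _ (hG.1.replaceVertex s t)
  omega

lemma IsWMax.WP_mem_eq (hG : IsWMax w p G) {s t : V} (hst : s ≠ t) (hna : ¬ G.Adj s t) :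
    WP w G (fun S => s ∈ S) = WP w G (fun S => t ∈ S) :=
  le_antisymm (hG.WP_mem_le hst hna) (hG.WP_mem_le hst.symm (fun h => hna h.symm))

lemma IsWMax.not_adj_trans (hG : IsWMax w p G) (hw2 : 0 < w 2) {s t u : V}
    (hts : ¬ G.Adj t s) (hsu : ¬ G.Adj s u) : ¬ G.Adj t u := by
  intro htu
  have hst : s ≠ t := by rintro rfl; exact hsu htu
  have hsu' : s ≠ u := by rintro rfl; exact hts htu
  have htu' : t ≠ u := htu.ne
  have hst' : ¬ G.Adj s t := fun h => hts h.symm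
  set H1 := G.replaceVertex s t with hH1
  have i1 : W w H1 + WP w G (fun S => t ∈ S) = W w G + WP w G (fun S => s ∈ S) := by
    have h := W_replaceVertex w G hst
    rw [← hG.WP_mem_eq_avoid hst hst'] at h
    exact h
  have i2 : W w (H1.replaceVertex s u) + WP w H1 (fun S => u ∈ S) =
      W w H1 + WP w H1 (fun S => s ∈ S ∧ u ∉ S) := W_replaceVertex w H1 hsu'
  -- claim 1 : WP w H1 (u ∈ ·) = WP w G (fun S => u ∈ S ∧ t ∉ S)
  have c1 : WP w H1 (fun S => u ∈ S) = WP w G (fun S => u ∈ S ∧ t ∉ S) := by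
    rw [WP_split w H1 (fun S => u ∈ S) (fun S => t ∈ S)]
    have z : WP w H1 (fun S => u ∈ S ∧ t ∈ S) = 0 := by
      apply WP_zero
      intro S hS ⟨hu, ht⟩
      rw [mem_cfin, isClique_replaceVertex_of_mem hst ht] at hS
      obtain ⟨hs, hc⟩ := hS
      refine hsu (adj_of_mem_clique hc (by simp) ?_ hsu')
      simp [Finset.mem_insert, Finset.mem_erase, htu'.symm, hu]
    rw [z, zero_add]
    apply WP_congr
    intro S
    constructor
    · rintro ⟨hS, hu, ht⟩
      rw [mem_cfin, isClique_replaceVertex_of_not_mem ht] at hS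
      exact ⟨mem_cfin.2 hS, hu, ht⟩
    · rintro ⟨hS, hu, ht⟩
      rw [mem_cfin] at hS
      exact ⟨mem_cfin.2 ((isClique_replaceVertex_of_not_mem ht).2 hS), hu, ht⟩
  -- claim 2 : WP w H1 (fun S => s ∈ S ∧ u ∉ S) = WP w G (s ∈ ·)
  have c2 : WP w H1 (fun S => s ∈ S ∧ u ∉ S) = WP w G (fun S => s ∈ S) := by
    apply WP_congr
    intro S
    constructor
    · rintro ⟨hS, hs, hu⟩
      rw [mem_cfin] at hS
      by_cases ht : t ∈ S
      · exact absurd ((isClique_replaceVertex_of_mem hst ht).1 hS).1 (by simp [hs])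
      · rw [isClique_replaceVertex_of_not_mem ht] at hS
        exact ⟨mem_cfin.2 hS, hs⟩
    · rintro ⟨hS, hs⟩
      rw [mem_cfin] at hS
      have ht : t ∉ S := fun ht => hst' (adj_of_mem_clique hS hs ht hst)
      have hu : u ∉ S := fun hu => hsu (adj_of_mem_clique hS hs hu hsu')
      exact ⟨mem_cfin.2 ((isClique_replaceVertex_of_not_mem ht).2 hS), hs, hu⟩
  have split_u : WP w G (fun S => u ∈ S) =
      WP w G (fun S => u ∈ S ∧ t ∈ S) + WP w G (fun S => u ∈ S ∧ t ∉ S) :=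
    WP_split w G _ _
  have eqt : WP w G (fun S => s ∈ S) = WP w G (fun S => t ∈ S) := hG.WP_mem_eq hst hst'
  have equ : WP w G (fun S => s ∈ S) = WP w G (fun S => u ∈ S) := hG.WP_mem_eq hsu' hsu
  have pos : 0 < WP w G (fun S => u ∈ S ∧ t ∈ S) := by
    obtain ⟨hmem, hcard⟩ := hG.pair_clique (G := G) htu.symm
    calc 0 < w 2 := hw2
    _ = w ({u, t} : Finset V).card := by rw [hcard]
    _ ≤ _ := le_WP w hmem (by simp)
  have hle := hG.2 _ ((hG.1.replaceVertex s t).replaceVertex s u)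
  rw [← hH1] at hle
  omega

theorem IsWMax.equivalence_not_adj (hG : IsWMax w p G) (hw2 : 0 < w 2) :
    Equivalence (¬G.Adj · ·) where
  refl := by simp
  symm := by simp [adj_comm]
  trans := fun h1 h2 => hG.not_adj_trans hw2 h1 h2

/-- The non-adjacency setoid of a `W`-maximal graph. -/
def IsWMax.setoid (hG : IsWMax w p G) (hw2 : 0 < w 2) : Setoid V :=
  ⟨_, hG.equivalence_not_adj hw2⟩

/-- The finpartition of a `W`-maximal graph into independent sets. -/
noncomputable def IsWMax.finpartition (hG : IsWMax w p G) (hw2 : 0 < w 2) :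
    Finpartition (Finset.univ : Finset V) :=
  letI : DecidableRel (hG.setoid hw2).r := fun a b => Classical.dec _
  Finpartition.ofSetoid (hG.setoid hw2)

lemma IsWMax.not_adj_iff_part_eq (hG : IsWMax w p G) (hw2 : 0 < w 2) {s t : V} :
    ¬G.Adj s t ↔ (hG.finpartition hw2).part s = (hG.finpartition hw2).part t := by
  letI : DecidableRel (hG.setoid hw2).r := fun a b => Classical.dec _
  change (hG.setoid hw2).r s t ↔ _
  rw [← Finpartition.mem_part_ofSetoid_iff_rel]
  set fp := hG.finpartition hw2
  change t ∈ fp.part s ↔ fp.part s = fp.part t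
  rw [fp.mem_part_iff_part_eq_part (mem_univ t) (mem_univ s), eq_comm]

lemma IsWMax.adj_iff_part_ne (hG : IsWMax w p G) (hw2 : 0 < w 2) {s t : V} :
    G.Adj s t ↔ (hG.finpartition hw2).part s ≠ (hG.finpartition hw2).part t := by
  rw [← not_iff_not, not_not, hG.not_adj_iff_part_eq hw2]

theorem IsWMax.isEquipartition (hG : IsWMax w p G) (hw2 : 0 < w 2) :
    (hG.finpartition hw2).IsEquipartition := by
  classical
  set fp := hG.finpartition hw2 with hfp
  by_contra hn
  rw [Finpartition.not_isEquipartition] at hn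
  obtain ⟨large, hl, small, hs, ineq⟩ := hn
  obtain ⟨v, hv⟩ := fp.nonempty_of_mem_parts hs
  obtain ⟨wv, hwv⟩ := fp.nonempty_of_mem_parts hl
  have small_eq : fp.part v = small := fp.part_eq_of_mem hs hv
  have large_eq : fp.part wv = large := fp.part_eq_of_mem hl hwv
  have hparts_ne : small ≠ large := by rintro rfl; omega
  have mem_small : ∀ x : V, x ∈ small ↔ fp.part x = small := fun x =>
    ⟨fun h => fp.part_eq_of_mem hs h, fun h => h ▸ fp.mem_part (mem_univ x)⟩
  have mem_large : ∀ x : V, x ∈ large ↔ fp.part x = large := fun x =>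
    ⟨fun h => fp.part_eq_of_mem hl h, fun h => h ▸ fp.mem_part (mem_univ x)⟩
  have hvw : v ≠ wv := by
    rintro rfl
    exact hparts_ne (small_eq.symm.trans large_eq)
  have partInj : ∀ {S : Finset V}, S ∈ cfin G → ∀ x ∈ S, ∀ y ∈ S, x ≠ y →
      fp.part x ≠ fp.part y := by
    intro S hS x hx y hy hxy
    have h := adj_of_mem_clique (mem_cfin.1 hS) hx hy hxy
    rw [hG.adj_iff_part_ne hw2] at h
    exact h
  set A := small.erase v with hA
  set B := large.erase wv with hB
  have hAc : #A = #small - 1 := card_erase_of_mem hv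
  have hBc : #B = #large - 1 := card_erase_of_mem hwv
  have hsmallpos : 0 < #small := card_pos.2 ⟨v, hv⟩
  obtain ⟨D, hD, hDcard⟩ := Finset.exists_subset_card_eq (s := B) (n := #A) (by omega)
  have e : {x // x ∈ A} ≃ {x // x ∈ D} := by
    apply Fintype.equivOfCardEq
    simp [Fintype.card_coe, hDcard]
  obtain ⟨b₀, hb₀, b₁, hb₁, hbne⟩ := Finset.one_lt_card.1
    (by rw [card_sdiff_of_subset hD]; omega : 1 < #(B \ D))
  have hb₀B : b₀ ∈ B := (mem_sdiff.1 hb₀).1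
  have hb₀D : b₀ ∉ D := (mem_sdiff.1 hb₀).2
  have hb₁B : b₁ ∈ B := (mem_sdiff.1 hb₁).1
  have hb₁D : b₁ ∉ D := (mem_sdiff.1 hb₁).2
  have hb₀l : b₀ ∈ large := mem_of_mem_erase hb₀B
  have hb₁l : b₁ ∈ large := mem_of_mem_erase hb₁B
  have hDl : ∀ x ∈ D, x ∈ large := fun x hx => mem_of_mem_erase (hD hx)
  have hvnl : v ∉ large := fun h =>
    hparts_ne (((mem_small v).1 hv).symm.trans ((mem_large v).1 h))
  have hvb₁ : v ≠ b₁ := fun h => hvnl (h ▸ hb₁l)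
  set ψ : V → V := fun x => if x = v then b₀ else if h : x ∈ A then (e ⟨x, h⟩ : V) else x with hψ
  set ρ : V → V := fun y => if y = b₀ then v else if h : y ∈ D then (e.symm ⟨y, h⟩ : V) else y
    with hρ
  have ψA : ∀ x (hxv : x ≠ v) (h : x ∈ A), ψ x ∈ D := by
    intro x hxv h
    simp only [hψ, if_neg hxv, dif_pos h]
    exact (e ⟨x, h⟩).2
  have ψB : ∀ x, (x = v ∨ x ∈ A) → ψ x ∈ B := by
    intro x hx
    rcases eq_or_ne x v with rfl | hxv
    · simpa [hψ] using hb₀B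
    · rcases hx with rfl | hxA
      · exact absurd rfl hxv
      · exact hD (ψA x hxv hxA)
  have ψlarge : ∀ x, (x = v ∨ x ∈ A) → ψ x ∈ large := fun x hx =>
    mem_of_mem_erase (ψB x hx)
  have ψid : ∀ x, ¬(x = v ∨ x ∈ A) → ψ x = x := by
    intro x hx
    push_neg at hx
    simp only [hψ, if_neg hx.1, dif_neg hx.2]
  have ρψ : ∀ x, x ∉ large → ρ (ψ x) = x := by
    intro x hxl
    by_cases hxv : x = v
    · subst hxv
      simp [hψ, hρ]
    · by_cases hxA : x ∈ A
      · have h1 : ψ x ∈ D := ψA x hxv hxA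
        have h2 : ψ x ≠ b₀ := fun h => hb₀D (h ▸ h1)
        simp only [hρ, if_neg h2, dif_pos h1]
        have h3 : (⟨ψ x, h1⟩ : {x // x ∈ D}) = e ⟨x, hxA⟩ := by
          apply Subtype.ext
          simp only [hψ, if_neg hxv, dif_pos hxA]
        rw [h3, Equiv.symm_apply_apply]
      · rw [ψid x (by tauto)]
        have h2 : x ≠ b₀ := fun h => hxl (h ▸ hb₀l)
        have h3 : x ∉ D := fun h => hxl (hDl _ h)
        simp only [hρ, if_neg h2, dif_neg h3]
  have notlarge : ∀ {S : Finset V}, S ∈ cfin G → wv ∈ S → ∀ x ∈ S.erase wv, x ∉ large := by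
    intro S hS hwvS x hx hxl
    exact partInj hS x (mem_of_mem_erase hx) wv hwvS (ne_of_mem_erase hx)
      (((mem_large x).1 hxl).trans large_eq.symm)
  have smallcase : ∀ x, (x = v ∨ x ∈ A) → x ∈ small := by
    rintro x (rfl | hxA)
    · exact hv
    · exact mem_of_mem_erase hxA
  set φ : Finset V → Finset V := fun S => insert v ((S.erase wv).image ψ) with hφ
  have key : ∀ S ∈ cfin G, wv ∈ S →
      φ S ∈ cfin G ∧ v ∈ φ S ∧ wv ∉ φ S ∧ (φ S).card = S.card ∧
        (φ S).erase v = (S.erase wv).image ψ := by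
    intro S hS hwvS
    have hninj : Set.InjOn ψ (S.erase wv : Set V) := by
      intro x hx y hy hxy
      rw [← ρψ x (notlarge hS hwvS x (Finset.mem_coe.1 hx)),
        ← ρψ y (notlarge hS hwvS y (Finset.mem_coe.1 hy)), hxy]
    have hvim : v ∉ (S.erase wv).image ψ := by
      simp only [Finset.mem_image, not_exists]
      intro x
      rintro ⟨hx, hxv⟩
      by_cases hc : x = v ∨ x ∈ A
      · exact hvnl (hxv ▸ ψlarge x hc)
      · rw [ψid x hc] at hxv
        exact hc (Or.inl hxv)
    have hwvim : wv ∉ φ S := by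
      simp only [hφ, Finset.mem_insert, Finset.mem_image, not_or, not_exists]
      refine ⟨hvw.symm, ?_⟩
      intro x
      rintro ⟨hx, hxwv⟩
      by_cases hc : x = v ∨ x ∈ A
      · exact ne_of_mem_erase (hxwv ▸ ψB x hc) rfl
      · rw [ψid x hc] at hxwv
        exact ne_of_mem_erase (hxwv ▸ hx) rfl
    have partclass : ∀ a ∈ φ S, a = v ∨
        (a ∈ large ∧ ∃ x, x ∈ S.erase wv ∧ ψ x = a ∧ (x = v ∨ x ∈ A)) ∨
        (a ∈ S.erase wv ∧ a ∉ small ∧ a ∉ large) := by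
      intro a ha
      simp only [hφ, Finset.mem_insert, Finset.mem_image] at ha
      rcases ha with rfl | ⟨x, hx, rfl⟩
      · exact Or.inl rfl
      · by_cases hc : x = v ∨ x ∈ A
        · exact Or.inr (Or.inl ⟨ψlarge x hc, x, hx, rfl, hc⟩)
        · push_neg at hc
          rw [ψid x (by tauto)]
          refine Or.inr (Or.inr ⟨hx, ?_, notlarge hS hwvS x hx⟩)
          intro hxs
          rcases Finset.mem_erase.2 ⟨hc.1, hxs⟩ with h'
          exact hc.2 h'
    have hclique : φ S ∈ cfin G := by
      rw [mem_cfin]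
      intro a ha b hb hab
      simp only [mem_coe] at ha hb
      rw [hG.adj_iff_part_ne hw2, ← hfp]
      rcases partclass a ha with rfl | hcasea | hcasea
      · rcases partclass b hb with rfl | hcaseb | hcaseb
        · exact absurd rfl hab
        · rw [small_eq, (mem_large b).1 hcaseb.1]
          exact hparts_ne
        · rw [small_eq]
          exact fun h => hcaseb.2.1 ((mem_small b).2 h.symm)
      · rcases partclass b hb with rfl | hcaseb | hcaseb
        · rw [(mem_large a).1 hcasea.1, small_eq]
          exact fun h => hparts_ne h.symm
        · -- both images of small-side elements: impossible
          obtain ⟨_, x, hx, hxa, hcx⟩ := hcasea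
          obtain ⟨_, y, hy, hyb, hcy⟩ := hcaseb
          have hxy : x ≠ y := by
            rintro rfl
            exact hab (hxa ▸ hyb ▸ rfl)
          exact absurd (((mem_small x).1 (smallcase x hcx)).trans
            ((mem_small y).1 (smallcase y hcy)).symm)
            (partInj hS x (mem_of_mem_erase hx) y (mem_of_mem_erase hy) hxy)
        · rw [(mem_large a).1 hcasea.1]
          exact fun h => hcaseb.2.2 ((mem_large b).2 h.symm)
      · rcases partclass b hb with rfl | hcaseb | hcaseb
        · rw [small_eq]
          exact fun h => hcasea.2.1 ((mem_small a).2 h)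
        · rw [(mem_large b).1 hcaseb.1]
          exact fun h => hcasea.2.2 ((mem_large a).2 h)
        · exact partInj hS a (mem_of_mem_erase hcasea.1) b (mem_of_mem_erase hcaseb.1) hab
    have hcard : (φ S).card = S.card := by
      rw [hφ]
      simp only
      rw [Finset.card_insert_of_notMem hvim, Finset.card_image_of_injOn hninj,
        Finset.card_erase_of_mem hwvS]
      have : 0 < S.card := card_pos.2 ⟨wv, hwvS⟩
      omega
    exact ⟨hclique, by simp [hφ], hwvim, hcard, by rw [hφ]; exact Finset.erase_insert hvim⟩
  have hrec : ∀ S ∈ cfin G, wv ∈ S → ((φ S).erase v).image ρ = S.erase wv := by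
    intro S hS hwvS
    rw [(key S hS hwvS).2.2.2.2, Finset.image_image]
    have heq : (S.erase wv).image (ρ ∘ ψ) = (S.erase wv).image id :=
      Finset.image_congr (fun x hx => ρψ x (notlarge hS hwvS x (Finset.mem_coe.1 hx)))
    rw [heq, Finset.image_id]
  have injφ : ∀ S₁ ∈ cfin G, wv ∈ S₁ → ∀ S₂ ∈ cfin G, wv ∈ S₂ → φ S₁ = φ S₂ → S₁ = S₂ := by
    intro S₁ h₁ hw₁ S₂ h₂ hw₂ heq
    rw [← Finset.insert_erase hw₁, ← Finset.insert_erase hw₂,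
      ← hrec S₁ h₁ hw₁, ← hrec S₂ h₂ hw₂, heq]
  have hT₁ : ({v, b₁} : Finset V) ∈ cfin G ∧ v ∈ ({v, b₁} : Finset V) ∧
      wv ∉ ({v, b₁} : Finset V) ∧ ({v, b₁} : Finset V).card = 2 := by
    have hadj₁ : G.Adj v b₁ := by
      rw [hG.adj_iff_part_ne hw2, ← hfp, small_eq, (mem_large b₁).1 hb₁l]
      exact hparts_ne
    refine ⟨?_, by simp, ?_, ?_⟩
    · rw [mem_cfin]
      intro x hx y hy hxy
      simp only [coe_insert, Set.mem_insert_iff, Set.mem_singleton_iff, coe_singleton] at hx hy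
      rcases hx with rfl | rfl <;> rcases hy with rfl | rfl <;>
        first | exact absurd rfl hxy | exact hadj₁ | exact hadj₁.symm
    · simp only [Finset.mem_insert, Finset.mem_singleton, not_or]
      exact ⟨hvw.symm, fun h => ne_of_mem_erase hb₁B h.symm⟩
    · rw [Finset.card_insert_of_notMem (by simp [hvb₁]), Finset.card_singleton]
  have missed : ∀ S ∈ cfin G, wv ∈ S → φ S ≠ ({v, b₁} : Finset V) := by
    intro S hS hwvS heq
    have h1 : S.erase wv = ({b₁} : Finset V) := by
      rw [← hrec S hS hwvS, heq]
      have hvb : v ∉ ({b₁} : Finset V) := by simp [hvb₁]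
      have : ({v, b₁} : Finset V).erase v = {b₁} := Finset.erase_insert hvb
      rw [this, Finset.image_singleton]
      congr 1
      have hb₁b₀ : b₁ ≠ b₀ := fun h => hbne h.symm
      simp only [hρ, if_neg hb₁b₀, dif_neg hb₁D]
    have hb₁S : b₁ ∈ S := mem_of_mem_erase (h1 ▸ Finset.mem_singleton_self b₁)
    have hb₁wv : b₁ ≠ wv := fun h => ne_of_mem_erase hb₁B h
    exact partInj hS b₁ hb₁S wv hwvS hb₁wv
      (((mem_large b₁).1 hb₁l).trans large_eq.symm) 
  -- the strict counting inequality
  have hlt : WP w G (fun S => wv ∈ S) < WP w G (fun S => v ∈ S ∧ wv ∉ S) := by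
    rw [← sum_filter_eq_WP w G (fun S => wv ∈ S),
      ← sum_filter_eq_WP w G (fun S => v ∈ S ∧ wv ∉ S)]
    set src := (cfin G).filter (fun S => wv ∈ S) with hsrc
    set tgt := (cfin G).filter (fun S => v ∈ S ∧ wv ∉ S) with htgt
    have memsrc : ∀ S ∈ src, S ∈ cfin G ∧ wv ∈ S := by
      intro S hS; simpa [hsrc, Finset.mem_filter] using hS
    have step1 : ∑ S ∈ src, w S.card = ∑ T ∈ src.image φ, w T.card := by
      rw [Finset.sum_image ?_]
      · apply Finset.sum_congr rfl
        intro S hS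
        obtain ⟨h1, h2⟩ := memsrc S hS
        rw [(key S h1 h2).2.2.2.1]
      · intro S₁ h₁ S₂ h₂ heq
        obtain ⟨c₁, d₁⟩ := memsrc S₁ h₁
        obtain ⟨c₂, d₂⟩ := memsrc S₂ h₂
        exact injφ S₁ c₁ d₁ S₂ c₂ d₂ heq
    have step2 : src.image φ ⊆ tgt.erase ({v, b₁} : Finset V) := by
      intro T hT
      obtain ⟨S, hS, rfl⟩ := Finset.mem_image.1 hT
      obtain ⟨h1, h2⟩ := memsrc S hS
      obtain ⟨k1, k2, k3, _, _⟩ := key S h1 h2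
      rw [Finset.mem_erase, htgt, Finset.mem_filter]
      exact ⟨missed S h1 h2, k1, k2, k3⟩
    have step3 : ∑ T ∈ src.image φ, w T.card ≤ ∑ T ∈ tgt.erase ({v, b₁} : Finset V), w T.card :=
      Finset.sum_le_sum_of_subset step2
    have step4 : w ({v, b₁} : Finset V).card + ∑ T ∈ tgt.erase ({v, b₁} : Finset V), w T.card =
        ∑ T ∈ tgt, w T.card := by
      exact Finset.add_sum_erase tgt (fun T => w T.card)
        (by rw [htgt, Finset.mem_filter]; exact ⟨hT₁.1, hT₁.2.1, hT₁.2.2.1⟩)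
    have hpos : 0 < w ({v, b₁} : Finset V).card := by rw [hT₁.2.2.2]; exact hw2
    omega
  have h1 := W_replaceVertex w G hvw
  have h2 := hG.2 _ (hG.1.replaceVertex v wv)
  omega

lemma IsWMax.card_parts_le (hG : IsWMax w p G) (hw2 : 0 < w 2) (hp : 1 ≤ p) :
    #(hG.finpartition hw2).parts ≤ p - 1 := by
  classical
  by_contra! l
  obtain ⟨z, -, hz⟩ := (hG.finpartition hw2).exists_subset_part_bijOn
  have ncf : ¬G.CliqueFree #z := by
    refine IsNClique.not_cliqueFree ⟨fun a ha b hb hn => ?_, rfl⟩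
    contrapose! hn
    exact hz.injOn ha hb (by rwa [← hG.not_adj_iff_part_eq hw2])
  rw [Finset.card_eq_of_equiv hz.equiv] at ncf
  exact absurd (hG.1.mono (by omega)) ncf

lemma IsWMax.card_parts (hG : IsWMax w p G) (hw2 : 0 < w 2) (hp : 1 ≤ p) :
    #(hG.finpartition hw2).parts = min (Fintype.card V) (p - 1) := by
  classical
  set fp := hG.finpartition hw2 with hfp
  apply le_antisymm (le_min fp.card_parts_le_card (hG.card_parts_le hw2 hp))
  by_contra! l
  rw [lt_min_iff] at l
  obtain ⟨x, -, y, -, hn, he⟩ :=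
    exists_ne_map_eq_of_card_lt_of_maps_to l.1 fun a _ => fp.part_mem.2 (mem_univ a)
  have cf : G.CliqueFree (p - 1) := by
    simp_rw [← cliqueFinset_eq_empty_iff, cliqueFinset, filter_eq_empty_iff, mem_univ,
      forall_true_left, isNClique_iff, and_comm, not_and, isClique_iff, Set.Pairwise]
    intro z zc
    push_neg
    simp_rw [hG.not_adj_iff_part_eq hw2]
    exact exists_ne_map_eq_of_card_lt_of_maps_to (zc.symm ▸ l.2) fun a _ => fp.part_mem.2 (mem_univ a)
  have hna : ¬G.Adj x y := by
    rw [hG.not_adj_iff_part_eq hw2]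
    exact he
  -- G ⊔ edge x y is p-cliquefree and has strictly larger W
  have hcf : (G ⊔ edge x y).CliqueFree p := by
    have := cf.sup_edge x y
    rwa [Nat.sub_add_cancel hp] at this
  have hsub : cfin G ⊆ cfin (G ⊔ edge x y) := by
    intro S hS
    rw [mem_cfin] at hS ⊢
    exact hS.mono le_sup_left
  have hmemxy : ({x, y} : Finset V) ∈ cfin (G ⊔ edge x y) := by
    rw [mem_cfin]
    have hadj : (G ⊔ edge x y).Adj x y := by
      refine Or.inr ?_
      rw [edge_adj]
      exact ⟨Or.inl ⟨rfl, rfl⟩, hn⟩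
    intro a ha b hb hab
    simp only [coe_insert, Set.mem_insert_iff, Set.mem_singleton_iff, coe_singleton] at ha hb
    rcases ha with rfl | rfl <;> rcases hb with rfl | rfl <;>
      first | exact absurd rfl hab | exact hadj | exact hadj.symm
  have hnmemxy : ({x, y} : Finset V) ∉ cfin G := by
    rw [mem_cfin]
    intro h
    exact hna (adj_of_mem_clique h (by simp) (by simp) hn)
  have hlt : W w G < W w (G ⊔ edge x y) := by
    unfold W
    apply Finset.sum_lt_sum_of_subset hsub hmemxy hnmemxy
    · rw [Finset.card_insert_of_notMem (by simp [hn]), Finset.card_singleton]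
      exact hw2
    · exact fun _ _ _ => Nat.zero_le _
  exact absurd (hG.2 _ hcf) (by omega)

theorem IsWMax.nonempty_iso (hG : IsWMax w p G) (hw2 : 0 < w 2) (hp : 1 ≤ p) :
    Nonempty (G ≃g turanGraph (Fintype.card V) (p - 1)) := by
  classical
  obtain ⟨zm, zp⟩ := (hG.isEquipartition hw2).exists_partPreservingEquiv
  use (Equiv.subtypeUnivEquiv mem_univ).symm.trans zm
  intro a b
  simp only [turanGraph, Equiv.trans_apply, Equiv.subtypeUnivEquiv_symm_apply]
  have := zp ⟨a, mem_univ a⟩ ⟨b, mem_univ b⟩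
  rw [← hG.not_adj_iff_part_eq hw2] at this
  rw [← not_iff_not, not_ne_iff, this, hG.card_parts hw2 hp]
  rcases le_or_gt (p - 1) (Fintype.card V) with c | c
  · rw [min_eq_right c]
    rfl
  · have lc : ∀ x, zm ⟨x, _⟩ < Fintype.card V := fun x => (zm ⟨x, mem_univ x⟩).2
    rw [min_eq_left c.le, Nat.mod_eq_of_lt (lc a), Nat.mod_eq_of_lt (lc b),
      ← Nat.mod_eq_of_lt ((lc a).trans c), ← Nat.mod_eq_of_lt ((lc b).trans c)]
    rfl

lemma exists_isWMax (w : ℕ → ℕ) {p : ℕ} (hp : 2 ≤ p) :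
    ∃ G : SimpleGraph V, IsWMax w p G := by
  classical
  let c := {H : SimpleGraph V | H.CliqueFree p}
  have cn : c.toFinset.Nonempty := ⟨⊥, by
    simp only [Set.toFinset_setOf, mem_filter, mem_univ, true_and, c]
    exact cliqueFree_bot hp⟩
  obtain ⟨S, Sm, Sl⟩ := Finset.exists_max_image c.toFinset (W w) cn
  rw [Set.mem_toFinset] at Sm
  exact ⟨S, Sm, fun H hH => Sl H (by rwa [Set.mem_toFinset])⟩

end Max

open Classical in
lemma W_special (G : SimpleGraph V) (q M : ℕ) :
    W (fun j => (if j = q then M else 0) + 1) G =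
      M * #((cfin G).filter (fun S => S.card = q)) + #(cfin G) := by
  unfold W
  rw [Finset.sum_add_distrib, Finset.sum_const, smul_eq_mul, mul_one]
  congr 1
  rw [← Finset.sum_filter (fun S : Finset V => S.card = q) (fun _ => M),
    Finset.sum_const, smul_eq_mul, mul_comm]

open Classical in
lemma numCliques_eq (G : SimpleGraph V) (q : ℕ) :
    numCliques G q = #((cfin G).filter (fun S => S.card = q)) := by
  unfold numCliques
  rw [Set.ncard_eq_toFinset_card']
  congr 1
  ext S
  simp [Set.mem_toFinset, mem_cfin, isNClique_iff, Finset.mem_filter, and_comm]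

end Zykov

lemma map_iso_eq {A B : Type*} {GA : SimpleGraph A} {GB : SimpleGraph B} (g : GA ≃g GB) :
    GA.map g.toEquiv.toEmbedding = GB := by
  ext x y
  rw [SimpleGraph.map_adj]
  constructor
  · rintro ⟨a, b, hab, rfl, rfl⟩
    exact g.map_rel_iff.2 hab
  · intro h
    exact ⟨g.symm x, g.symm y, g.symm.map_rel_iff.2 h, by simp, by simp⟩

lemma numCliques_iso {A B : Type*} {GA : SimpleGraph A} {GB : SimpleGraph B}
    (f : GA ≃g GB) (q : ℕ) : numCliques GA q = numCliques GB q := by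
  have himg : (fun s : Finset A => s.map f.toEquiv.toEmbedding) '' {s | GA.IsNClique q s} =
      {t | GB.IsNClique q t} := by
    ext t
    simp only [Set.mem_image, Set.mem_setOf_eq]
    constructor
    · rintro ⟨s, hs, rfl⟩
      have h := hs.map (f := f.toEquiv.toEmbedding)
      rwa [map_iso_eq f] at h
    · intro ht
      refine ⟨t.map f.toEquiv.symm.toEmbedding, ?_, ?_⟩
      · have h := ht.map (f := f.toEquiv.symm.toEmbedding)
        rwa [show GB.map f.toEquiv.symm.toEmbedding = GA from map_iso_eq f.symm] at h
      · rw [Finset.map_map]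
        have h : f.toEquiv.symm.toEmbedding.trans f.toEquiv.toEmbedding = Function.Embedding.refl B := by
          ext x; simp; exact f.apply_symm_apply x
        rw [h, Finset.map_refl]
  unfold numCliques
  rw [← himg, Set.ncard_image_of_injective _ (Finset.map_injective f.toEquiv.toEmbedding)]

theorem stmt2 (n q p : ℕ) (h2 : 2 ≤ q) (hqp : q < p) (hpn : p ≤ n)
    {V : Type*} [Fintype V] (G : SimpleGraph V) (hn : Fintype.card V = n)
    (hfree : G.CliqueFree p) :
    numCliques G q ≤ numCliques (turanGraph n (p - 1)) q := by
  classical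
  subst hn
  set M := 2 ^ Fintype.card V + 1 with hM
  set wq : ℕ → ℕ := fun j => (if j = q then M else 0) + 1 with hwq
  have hw2 : 0 < wq 2 := Nat.succ_pos _
  obtain ⟨K, hK⟩ := Zykov.exists_isWMax (V := V) wq (p := p) (by omega)
  have hWle : Zykov.W wq G ≤ Zykov.W wq K := hK.2 G hfree
  have hbG : #(Zykov.cfin G) ≤ 2 ^ Fintype.card V :=
    le_trans (Finset.card_le_univ _) (le_of_eq (by rw [Fintype.card_finset]))
  have hbK : #(Zykov.cfin K) ≤ 2 ^ Fintype.card V :=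
    le_trans (Finset.card_le_univ _) (le_of_eq (by rw [Fintype.card_finset]))
  have hWG := Zykov.W_special G q M
  have hWK := Zykov.W_special K q M
  rw [hwq] at hWle
  have h1 : numCliques G q ≤ numCliques K q := by
    rw [Zykov.numCliques_eq, Zykov.numCliques_eq]
    by_contra hlt
    push_neg at hlt
    have hmul : M * (#((Zykov.cfin K).filter (fun S => S.card = q)) + 1) ≤
        M * #((Zykov.cfin G).filter (fun S => S.card = q)) :=
      Nat.mul_le_mul_left M hlt
    have hexp : M * (#((Zykov.cfin K).filter (fun S => S.card = q)) + 1) =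
        M * #((Zykov.cfin K).filter (fun S => S.card = q)) + M := by ring
    omega
  have h2' : numCliques K q =
      numCliques (SimpleGraph.turanGraph (Fintype.card V) (p - 1)) q := by
    obtain ⟨f⟩ := hK.nonempty_iso hw2 (show 1 ≤ p by omega)
    exact numCliques_iso f q
  omega
end

section
/- If T is a tree of order n with independence number α satisfying 2α = n, then the number of maximum independent sets of T is at most 2^(n−α−1) + 1. -/
open SimpleGraph

universe u

namespace IndepAux

variable {V : Type u}

lemma bddAbove_indep [Fintype V] (G : SimpleGraph V) :
    BddAbove {k | ∃ s : Finset V, G.IsIndepSet' ↑s ∧ s.card = k} := by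
  refine ⟨Fintype.card V, ?_⟩
  rintro k ⟨s, _, rfl⟩
  exact s.card_le_univ

lemma card_le_indepNum [Fintype V] {G : SimpleGraph V} {s : Finset V}
    (h : G.IsIndepSet' ↑s) : s.card ≤ _root_.indepNum G :=
  le_csSup (bddAbove_indep G) ⟨s, h, rfl⟩

lemma exists_max_indep [Fintype V] (G : SimpleGraph V) :
    ∃ s : Finset V, G.IsIndepSet' ↑s ∧ s.card = _root_.indepNum G := by
  have h : _root_.indepNum G ∈ {k | ∃ s : Finset V, G.IsIndepSet' ↑s ∧ s.card = k} :=
    Nat.sSup_mem ⟨0, ∅, by simp [SimpleGraph.IsIndepSet'], by simp⟩ (bddAbove_indep G)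
  obtain ⟨s, hs, hc⟩ := h
  exact ⟨s, hs, hc⟩

lemma indep_insert [DecidableEq V] {G : SimpleGraph V} {S : Finset V} {v : V}
    (h : G.IsIndepSet' ↑S) (hv : ∀ x ∈ S, ¬ G.Adj v x) :
    G.IsIndepSet' ↑(insert v S) := by
  rw [SimpleGraph.IsIndepSet', Finset.coe_insert]
  refine Set.pairwise_insert.2 ⟨h, fun b hb _ => ⟨hv b hb, fun h' => hv b hb h'.symm⟩⟩

lemma one_le_indepNum [Fintype V] [Nonempty V] (G : SimpleGraph V) : 1 ≤ _root_.indepNum G := by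
  classical
  have := card_le_indepNum (G := G) (s := {Classical.arbitrary V}) (by
    simp [SimpleGraph.IsIndepSet'])
  simpa using this


variable {T : SimpleGraph V}



lemma adj_eq_of_nbr {v u x : V} (hv : T.neighborSet v = {u}) (h : T.Adj v x) : x = u := by
  have hx : x ∈ T.neighborSet v := h
  rw [hv] at hx
  exact hx

lemma adj_of_nbr {v u : V} (hv : T.neighborSet v = {u}) : T.Adj v u := by
  have : u ∈ T.neighborSet v := by rw [hv]; rfl
  exact this

lemma reachable_induce_one {v u : V} (hv : T.neighborSet v = {u}) :
    ∀ (n : ℕ) {x y : V} (W : T.Walk x y), W.length ≤ n → ∀ (hx : x ≠ v) (hy : y ≠ v),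
      (T.induce {z | z ≠ v}).Reachable ⟨x, hx⟩ ⟨y, hy⟩ := by
  intro n
  induction n with
  | zero =>
    intro x y W hW hx hy
    cases W with
    | nil => rfl
    | cons h W' => simp [Walk.length_cons] at hW
  | succ n IH =>
    intro x y W hW hx hy
    cases W with
    | nil => rfl
    | @cons _ z _ h W' =>
      rw [Walk.length_cons] at hW
      by_cases hz : z = v
      · subst hz
        have hxu : x = u := adj_eq_of_nbr hv h.symm
        cases W' with
        | nil => exact absurd rfl hy
        | @cons _ z₂ _ h₂ W'' =>
          have hz₂ : z₂ = u := adj_eq_of_nbr hv h₂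
          subst hz₂
          subst hxu
          rw [Walk.length_cons] at hW
          exact IH W'' (by omega) hx hy
      · have step : (T.induce {z | z ≠ v}).Adj ⟨x, hx⟩ ⟨z, hz⟩ := by
          simp only [comap_adj, Function.Embedding.coe_subtype]
          exact h
        exact step.reachable.trans (IH W' (by omega) hz hy)

lemma reachable_induce_two {v u p : V} (hv : T.neighborSet v = {u})
    (hu : T.neighborSet u = {v, p}) (hpv : p ≠ v) (hpu : p ≠ u) :
    ∀ (n : ℕ) {x y : V} (W : T.Walk x y), W.length ≤ n →
      ∀ (hx : x ≠ v ∧ x ≠ u) (hy : y ≠ v ∧ y ≠ u),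
      (T.induce {z | z ≠ v ∧ z ≠ u}).Reachable ⟨x, hx⟩ ⟨y, hy⟩ := by
  intro n
  induction n with
  | zero =>
    intro x y W hW hx hy
    cases W with
    | nil => rfl
    | cons h W' => simp [Walk.length_cons] at hW
  | succ n IH =>
    intro x y W hW hx hy
    cases W with
    | nil => rfl
    | @cons _ z _ h W' =>
      rw [Walk.length_cons] at hW
      by_cases hzv : z = v
      · exact absurd (adj_eq_of_nbr hv (hzv ▸ h).symm) hx.2
      · by_cases hzu : z = u
        · have h1 : T.Adj x u := hzu ▸ h
          obtain ⟨W1, hl1⟩ : ∃ W1 : T.Walk u y, W1.length = W'.length :=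
            ⟨W'.copy hzu rfl, Walk.length_copy _ _ _⟩
          cases W1 with
          | nil => exact absurd rfl hy.2
          | @cons _ z2 _ h2 W2a =>
            rw [Walk.length_cons] at hl1
            have hz2 : z2 = v ∨ z2 = p := by
              have hm : z2 ∈ T.neighborSet u := h2
              rw [hu] at hm
              exact hm
            rcases hz2 with hz2 | hz2
            · obtain ⟨W2, hl2⟩ : ∃ W2 : T.Walk v y, W2.length = W2a.length :=
                ⟨W2a.copy hz2 rfl, Walk.length_copy _ _ _⟩
              cases W2 with
              | nil => exact absurd rfl hy.1
              | @cons _ z3 _ h3 W3a =>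
                rw [Walk.length_cons] at hl2
                have hz3 : z3 = u := adj_eq_of_nbr hv h3
                obtain ⟨W3, hl3⟩ : ∃ W3 : T.Walk u y, W3.length = W3a.length :=
                  ⟨W3a.copy hz3 rfl, Walk.length_copy _ _ _⟩
                refine IH (Walk.cons h1 W3) ?_ hx hy
                rw [Walk.length_cons]
                omega
            · have hxp : x = p := by
                have hm : x ∈ T.neighborSet u := h1.symm
                rw [hu] at hm
                rcases hm with hm | hm
                · exact absurd hm hx.1
                · exact hm
              obtain ⟨W4, hl4⟩ : ∃ W4 : T.Walk x y, W4.length = W2a.length :=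
                ⟨W2a.copy (hz2.trans hxp.symm) rfl, Walk.length_copy _ _ _⟩
              exact IH W4 (by omega) hx hy
        · have step : (T.induce {z | z ≠ v ∧ z ≠ u}).Adj ⟨x, hx⟩ ⟨z, ⟨hzv, hzu⟩⟩ := by
            simp only [comap_adj, Function.Embedding.coe_subtype]
            exact h
          exact step.reachable.trans (IH W' (by omega) ⟨hzv, hzu⟩ hy)

lemma isAcyclic_induce (h : T.IsAcyclic) (s : Set V) : (T.induce s).IsAcyclic := by
  intro a c hc
  exact h _ ((Walk.map_isCycle_iff_of_injective
    (f := (SimpleGraph.Embedding.induce (G := T) s).toHom) Subtype.val_injective).2 hc)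

lemma ne_of_nbr {v u : V} (hv : T.neighborSet v = {u}) : v ≠ u :=
  (adj_of_nbr hv).ne

lemma isTree_induce_one (hT : T.IsTree) {v u : V} (hv : T.neighborSet v = {u}) :
    (T.induce {z | z ≠ v}).IsTree := by
  constructor
  · have hne : Nonempty {z : V // z ∈ ({z | z ≠ v} : Set V)} :=
      ⟨⟨u, Ne.symm (ne_of_nbr hv)⟩⟩
    refine Connected.mk ?_
    rintro ⟨x, hx⟩ ⟨y, hy⟩
    exact (hT.isConnected x y).elim fun W =>
      reachable_induce_one hv W.length W le_rfl hx hy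
  · exact isAcyclic_induce hT.2 _

lemma isTree_induce_two (hT : T.IsTree) {v u p : V} (hv : T.neighborSet v = {u})
    (hu : T.neighborSet u = {v, p}) (hpv : p ≠ v) (hpu : p ≠ u) :
    (T.induce {z | z ≠ v ∧ z ≠ u}).IsTree := by
  constructor
  · have hne : Nonempty {z : V // z ∈ ({z | z ≠ v ∧ z ≠ u} : Set V)} :=
      ⟨⟨p, ⟨hpv, hpu⟩⟩⟩
    refine Connected.mk ?_
    rintro ⟨x, hx⟩ ⟨y, hy⟩
    exact (hT.isConnected x y).elim fun W =>
      reachable_induce_two hv hu hpv hpu W.length W le_rfl hx hy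
  · exact isAcyclic_induce hT.2 _



variable {V : Type u} {T : SimpleGraph V}

lemma exists_leaf [Fintype V] (hT : T.IsTree) (h2 : 2 ≤ Fintype.card V) :
    ∃ v u : V, T.neighborSet v = {u} := by
  classical
  have hdeg1 : ∀ v : V, 0 < T.degree v := by
    intro v
    rw [SimpleGraph.degree_pos_iff_exists_adj]
    obtain ⟨w, hw⟩ := Fintype.exists_ne_of_one_lt_card (by omega) v
    refine (hT.isConnected v w).elim fun W => ?_
    cases W with
    | nil => exact absurd rfl hw.symm
    | cons h _ => exact ⟨_, h⟩
  by_contra hno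
  push_neg at hno
  have hdeg2 : ∀ v : V, 2 ≤ T.degree v := by
    intro v
    rcases Nat.lt_or_ge (T.degree v) 2 with h | h
    · exfalso
      have h1 : T.degree v = 1 := by have := hdeg1 v; omega
      rw [SimpleGraph.degree] at h1
      obtain ⟨u, hu⟩ := Finset.card_eq_one.1 h1
      refine hno v u ?_
      ext x
      simp only [SimpleGraph.mem_neighborSet, Set.mem_singleton_iff]
      rw [← SimpleGraph.mem_neighborFinset, hu, Finset.mem_singleton]
    · exact h
  have hsum := T.sum_degrees_eq_twice_card_edges
  have hedge := hT.card_edgeFinset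
  have hge : 2 * Fintype.card V ≤ ∑ v, T.degree v := by
    calc 2 * Fintype.card V = ∑ _v : V, 2 := by
          simp [Finset.sum_const, Finset.card_univ, mul_comm]
    _ ≤ ∑ v, T.degree v := Finset.sum_le_sum (fun i _ => hdeg2 i)
  omega


lemma exists_coloring : ∀ (n : ℕ) {V : Type u} [Fintype V] (T : SimpleGraph V),
    T.IsTree → Fintype.card V ≤ n → ∃ c : V → Bool, ∀ x y, T.Adj x y → c x ≠ c y := by
  intro n
  induction n with
  | zero =>
    intro V _ T hT hcard
    have : 0 < Fintype.card V := Fintype.card_pos_iff.2 hT.isConnected.nonempty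
    omega
  | succ n IH =>
    intro V _ T hT hcard
    classical
    by_cases h1 : Fintype.card V ≤ 1
    · refine ⟨fun _ => true, fun x y hxy => ?_⟩
      exact absurd (Fintype.card_le_one_iff.1 h1 x y) hxy.ne
    · obtain ⟨v, u, hv⟩ := exists_leaf hT (by omega)
      have hT1 := isTree_induce_one hT hv
      have hvu : v ≠ u := ne_of_nbr hv
      have hcard1 : Fintype.card {z : V // z ∈ ({z | z ≠ v} : Set V)} ≤ n := by
        have hset : ({z | z ≠ v} : Set V) = ({v} : Set V)ᶜ := by ext x; simp
        have h2 := Set.ncard_add_ncard_compl ({v} : Set V)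
        rw [Set.ncard_singleton] at h2
        have h3 : Fintype.card {z : V // z ∈ ({z | z ≠ v} : Set V)}
            = (({z | z ≠ v} : Set V)).ncard := by
          rw [← Nat.card_coe_set_eq, Nat.card_eq_fintype_card]
        rw [h3, hset]
        have h4 : Nat.card V = Fintype.card V := Nat.card_eq_fintype_card
        omega
      obtain ⟨c1, hc1⟩ := IH (T.induce {z | z ≠ v}) hT1 hcard1
      refine ⟨fun x => if hx : x = v then !(c1 ⟨u, Ne.symm hvu⟩) else c1 ⟨x, hx⟩,
        fun x y hxy => ?_⟩
      by_cases hx : x = v <;> by_cases hy : y = v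
      · exact absurd (hx.trans hy.symm) hxy.ne
      · have hyu : y = u := adj_eq_of_nbr hv (hx ▸ hxy)
        simp only [dif_pos hx, dif_neg hy]
        have he : (⟨y, hy⟩ : {z : V // z ∈ ({z | z ≠ v} : Set V)}) = ⟨u, Ne.symm hvu⟩ :=
          Subtype.ext hyu
        rw [he]
        exact Bool.not_ne_self _
      · have hxu : x = u := adj_eq_of_nbr hv (hy ▸ hxy).symm
        simp only [dif_pos hy, dif_neg hx]
        have he : (⟨x, hx⟩ : {z : V // z ∈ ({z | z ≠ v} : Set V)}) = ⟨u, Ne.symm hvu⟩ :=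
          Subtype.ext hxu
        rw [he]
        exact (Bool.not_ne_self _).symm
      · simp only [dif_neg hx, dif_neg hy]
        exact hc1 ⟨x, hx⟩ ⟨y, hy⟩ hxy

lemma indep_map {s : Set V} {S : Finset s} (h : (T.induce s).IsIndepSet' ↑S) :
    T.IsIndepSet' ↑(S.map (Function.Embedding.subtype _)) := by
  rintro x hx y hy hne hadj
  rw [Finset.coe_map] at hx hy
  obtain ⟨a, ha, rfl⟩ := hx
  obtain ⟨b, hb, rfl⟩ := hy
  exact h ha hb (fun e => hne (by rw [e])) hadj

lemma indep_subtype {s : Set V} [DecidablePred (· ∈ s)] {S : Finset V}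
    (h : T.IsIndepSet' ↑S) :
    (T.induce s).IsIndepSet' ↑(S.subtype (· ∈ s)) := by
  rintro ⟨a, ha⟩ hA ⟨b, hb⟩ hB hne hadj
  rw [Finset.mem_coe, Finset.mem_subtype] at hA hB
  exact h hA hB (fun e => hne (Subtype.ext e)) hadj

lemma bool_eq_of_ne_ne : ∀ a b d : Bool, a ≠ d → b ≠ d → a = b := by decide

lemma card_le_two_mul_indepNum [Fintype V] (hT : T.IsTree) :
    Fintype.card V ≤ 2 * _root_.indepNum T := by
  classical
  obtain ⟨c, hc⟩ := exists_coloring (Fintype.card V) T hT le_rfl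
  have hbool : ∀ (b : Bool), T.IsIndepSet' ↑(Finset.univ.filter (fun x => c x = b)) := by
    intro b x hx y hy hne hadj
    rw [Finset.mem_coe, Finset.mem_filter] at hx hy
    exact hc x y hadj (hx.2.trans hy.2.symm)
  have h1 := card_le_indepNum (hbool true)
  have h0 := card_le_indepNum (hbool false)
  have hfe : Finset.univ.filter (fun x => c x = false)
      = Finset.univ.filter (fun x => ¬ (c x = true)) := by
    apply Finset.filter_congr
    intro x _
    cases c x <;> simp
  have hsplit : (Finset.univ.filter (fun x => c x = true)).card
      + (Finset.univ.filter (fun x => c x = false)).card = Fintype.card V := by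
    rw [hfe, Finset.card_filter_add_card_filter_not, Finset.card_univ]
  omega

lemma exists_max_indep_mem [Fintype V] (hT : T.IsTree)
    (hbal : 2 * _root_.indepNum T = Fintype.card V) (p : V) :
    ∃ s : Finset V, T.IsIndepSet' ↑s ∧ s.card = _root_.indepNum T ∧ p ∈ s := by
  classical
  obtain ⟨c, hc⟩ := exists_coloring (Fintype.card V) T hT le_rfl
  have hind1 : T.IsIndepSet' ↑(Finset.univ.filter (fun x => c x = c p)) := by
    intro x hx y hy hne hadj
    rw [Finset.mem_coe, Finset.mem_filter] at hx hy
    exact hc x y hadj (hx.2.trans hy.2.symm)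
  have hind2 : T.IsIndepSet' ↑(Finset.univ.filter (fun x => ¬ (c x = c p))) := by
    intro x hx y hy hne hadj
    rw [Finset.mem_coe, Finset.mem_filter] at hx hy
    exact hc x y hadj (bool_eq_of_ne_ne _ _ _ hx.2 hy.2)
  have h1 := card_le_indepNum hind1
  have h2 := card_le_indepNum hind2
  have hsplit : (Finset.univ.filter (fun x => c x = c p)).card
      + (Finset.univ.filter (fun x => ¬(c x = c p))).card = Fintype.card V := by
    rw [Finset.card_filter_add_card_filter_not, Finset.card_univ]
  refine ⟨Finset.univ.filter (fun x => c x = c p), hind1, by omega, ?_⟩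
  simp

lemma walk_parity {c : V → Bool} (hc : ∀ x y, T.Adj x y → c x ≠ c y) :
    ∀ {x y : V} (W : T.Walk x y), (c x = c y) ↔ Even W.length := by
  have hb : ∀ a b d : Bool, a ≠ b → ((a = d) ↔ ¬(b = d)) := by decide
  intro x y W
  induction W with
  | nil => simp
  | @cons a b y' h W' IH =>
    rw [Walk.length_cons, Nat.even_add_one, ← IH]
    exact hb _ _ _ (hc _ _ h)

lemma adj_dist_to [Fintype V] (hT : T.IsTree) (r : V) {x w : V} (h : T.Adj x w) :
    T.dist x r = T.dist w r + 1 ∨ T.dist w r = T.dist x r + 1 := by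
  obtain ⟨c, hc⟩ := exists_coloring (Fintype.card V) T hT le_rfl
  obtain ⟨Wx, hWx⟩ := (hT.isConnected x r).exists_walk_length_eq_dist
  obtain ⟨Ww, hWw⟩ := (hT.isConnected w r).exists_walk_length_eq_dist
  have h1 : T.dist x r ≤ T.dist w r + 1 := by
    have := SimpleGraph.dist_le (Walk.cons h Ww)
    rwa [Walk.length_cons, hWw] at this
  have h2 : T.dist w r ≤ T.dist x r + 1 := by
    have := SimpleGraph.dist_le (Walk.cons h.symm Wx)
    rwa [Walk.length_cons, hWx] at this
  have hne : T.dist x r ≠ T.dist w r := by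
    intro he
    have px : (c x = c r) ↔ Even (T.dist x r) := by rw [← hWx]; exact walk_parity hc Wx
    have pw : (c w = c r) ↔ Even (T.dist w r) := by rw [← hWw]; exact walk_parity hc Ww
    rw [he] at px
    have hcontra : ∀ a b d : Bool, a ≠ b → (a = d ↔ b = d) → False := by decide
    exact hcontra _ _ _ (hc _ _ h) (px.trans pw.symm)
  omega

lemma dist_le_of_mem_support [DecidableEq V] {r z : V} {x : V} (W : T.Walk x r)
    (hz : z ∈ W.support) : T.dist z r ≤ W.length :=
  (SimpleGraph.dist_le (W.dropUntil z hz)).trans (Walk.length_dropUntil_le W hz)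

lemma back_neighbor (hT : T.IsTree) {r x : V} {k : ℕ} (hd : T.dist x r = k + 1) :
    ∃ w, T.Adj x w ∧ T.dist w r = k ∧ ∀ w', T.Adj x w' → T.dist w' r = k → w' = w := by
  classical
  obtain ⟨P, hP, hPl⟩ := hT.isConnected.exists_path_of_dist x r
  cases P with
  | nil => rw [Walk.length_nil] at hPl; omega
  | @cons _ w _ h P' =>
    rw [Walk.length_cons, hd] at hPl
    have hP'l : P'.length = k := by omega
    have hwk : T.dist w r = k := by
      have hub : T.dist w r ≤ k := hP'l ▸ SimpleGraph.dist_le P'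
      obtain ⟨Ww, hWw⟩ := (hT.isConnected w r).exists_walk_length_eq_dist
      have hlb : T.dist x r ≤ T.dist w r + 1 := by
        have := SimpleGraph.dist_le (Walk.cons h Ww)
        rwa [Walk.length_cons, hWw] at this
      omega
    refine ⟨w, h, hwk, ?_⟩
    intro w' h' hk'
    obtain ⟨Q1, hQ1, hQ1l⟩ := hT.isConnected.exists_path_of_dist w r
    obtain ⟨Q2, hQ2, hQ2l⟩ := hT.isConnected.exists_path_of_dist w' r
    have hx1 : x ∉ Q1.support := by
      intro hm
      have := (dist_le_of_mem_support Q1 hm).trans_eq (hQ1l.trans hwk)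
      omega
    have hx2 : x ∉ Q2.support := by
      intro hm
      have := (dist_le_of_mem_support Q2 hm).trans_eq (hQ2l.trans hk')
      omega
    have hC1 : (Walk.cons h Q1).IsPath := (Walk.cons_isPath_iff h Q1).2 ⟨hQ1, hx1⟩
    have hC2 : (Walk.cons h' Q2).IsPath := (Walk.cons_isPath_iff h' Q2).2 ⟨hQ2, hx2⟩
    have heq : Walk.cons h' Q2 = Walk.cons h Q1 :=
      (hT.existsUnique_path x r).unique hC2 hC1
    have := congrArg (fun (Wk : T.Walk x r) => Wk.getVert 1) heq
    simpa [Walk.getVert_cons_succ, Walk.getVert_zero] using this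

lemma indep_mono {s t : Set V} (h : T.IsIndepSet' s) (hts : t ⊆ s) : T.IsIndepSet' t :=
  Set.Pairwise.mono hts h

lemma no_siblings [Fintype V] (hT : T.IsTree) (hbal : 2 * _root_.indepNum T = Fintype.card V)
    {v v' u : V} (hv : T.neighborSet v = {u}) (hv' : T.neighborSet v' = {u}) : v = v' := by
  classical
  by_contra hne
  have hT1 := isTree_induce_one hT hv'
  have hvu : v ≠ u := ne_of_nbr hv
  have hv'u : v' ≠ u := ne_of_nbr hv'
  have hcard1 : Fintype.card {z : V // z ∈ ({z | z ≠ v'} : Set V)} = Fintype.card V - 1 := by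
    have hset : ({z | z ≠ v'} : Set V) = ({v'} : Set V)ᶜ := by ext x; simp
    have h2 := Set.ncard_add_ncard_compl ({v'} : Set V)
    rw [Set.ncard_singleton] at h2
    have h3 : Fintype.card {z : V // z ∈ ({z | z ≠ v'} : Set V)}
        = (({z | z ≠ v'} : Set V)).ncard := by
      rw [← Nat.card_coe_set_eq, Nat.card_eq_fintype_card]
    have h4 : Nat.card V = Fintype.card V := Nat.card_eq_fintype_card
    rw [h3, hset]
    omega
  have hge := card_le_two_mul_indepNum (T := T.induce {z | z ≠ v'}) hT1
  rw [hcard1] at hge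
  have hcV : 2 ≤ Fintype.card V := by
    have : (({v, u} : Finset V)).card ≤ Fintype.card V := by
      rw [← Finset.card_univ]; exact Finset.card_le_card (Finset.subset_univ _)
    rwa [Finset.card_insert_of_notMem (by simp [hvu]), Finset.card_singleton] at this
  set α := _root_.indepNum T with hα
  set α1 := _root_.indepNum (T.induce {z | z ≠ v'}) with hα1
  obtain ⟨S', hS'i, hS'c⟩ := exists_max_indep (T.induce {z | z ≠ v'})
  set S0 := S'.map (Function.Embedding.subtype _) with hS0def
  have hS0i : T.IsIndepSet' ↑S0 := indep_map hS'i
  have hS0c : S0.card = α1 := by rw [hS0def, Finset.card_map, hS'c]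
  have hv'S0 : v' ∉ S0 := by
    intro hm
    rw [hS0def, Finset.mem_map] at hm
    obtain ⟨a, _, ha⟩ := hm
    exact a.2 ha
  have hAdjv : T.Adj v u := adj_of_nbr hv
  have hAdjv' : T.Adj v' u := adj_of_nbr hv'
  by_cases huS : u ∈ S0
  · have hvS : v ∉ S0 := by
      intro hm
      exact hS0i (Finset.mem_coe.2 hm) (Finset.mem_coe.2 huS) hvu hAdjv
    set S1 := insert v' (insert v (S0.erase u)) with hS1def
    have hind : T.IsIndepSet' ↑S1 := by
      have hbase : T.IsIndepSet' ↑(S0.erase u) :=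
        indep_mono hS0i (by norm_cast; exact Finset.erase_subset _ _)
      have hstep : T.IsIndepSet' ↑(insert v (S0.erase u)) := by
        refine indep_insert hbase ?_
        intro x hx hadj
        exact (Finset.ne_of_mem_erase hx) (adj_eq_of_nbr hv hadj)
      refine indep_insert hstep ?_
      intro x hx hadj
      have hxu : x = u := adj_eq_of_nbr hv' hadj
      rcases Finset.mem_insert.1 hx with h' | h'
      · exact hvu (h' ▸ hxu)
      · exact (Finset.ne_of_mem_erase h') hxu
    have hcard : S1.card = α1 + 1 := by
      rw [hS1def, Finset.card_insert_of_notMem, Finset.card_insert_of_notMem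
        (fun hm => hvS (Finset.mem_of_mem_erase hm)), Finset.card_erase_of_mem huS, hS0c]
      · have : 1 ≤ α1 := by
          have : 1 ≤ S0.card := Finset.card_pos.2 ⟨u, huS⟩
          omega
        omega
      · intro hm
        rcases Finset.mem_insert.1 hm with h' | h'
        · exact hne h'.symm
        · exact hv'S0 (Finset.mem_of_mem_erase h')
    have := card_le_indepNum hind
    rw [hcard] at this
    omega
  · set S1 := insert v' S0 with hS1def
    have hind : T.IsIndepSet' ↑S1 := by
      refine indep_insert hS0i ?_
      intro x hx hadj
      exact huS ((adj_eq_of_nbr hv' hadj) ▸ hx)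
    have hcard : S1.card = α1 + 1 := by
      rw [hS1def, Finset.card_insert_of_notMem hv'S0, hS0c]
    have := card_le_indepNum hind
    rw [hcard] at this
    omega

lemma exists_good_leaf [Fintype V] (hT : T.IsTree) (hbal : 2 * _root_.indepNum T = Fintype.card V)
    (h3 : 3 ≤ Fintype.card V) :
    ∃ v u p : V, T.neighborSet v = {u} ∧ T.neighborSet u = {v, p} ∧ p ≠ v ∧ p ≠ u := by
  classical
  have hne : Nonempty V := hT.isConnected.nonempty
  obtain ⟨r⟩ := hne
  obtain ⟨v, -, hvmax⟩ := Finset.exists_max_image Finset.univ (fun z => T.dist z r)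
    ⟨r, Finset.mem_univ r⟩
  have hmax : ∀ z, T.dist z r ≤ T.dist v r := fun z => hvmax z (Finset.mem_univ z)
  set D := T.dist v r with hD
  have hD1 : 1 ≤ D := by
    by_contra hc0
    have hall : ∀ z : V, z = r := by
      intro z
      have h0 : T.dist z r = 0 := by have := hmax z; omega
      exact ((hT.isConnected z r).dist_eq_zero_iff).1 h0
    have : Fintype.card V ≤ 1 := Fintype.card_le_one_iff.2 fun a b => (hall a).trans (hall b).symm
    omega
  have hleaf : ∀ x, T.dist x r = D → ∃ w, T.neighborSet x = {w} ∧ T.dist w r + 1 = D := by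
    intro x hx
    obtain ⟨k, hk⟩ : ∃ k, D = k + 1 := ⟨D - 1, by omega⟩
    obtain ⟨w, hadj, hwd, huniq⟩ := back_neighbor hT (by rw [hx, hk])
    refine ⟨w, ?_, by omega⟩
    ext z
    simp only [SimpleGraph.mem_neighborSet, Set.mem_singleton_iff]
    constructor
    · intro hz
      rcases adj_dist_to hT r hz with h' | h'
      · exact huniq z hz (by omega)
      · have := hmax z; omega
    · rintro rfl; exact hadj
  obtain ⟨u, hvnbr, hud⟩ := hleaf v rfl
  by_cases hDu : T.dist u r = 0
  · exfalso
    have hur : u = r := ((hT.isConnected u r).dist_eq_zero_iff).1 hDu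
    have hDone : D = 1 := by omega
    have hnbru : ∀ w, T.Adj u w → w = v := by
      intro w hw
      have hwd : T.dist w r = D := by
        rcases adj_dist_to hT r hw with h' | h'
        · omega
        · omega
      obtain ⟨w2, hw2, hw2d⟩ := hleaf w hwd
      have huw2 : u = w2 := by
        have hm : u ∈ T.neighborSet w := hw.symm
        rw [hw2] at hm
        exact hm
      exact no_siblings hT hbal (huw2 ▸ hw2) hvnbr
    have hall : ∀ z : V, z = r ∨ z = v := by
      intro z
      have hdz : T.dist z r ≤ 1 := by have := hmax z; omega
      rcases Nat.le_one_iff_eq_zero_or_eq_one.1 hdz with h0 | h1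
      · exact Or.inl (((hT.isConnected z r).dist_eq_zero_iff).1 h0)
      · refine Or.inr ?_
        have hadj : T.Adj z r := SimpleGraph.dist_eq_one_iff_adj.1 h1
        exact hnbru z (hur ▸ hadj.symm)
    have hsub : (Finset.univ : Finset V) ⊆ {r, v} := by
      intro z _
      rcases hall z with h | h <;> simp [h]
    have : Fintype.card V ≤ 2 := by
      calc Fintype.card V = (Finset.univ : Finset V).card := (Finset.card_univ).symm
      _ ≤ ({r, v} : Finset V).card := Finset.card_le_card hsub
      _ ≤ ({v} : Finset V).card + 1 := Finset.card_insert_le r {v}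
      _ = 2 := by rw [Finset.card_singleton]
    omega
  · obtain ⟨k, hk⟩ : ∃ k, T.dist u r = k + 1 := ⟨T.dist u r - 1, by omega⟩
    obtain ⟨p, hup, hpd, hpuniq⟩ := back_neighbor hT hk
    have hpv : p ≠ v := by
      intro he
      rw [he] at hpd
      omega
    refine ⟨v, u, p, hvnbr, ?_, hpv, hup.ne'⟩
    ext z
    simp only [SimpleGraph.mem_neighborSet, Set.mem_insert_iff, Set.mem_singleton_iff]
    constructor
    · intro hz
      rcases adj_dist_to hT r hz with h' | h'
      · exact Or.inr (hpuniq z hz (by omega))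
      · refine Or.inl ?_
        have hzD : T.dist z r = D := by omega
        obtain ⟨w2, hw2, hw2d⟩ := hleaf z hzD
        have huw2 : u = w2 := by
          have hm : u ∈ T.neighborSet z := hz.symm
          rw [hw2] at hm
          exact hm
        exact no_siblings hT hbal (huw2 ▸ hw2) hvnbr
    · rintro (rfl | rfl)
      · exact (adj_of_nbr hvnbr).symm
      · exact hup

lemma main_balanced : ∀ (n : ℕ) {V : Type u} [Fintype V] (T : SimpleGraph V),
    T.IsTree → Fintype.card V = n → 2 * _root_.indepNum T = n →
    numMaxIndep T ≤ 2 ^ (_root_.indepNum T - 1) + 1 := by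
  intro n
  induction n using Nat.strong_induction_on with
  | _ n IH =>
    intro V _ T hT hcard hbal
    classical
    have hne : Nonempty V := hT.isConnected.nonempty
    have hα1 : 1 ≤ _root_.indepNum T := one_le_indepNum T
    by_cases hsmall : Fintype.card V ≤ 2
    · have hαe : _root_.indepNum T = 1 := by omega
      have hsub : {S : Finset V | T.IsIndepSet' ↑S ∧ S.card = _root_.indepNum T}
          ⊆ (fun x : V => ({x} : Finset V)) '' Set.univ := by
        rintro S ⟨-, hcS⟩
        rw [hαe] at hcS
        obtain ⟨a, ha⟩ := Finset.card_eq_one.1 hcS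
        exact ⟨a, trivial, ha.symm⟩
      have h1 : numMaxIndep T ≤ ((fun x : V => ({x} : Finset V)) '' Set.univ).ncard :=
        Set.ncard_le_ncard hsub (Set.toFinite _)
      have h2 : ((fun x : V => ({x} : Finset V)) '' Set.univ).ncard
          ≤ (Set.univ : Set V).ncard := Set.ncard_image_le (Set.toFinite _)
      have h3 : (Set.univ : Set V).ncard = Fintype.card V := by
        rw [Set.ncard_univ, Nat.card_eq_fintype_card]
      rw [hαe]
      norm_num
      omega
    · obtain ⟨v, u, p, hv, hu, hpv, hpu⟩ := exists_good_leaf hT (by omega) (by omega)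
      have hvu : v ≠ u := ne_of_nbr hv
      have hAdjvu : T.Adj v u := adj_of_nbr hv
      have hAdjup : T.Adj u p := by
        have hm : p ∈ T.neighborSet u := by rw [hu]; right; rfl
        exact hm
      set s : Set V := {z | z ≠ v ∧ z ≠ u} with hs
      have hT' : (T.induce s).IsTree := isTree_induce_two hT hv hu hpv hpu
      haveI hfin : Fintype {z : V // z ∈ s} := Fintype.ofFinite _
      have hcards : Fintype.card {z : V // z ∈ s} = Fintype.card V - 2 := by
        have hset : s = (({v, u} : Set V))ᶜ := by
          ext x
          simp [hs, not_or]
        have h2 := Set.ncard_add_ncard_compl ({v, u} : Set V)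
        rw [Set.ncard_pair hvu] at h2
        have h3 : Fintype.card {z : V // z ∈ s} = s.ncard := by
          rw [← Nat.card_coe_set_eq, Nat.card_eq_fintype_card]
        have h4 : Nat.card V = Fintype.card V := Nat.card_eq_fintype_card
        rw [h3, hset]
        omega
      have hup' : _root_.indepNum (T.induce s) + 1 ≤ _root_.indepNum T := by
        obtain ⟨S', hS'i, hS'c⟩ := exists_max_indep (T.induce s)
        have hS0i : T.IsIndepSet' ↑(S'.map (Function.Embedding.subtype _)) := indep_map hS'i
        have hS0c : (S'.map (Function.Embedding.subtype _)).card = _root_.indepNum (T.induce s) := by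
          rw [Finset.card_map, hS'c]
        have hvS0 : v ∉ S'.map (Function.Embedding.subtype _) := by
          intro hm
          rw [Finset.mem_map] at hm
          obtain ⟨a, -, ha⟩ := hm
          exact a.2.1 ha
        have huS0 : u ∉ S'.map (Function.Embedding.subtype _) := by
          intro hm
          rw [Finset.mem_map] at hm
          obtain ⟨a, -, ha⟩ := hm
          exact a.2.2 ha
        have hind : T.IsIndepSet' ↑(insert v (S'.map (Function.Embedding.subtype _))) := by
          refine indep_insert hS0i ?_
          intro x hx hadj
          exact huS0 ((adj_eq_of_nbr hv hadj) ▸ hx)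
        have hle := card_le_indepNum hind
        rwa [Finset.card_insert_of_notMem hvS0, hS0c] at hle
      have hlow := card_le_two_mul_indepNum hT'
      rw [hcards] at hlow
      have hα'eq : _root_.indepNum (T.induce s) = _root_.indepNum T - 1 := by omega
      have hbal' : 2 * _root_.indepNum (T.induce s) = Fintype.card {z : V // z ∈ s} := by
        rw [hcards]; omega
      have hIH := IH (n - 2) (by omega) (T.induce s) hT' (by rw [hcards]; omega)
        (by rw [hbal', hcards]; omega)
      have hpmem : p ∈ s := ⟨hpv, hpu⟩
      obtain ⟨B, hBi, hBc, hBp⟩ := exists_max_indep_mem hT' hbal'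
        (⟨p, hpmem⟩ : {z : V // z ∈ s})
      set AA : Set (Finset V) :=
        {S : Finset V | T.IsIndepSet' ↑S ∧ S.card = _root_.indepNum T} with hAA
      set AB : Set (Finset {z : V // z ∈ s}) :=
        {S : Finset {z : V // z ∈ s} |
          (T.induce s).IsIndepSet' ↑S ∧ S.card = _root_.indepNum (T.induce s)} with hAB
      have hnum : numMaxIndep T = AA.ncard := rfl
      have hnum' : numMaxIndep (T.induce s) = AB.ncard := rfl
      have hBmem : B ∈ AB := ⟨hBi, hBc⟩
      have hvu_mem : ∀ S, S ∈ AA → v ∈ S ∨ u ∈ S := by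
        intro S hS
        by_contra hc
        push_neg at hc
        have hind : T.IsIndepSet' ↑(insert v S) := by
          refine indep_insert hS.1 ?_
          intro x hx hadj
          exact hc.2 ((adj_eq_of_nbr hv hadj) ▸ hx)
        have hle := card_le_indepNum hind
        rw [Finset.card_insert_of_notMem hc.1, hS.2] at hle
        omega
      have hnotboth : ∀ S, S ∈ AA → v ∈ S → u ∈ S → False := by
        intro S hS hvS huS
        exact hS.1 (Finset.mem_coe.2 hvS) (Finset.mem_coe.2 huS) hvu hAdjvu
      have hFmap : ∀ S : Finset V,
          ((S.subtype (· ∈ s)).map (Function.Embedding.subtype _)) = S.filter (· ∈ s) :=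
        fun S => Finset.subtype_map _
      have hfilter_v : ∀ S, S ∈ AA → v ∈ S → S.filter (· ∈ s) = S.erase v := by
        intro S hS hvS
        have huS : u ∉ S := fun huS => hnotboth S hS hvS huS
        ext x
        simp only [Finset.mem_filter, Finset.mem_erase, hs, Set.mem_setOf_eq]
        constructor
        · rintro ⟨hxS, hxv, -⟩
          exact ⟨hxv, hxS⟩
        · rintro ⟨hxv, hxS⟩
          exact ⟨hxS, hxv, fun he => huS (he ▸ hxS)⟩
      have hfilter_u : ∀ S, S ∈ AA → u ∈ S → S.filter (· ∈ s) = S.erase u := by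
        intro S hS huS
        have hvS : v ∉ S := fun hvS => hnotboth S hS hvS huS
        ext x
        simp only [Finset.mem_filter, Finset.mem_erase, hs, Set.mem_setOf_eq]
        constructor
        · rintro ⟨hxS, -, hxu⟩
          exact ⟨hxu, hxS⟩
        · rintro ⟨hxu, hxS⟩
          exact ⟨hxS, fun he => hvS (he ▸ hxS), hxu⟩
      have hcard_sub : ∀ S : Finset V, (S.subtype (· ∈ s)).card = (S.filter (· ∈ s)).card :=
        fun S => Finset.card_subtype _ _
      have hmem_v : ∀ S, S ∈ AA → v ∈ S → S.subtype (· ∈ s) ∈ AB := by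
        intro S hS hvS
        refine ⟨indep_subtype hS.1, ?_⟩
        rw [hcard_sub S, hfilter_v S hS hvS, Finset.card_erase_of_mem hvS, hS.2, hα'eq]
      have hmem_u : ∀ S, S ∈ AA → u ∈ S → S.subtype (· ∈ s) ∈ AB ∧
          S.subtype (· ∈ s) ≠ B := by
        intro S hS huS
        refine ⟨⟨indep_subtype hS.1, ?_⟩, ?_⟩
        · rw [hcard_sub S, hfilter_u S hS huS, Finset.card_erase_of_mem huS, hS.2, hα'eq]
        · intro he
          have hpS : p ∈ S := by
            have hm : (⟨p, hpmem⟩ : {z : V // z ∈ s}) ∈ S.subtype (· ∈ s) := by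
              rw [he]; exact hBp
            exact Finset.mem_subtype.1 hm
          exact hS.1 (Finset.mem_coe.2 huS) (Finset.mem_coe.2 hpS) (Ne.symm hpu) hAdjup
      have hinj_v : ∀ S1, (S1 ∈ AA ∧ v ∈ S1) → ∀ S2, (S2 ∈ AA ∧ v ∈ S2) →
          S1.subtype (· ∈ s) = S2.subtype (· ∈ s) → S1 = S2 := by
        rintro S1 ⟨h1, hv1⟩ S2 ⟨h2, hv2⟩ he
        have e1 : S1 = insert v (S1.filter (· ∈ s)) := by
          rw [hfilter_v S1 h1 hv1, Finset.insert_erase hv1]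
        have e2 : S2 = insert v (S2.filter (· ∈ s)) := by
          rw [hfilter_v S2 h2 hv2, Finset.insert_erase hv2]
        rw [e1, e2, ← hFmap S1, ← hFmap S2, he]
      have hinj_u : ∀ S1, (S1 ∈ AA ∧ u ∈ S1) → ∀ S2, (S2 ∈ AA ∧ u ∈ S2) →
          S1.subtype (· ∈ s) = S2.subtype (· ∈ s) → S1 = S2 := by
        rintro S1 ⟨h1, hu1⟩ S2 ⟨h2, hu2⟩ he
        have e1 : S1 = insert u (S1.filter (· ∈ s)) := by
          rw [hfilter_u S1 h1 hu1, Finset.insert_erase hu1]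
        have e2 : S2 = insert u (S2.filter (· ∈ s)) := by
          rw [hfilter_u S2 h2 hu2, Finset.insert_erase hu2]
        rw [e1, e2, ← hFmap S1, ← hFmap S2, he]
      have hsplit : AA ⊆ {S : Finset V | S ∈ AA ∧ v ∈ S} ∪ {S : Finset V | S ∈ AA ∧ u ∈ S} := by
        intro S hS
        rcases hvu_mem S hS with h' | h'
        · exact Or.inl ⟨hS, h'⟩
        · exact Or.inr ⟨hS, h'⟩
      have c1 : AA.ncard ≤ ({S : Finset V | S ∈ AA ∧ v ∈ S}).ncard
          + ({S : Finset V | S ∈ AA ∧ u ∈ S}).ncard :=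
        (Set.ncard_le_ncard hsplit (Set.toFinite _)).trans (Set.ncard_union_le _ _)
      have c2 : ({S : Finset V | S ∈ AA ∧ v ∈ S}).ncard ≤ AB.ncard := by
        refine Set.ncard_le_ncard_of_injOn (fun S => S.subtype (· ∈ s)) ?_ ?_ (Set.toFinite _)
        · rintro S ⟨hS, hvS⟩
          exact hmem_v S hS hvS
        · rintro S1 h1 S2 h2 he
          exact hinj_v S1 h1 S2 h2 he
      have c3 : ({S : Finset V | S ∈ AA ∧ u ∈ S}).ncard ≤ (AB \ {B}).ncard := by
        refine Set.ncard_le_ncard_of_injOn (fun S => S.subtype (· ∈ s)) ?_ ?_ (Set.toFinite _)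
        · rintro S ⟨hS, huS⟩
          obtain ⟨hm, hne'⟩ := hmem_u S hS huS
          exact ⟨hm, by simpa using hne'⟩
        · rintro S1 h1 S2 h2 he
          exact hinj_u S1 h1 S2 h2 he
      have c4 : (AB \ {B}).ncard = AB.ncard - 1 :=
        Set.ncard_diff_singleton_of_mem hBmem
      have c5 : 1 ≤ AB.ncard := by
        have := (Set.ncard_pos (Set.toFinite _)).2 ⟨B, hBmem⟩
        omega
      have hα2 : 2 ≤ _root_.indepNum T := by omega
      have hpow : 2 ^ (_root_.indepNum T - 1) = 2 ^ (_root_.indepNum T - 2) * 2 := by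
        rw [← pow_succ]
        congr 1
        omega
      have hIH' : AB.ncard ≤ 2 ^ (_root_.indepNum T - 2) + 1 := by
        rw [hnum'] at hIH
        have he2 : _root_.indepNum (T.induce s) - 1 = _root_.indepNum T - 2 := by omega
        rwa [he2] at hIH
      rw [hnum, hpow]
      omega

end IndepAux

theorem stmt4 {V : Type*} [Fintype V] (T : SimpleGraph V) (hT : T.IsTree) (n α : ℕ)
    (hn : Fintype.card V = n) (hα : _root_.indepNum T = α) (h : 2 * α = n) :
    numMaxIndep T ≤ 2 ^ (n - α - 1) + 1 := by
  have hmain := IndepAux.main_balanced n T hT hn (by rw [hα]; exact h)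
  rw [hα] at hmain
  have hexp : n - α - 1 = α - 1 := by omega
  rwa [hexp]
end

section
/- If T is a tree of order n with independence number α satisfying 2α > n, then the number of maximum independent sets of T is at most 2^(n−α−1). -/
open SimpleGraph

section Aux

open scoped Classical

variable {V : Type*} [Fintype V]

lemma isIndep_iff' (T : SimpleGraph V) (s : Finset V) :
    T.IsIndepSet' ↑s ↔ ∀ x ∈ s, ∀ y ∈ s, ¬ T.Adj x y := by
  constructor
  · intro h x hx y hy hadj
    exact h (by exact_mod_cast hx) (by exact_mod_cast hy) hadj.ne hadj
  · intro h x hx y hy _ hadj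
    exact h x (by exact_mod_cast hx) y (by exact_mod_cast hy) hadj

lemma indep_subset' {T : SimpleGraph V} {s t : Finset V} (hsub : s ⊆ t)
    (ht : T.IsIndepSet' ↑t) : T.IsIndepSet' ↑s := by
  rw [isIndep_iff'] at ht ⊢
  exact fun x hx y hy => ht x (hsub hx) y (hsub hy)

/-- Independence number restricted to a finset of vertices. -/
noncomputable def alphaW (T : SimpleGraph V) (W : Finset V) : ℕ :=
  (W.powerset.filter fun s : Finset V => T.IsIndepSet' (s : Set V)).sup Finset.card

lemma exists_mis (T : SimpleGraph V) (W : Finset V) :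
    ∃ s, s ⊆ W ∧ T.IsIndepSet' ↑s ∧ s.card = alphaW T W := by
  have hne : (W.powerset.filter fun s : Finset V => T.IsIndepSet' (s : Set V)).Nonempty :=
    ⟨∅, Finset.mem_filter.mpr ⟨Finset.empty_mem_powerset W, by intro x hx; simp at hx⟩⟩
  obtain ⟨s, hs, hcard⟩ := Finset.exists_mem_eq_sup _ hne Finset.card
  simp only [Finset.mem_filter, Finset.mem_powerset] at hs
  exact ⟨s, hs.1, hs.2, hcard.symm⟩

lemma card_le_alphaW {T : SimpleGraph V} {W s : Finset V} (hsub : s ⊆ W)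
    (hind : T.IsIndepSet' ↑s) : s.card ≤ alphaW T W :=
  Finset.le_sup (by simp [Finset.mem_filter, Finset.mem_powerset, hsub, hind])

lemma alphaW_empty (T : SimpleGraph V) : alphaW T (∅ : Finset V) = 0 := by
  obtain ⟨s, hs, _, hcard⟩ := exists_mis T (∅ : Finset V)
  rw [← hcard, Finset.card_eq_zero, ← Finset.subset_empty]
  exact hs

/-- In an acyclic graph, every nonempty finset of vertices has a vertex with at most one
neighbor inside the finset. -/
lemma exists_low_degree {T : SimpleGraph V} (hac : T.IsAcyclic) (W : Finset V)
    (hW : W.Nonempty) : ∃ v ∈ W, (W.filter (T.Adj v)).card ≤ 1 := by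
  by_contra hcon
  push_neg at hcon
  have key : ∀ n : ℕ, ∃ (v u : V) (p : T.Walk v u),
      p.IsPath ∧ (∀ y ∈ p.support, y ∈ W) ∧ p.length = n := by
    intro n
    induction n with
    | zero =>
      obtain ⟨w, hw⟩ := hW
      exact ⟨w, w, Walk.nil, Walk.IsPath.nil, by simp [hw], rfl⟩
    | succ n ih =>
      obtain ⟨v, u, p, hp, hsup, hlen⟩ := ih
      have hv : v ∈ W := hsup v p.start_mem_support
      have h2 : 1 < (W.filter (T.Adj v)).card := hcon v hv
      obtain ⟨a, ha, b, hb, hab⟩ := Finset.one_lt_card.mp h2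
      simp only [Finset.mem_filter] at ha hb
      obtain ⟨x, hxW, hadj, hxz⟩ : ∃ x, x ∈ W ∧ T.Adj v x ∧ x ≠ p.getVert 1 := by
        by_cases haz : a = p.getVert 1
        · exact ⟨b, hb.1, hb.2, by rw [← haz]; exact fun hh => hab (hh.symm)⟩
        · exact ⟨a, ha.1, ha.2, haz⟩
      by_cases hxs : x ∈ p.support
      · exfalso
        have hq : (p.takeUntil x hxs).IsPath := hp.takeUntil hxs
        have hedge : (Walk.cons hadj Walk.nil : T.Walk v x).IsPath := by
          simp [Walk.cons_isPath_iff, hadj.ne]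
        have heq : p.takeUntil x hxs = Walk.cons hadj Walk.nil := by
          have := hac.path_unique ⟨p.takeUntil x hxs, hq⟩ ⟨Walk.cons hadj Walk.nil, hedge⟩
          exact congrArg Subtype.val this
        have hspec := p.take_spec hxs
        rw [heq] at hspec
        have : p.getVert 1 = x := by
          rw [← hspec, Walk.getVert_append]
          simp
        exact hxz this.symm
      · refine ⟨x, u, Walk.cons hadj.symm p, ?_, ?_, by simp [hlen]⟩
        · rw [Walk.cons_isPath_iff]; exact ⟨hp, hxs⟩
        · intro y hy
          rw [Walk.support_cons, List.mem_cons] at hy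
          rcases hy with rfl | hy
          · exact hxW
          · exact hsup y hy
  obtain ⟨v, u, p, hp, hsup, hlen⟩ := key (Fintype.card V)
  have h1 := hp.support_nodup.length_le_card
  rw [Walk.length_support, hlen] at h1
  omega

/-- Core lemma: in an acyclic graph, if a finset `W` has `2 * alphaW > |W|`, then some vertex
of `W` lies in every maximum independent subset of `W`. -/
lemma core_mem {T : SimpleGraph V} (hac : T.IsAcyclic) :
    ∀ (m : ℕ) (W : Finset V), W.card ≤ m → W.card < 2 * alphaW T W →
    ∃ u ∈ W, ∀ s ⊆ W, T.IsIndepSet' ↑s → s.card = alphaW T W → u ∈ s := by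
  intro m
  induction m with
  | zero =>
    intro W hWm hA
    exfalso
    have : W = ∅ := Finset.card_eq_zero.mp (Nat.le_zero.mp hWm)
    rw [this, alphaW_empty] at hA
    simp [this] at hA
  | succ m ih =>
    intro W hWm hA
    have hWne : W.Nonempty := by
      rcases W.eq_empty_or_nonempty with rfl | hne
      · rw [alphaW_empty] at hA; simp at hA
      · exact hne
    obtain ⟨v, hvW, hdeg⟩ := exists_low_degree hac W hWne
    interval_cases hd : (W.filter (T.Adj v)).card
    · -- v is isolated in W: v is in every MIS of W
      refine ⟨v, hvW, fun s hs hind hcard => ?_⟩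
      by_contra hvs
      have hins : T.IsIndepSet' ↑(insert v s) := by
        rw [isIndep_iff'] at hind ⊢
        intro x hx y hy hadj
        rw [Finset.mem_insert] at hx hy
        have hnb : ∀ z ∈ s, ¬ T.Adj v z := by
          intro z hz hvz
          have : z ∈ W.filter (T.Adj v) := Finset.mem_filter.mpr ⟨hs hz, hvz⟩
          rw [Finset.card_eq_zero.mp hd] at this
          exact absurd this (Finset.notMem_empty z)
        rcases hx with rfl | hx
        · rcases hy with rfl | hy
          · exact T.irrefl hadj
          · exact hnb y hy hadj
        · rcases hy with rfl | hy
          · exact hnb x hx hadj.symm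
          · exact hind x hx y hy hadj
      have hsub : insert v s ⊆ W := Finset.insert_subset hvW hs
      have := card_le_alphaW hsub hins
      rw [Finset.card_insert_of_notMem hvs, hcard] at this
      omega
    · -- v is a leaf in W with unique neighbor p
      obtain ⟨p, hpeq⟩ := Finset.card_eq_one.mp hd
      have hpmem : p ∈ W ∧ T.Adj v p := by
        have : p ∈ W.filter (T.Adj v) := by rw [hpeq]; exact Finset.mem_singleton_self p
        simpa [Finset.mem_filter] using this
      have hnbr : ∀ x ∈ W, T.Adj v x → x = p := by
        intro x hx hadj
        have : x ∈ W.filter (T.Adj v) := Finset.mem_filter.mpr ⟨hx, hadj⟩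
        rw [hpeq] at this
        exact Finset.mem_singleton.mp this
      have hvp : v ≠ p := hpmem.2.ne
      set W' : Finset V := (W.erase v).erase p with hW'
      have hpW : p ∈ W.erase v := Finset.mem_erase.mpr ⟨fun hh => hvp hh.symm, hpmem.1⟩
      have hW'card : W'.card = W.card - 2 := by
        rw [hW', Finset.card_erase_of_mem hpW, Finset.card_erase_of_mem hvW]
        omega
      have hW'sub : W' ⊆ W := fun x hx => Finset.mem_of_mem_erase (Finset.mem_of_mem_erase hx)
      have hW'v : v ∉ W' := fun hh =>
        (Finset.ne_of_mem_erase (Finset.mem_of_mem_erase hh)) rfl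
      have hW'p : p ∉ W' := fun hh => (Finset.ne_of_mem_erase hh) rfl
      -- alphaW W' + 1 ≤ alphaW W
      have h1 : alphaW T W' + 1 ≤ alphaW T W := by
        obtain ⟨s', hs'sub, hs'ind, hs'card⟩ := exists_mis T W'
        have hvs' : v ∉ s' := fun hh => hW'v (hs'sub hh)
        have hind : T.IsIndepSet' ↑(insert v s') := by
          rw [isIndep_iff'] at hs'ind ⊢
          intro x hx y hy hadj
          rw [Finset.mem_insert] at hx hy
          have hnb : ∀ z ∈ s', ¬ T.Adj v z := by
            intro z hz hvz
            have := hnbr z (hW'sub (hs'sub hz)) hvz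
            subst this
            exact hW'p (hs'sub hz)
          rcases hx with rfl | hx
          · rcases hy with rfl | hy
            · exact T.irrefl hadj
            · exact hnb y hy hadj
          · rcases hy with rfl | hy
            · exact hnb x hx hadj.symm
            · exact hs'ind x hx y hy hadj
        have hsub : insert v s' ⊆ W :=
          Finset.insert_subset hvW (fun x hx => hW'sub (hs'sub hx))
        have := card_le_alphaW hsub hind
        rwa [Finset.card_insert_of_notMem hvs', hs'card] at this
      -- every MIS of W contains exactly one of v, p, and restricts to a MIS of W'
      have hrestrict : ∀ s ⊆ W, T.IsIndepSet' ↑s → s.card = alphaW T W →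
          ((s.erase v).erase p ⊆ W' ∧ T.IsIndepSet' ↑((s.erase v).erase p) ∧
            ((s.erase v).erase p).card = alphaW T W - 1) := by
        intro s hs hind hcard
        have hone : v ∈ s ∨ p ∈ s := by
          by_contra hno
          push_neg at hno
          have hins : T.IsIndepSet' ↑(insert v s) := by
            rw [isIndep_iff'] at hind ⊢
            intro x hx y hy hadj
            rw [Finset.mem_insert] at hx hy
            have hnb : ∀ z ∈ s, ¬ T.Adj v z := by
              intro z hz hvz
              exact hno.2 ((hnbr z (hs hz) hvz) ▸ hz)
            rcases hx with rfl | hx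
            · rcases hy with rfl | hy
              · exact T.irrefl hadj
              · exact hnb y hy hadj
            · rcases hy with rfl | hy
              · exact hnb x hx hadj.symm
              · exact hind x hx y hy hadj
          have := card_le_alphaW (Finset.insert_subset hvW hs) hins
          rw [Finset.card_insert_of_notMem hno.1, hcard] at this
          omega
        have hnotboth : ¬ (v ∈ s ∧ p ∈ s) := by
          rintro ⟨hv1, hp1⟩
          exact (isIndep_iff' T s).mp hind v hv1 p hp1 hpmem.2
        have hcard' : ((s.erase v).erase p).card = alphaW T W - 1 := by
          rcases hone with hv1 | hp1
          · have hp1 : p ∉ s := fun hh => hnotboth ⟨hv1, hh⟩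
            rw [Finset.erase_eq_of_notMem (fun hh => hp1 (Finset.mem_of_mem_erase hh)),
              Finset.card_erase_of_mem hv1, hcard]
          · by_cases hv1 : v ∈ s
            · exact absurd ⟨hv1, hp1⟩ hnotboth
            · rw [Finset.erase_eq_of_notMem hv1,
                Finset.card_erase_of_mem hp1, hcard]
        refine ⟨?_, indep_subset' (fun x hx =>
          Finset.mem_of_mem_erase (Finset.mem_of_mem_erase hx)) hind, hcard'⟩
        intro x hx
        rw [Finset.mem_erase] at hx
        rw [Finset.mem_erase] at hx
        rcases hx with ⟨hxp, hxv, hxs⟩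
        exact Finset.mem_erase.mpr ⟨hxp, Finset.mem_erase.mpr ⟨hxv, hs hxs⟩⟩
      -- alphaW W' = alphaW W - 1
      have hAW1 : 1 ≤ alphaW T W := by omega
      have h2 : alphaW T W - 1 ≤ alphaW T W' := by
        obtain ⟨s, hs, hind, hcard⟩ := exists_mis T W
        obtain ⟨hsub', hind', hcard'⟩ := hrestrict s hs hind hcard
        have := card_le_alphaW hsub' hind'
        omega
      have halpha : alphaW T W' = alphaW T W - 1 := by omega
      -- apply the induction hypothesis to W'
      have hWcard2 : 2 ≤ W.card := Finset.one_lt_card.mpr ⟨v, hvW, p, hpmem.1, hvp⟩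
      have hih := ih W' (by rw [hW'card]; omega) (by rw [hW'card, halpha]; omega)
      obtain ⟨u, huW', hu⟩ := hih
      refine ⟨u, hW'sub huW', fun s hs hind hcard => ?_⟩
      obtain ⟨hsub', hind', hcard'⟩ := hrestrict s hs hind hcard
      have := hu _ hsub' hind' (by omega)
      exact Finset.mem_of_mem_erase (Finset.mem_of_mem_erase this)

lemma indepNum_eq_alphaW (T : SimpleGraph V) : _root_.indepNum T = alphaW T Finset.univ := by
  have hmem : alphaW T Finset.univ ∈ {k | ∃ s : Finset V, T.IsIndepSet' ↑s ∧ s.card = k} := by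
    obtain ⟨s, _, hind, hcard⟩ := exists_mis T Finset.univ
    exact ⟨s, hind, hcard⟩
  have hub : ∀ k ∈ {k | ∃ s : Finset V, T.IsIndepSet' ↑s ∧ s.card = k},
      k ≤ alphaW T Finset.univ := by
    rintro k ⟨s, hind, rfl⟩
    exact card_le_alphaW (Finset.subset_univ s) hind
  exact le_antisymm (csSup_le ⟨_, hmem⟩ hub) (le_csSup ⟨_, hub⟩ hmem)

lemma mis_inj {T : SimpleGraph V} {s s' s₀ : Finset V}
    (h0i : T.IsIndepSet' ↑s₀) (h0c : s₀.card = alphaW T Finset.univ)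
    (hsi : T.IsIndepSet' ↑s) (hsc : s.card = alphaW T Finset.univ)
    (hs'i : T.IsIndepSet' ↑s') (hs'c : s'.card = alphaW T Finset.univ)
    (hdiff : s \ s₀ = s' \ s₀) : s = s' := by
  have hss : ∀ {x}, x ∈ s → x ∉ s' → x ∈ s₀ := by
    intro x hx hx'
    by_contra hx0
    exact hx' (Finset.mem_sdiff.mp (hdiff ▸ Finset.mem_sdiff.mpr ⟨hx, hx0⟩)).1
  have hss' : ∀ {x}, x ∈ s' → x ∉ s → x ∈ s₀ := by
    intro x hx hx'
    by_contra hx0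
    exact hx' (Finset.mem_sdiff.mp (hdiff.symm ▸ Finset.mem_sdiff.mpr ⟨hx, hx0⟩)).1
  have hunion : T.IsIndepSet' ↑(s ∪ s') := by
    rw [isIndep_iff'] at hsi hs'i h0i ⊢
    intro x hx y hy hadj
    rw [Finset.mem_union] at hx hy
    rcases hx with hx | hx <;> rcases hy with hy | hy
    · exact hsi x hx y hy hadj
    · by_cases hy2 : y ∈ s
      · exact hsi x hx y hy2 hadj
      · by_cases hx2 : x ∈ s'
        · exact hs'i x hx2 y hy hadj
        · exact h0i x (hss hx hx2) y (hss' hy hy2) hadj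
    · by_cases hy2 : y ∈ s'
      · exact hs'i x hx y hy2 hadj
      · by_cases hx2 : x ∈ s
        · exact hsi x hx2 y hy hadj
        · exact h0i x (hss' hx hx2) y (hss hy hy2) hadj
    · exact hs'i x hx y hy hadj
  have hle := card_le_alphaW (Finset.subset_univ (s ∪ s')) hunion
  have h1 : s = s ∪ s' :=
    Finset.eq_of_subset_of_card_le Finset.subset_union_left (by omega)
  have h2 : s' ⊆ s := h1 ▸ Finset.subset_union_right
  exact (Finset.eq_of_subset_of_card_le h2 (by omega)).symm

end Aux

theorem stmt5 {V : Type*} [Fintype V] (T : SimpleGraph V) (hT : T.IsTree) (n α : ℕ)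
    (hn : Fintype.card V = n) (hα : _root_.indepNum T = α) (h : 2 * α > n) :
    numMaxIndep T ≤ 2 ^ (n - α - 1) := by
  classical
  subst hn hα
  have hTA : _root_.indepNum T = alphaW T Finset.univ := indepNum_eq_alphaW T
  rw [hTA] at h
  obtain ⟨s₀, _, h0i, h0c⟩ := exists_mis T Finset.univ
  have hMdef : numMaxIndep T =
      {s : Finset V | T.IsIndepSet' ↑s ∧ s.card = _root_.indepNum T}.ncard := rfl
  set M : Set (Finset V) := {s : Finset V | T.IsIndepSet' ↑s ∧ s.card = _root_.indepNum T} with hM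
  have hAle : alphaW T Finset.univ ≤ Fintype.card V := by
    rw [← h0c]
    exact (Finset.card_le_card (Finset.subset_univ s₀)).trans (le_of_eq (Finset.card_univ))
  by_cases hn1 : Fintype.card V ≤ 1
  · -- the one-vertex case
    have hcard1 : Fintype.card V = 1 := by omega
    have hA1 : alphaW T Finset.univ = 1 := by omega
    have hsub : M ⊆ {Finset.univ} := by
      intro s hs
      have : s.card = Fintype.card V := by
        rw [hs.2, hTA, hA1, hcard1]
      simp [Finset.eq_univ_of_card s this]
    have := (Set.ncard_le_ncard hsub (Set.finite_singleton _)).trans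
      (le_of_eq (Set.ncard_singleton _))
    rw [hMdef]
    calc M.ncard ≤ 1 := this
      _ ≤ 2 ^ (Fintype.card V - _root_.indepNum T - 1) := Nat.one_le_two_pow
  · -- main case: at least two vertices
    push_neg at hn1
    obtain ⟨u, _, hu⟩ := core_mem hT.IsAcyclic (Fintype.card V) Finset.univ
      (le_of_eq Finset.card_univ) (by rw [Finset.card_univ]; omega)
    have hu0 : u ∈ s₀ := hu s₀ (Finset.subset_univ s₀) h0i h0c
    obtain ⟨w, hwu⟩ := Fintype.exists_ne_of_one_lt_card hn1 u
    obtain ⟨v, huv⟩ : ∃ v, T.Adj u v := by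
      obtain ⟨pw⟩ := hT.isConnected.preconnected u w
      cases pw with
      | nil => exact absurd rfl hwu
      | cons hadj q => exact ⟨_, hadj⟩
    have hv0 : v ∉ s₀ := fun hh => (isIndep_iff' T s₀).mp h0i u hu0 v hh huv
    have hvM : ∀ s ∈ M, v ∉ s := by
      intro s hs hv
      have hus : u ∈ s := hu s (Finset.subset_univ s) hs.1 (hTA ▸ hs.2)
      exact (isIndep_iff' T s).mp hs.1 u hus v hv huv
    set D : Finset V := (Finset.univ \ s₀).erase v with hDdef
    have hvmem : v ∈ Finset.univ \ s₀ := Finset.mem_sdiff.mpr ⟨Finset.mem_univ v, hv0⟩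
    have hD : D.card = Fintype.card V - alphaW T Finset.univ - 1 := by
      rw [hDdef, Finset.card_erase_of_mem hvmem, Finset.card_sdiff_of_subset (Finset.subset_univ s₀),
        Finset.card_univ, h0c]
    have hinj : Set.InjOn (fun s => s \ s₀) M := by
      intro s hs s' hs' hdiff
      exact mis_inj h0i h0c hs.1 (hTA ▸ hs.2) hs'.1 (hTA ▸ hs'.2) hdiff
    have himg : (fun s => s \ s₀) '' M ⊆ ↑D.powerset := by
      rintro _ ⟨s, hs, rfl⟩
      rw [Finset.mem_coe, Finset.mem_powerset]
      intro x hx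
      rw [Finset.mem_sdiff] at hx
      refine Finset.mem_erase.mpr ⟨?_, Finset.mem_sdiff.mpr ⟨Finset.mem_univ x, hx.2⟩⟩
      rintro rfl
      exact hvM s hs hx.1
    rw [hMdef]
    calc M.ncard = ((fun s => s \ s₀) '' M).ncard := (Set.ncard_image_of_injOn hinj).symm
      _ ≤ (↑D.powerset : Set (Finset V)).ncard :=
          Set.ncard_le_ncard himg (D.powerset.finite_toSet)
      _ = D.powerset.card := Set.ncard_coe_finset _
      _ = 2 ^ D.card := D.card_powerset
      _ = 2 ^ (Fintype.card V - _root_.indepNum T - 1) := by rw [hD, hTA]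
end

section
/- If T is a tree of order n ≥ 2, then the number of maximum independent sets of T is at most 2^((n−2)/2) + 1 when n is even, and at most 2^((n−3)/2) when n is odd. -/
set_option linter.unusedSectionVars false
set_option linter.unusedVariables false
set_option maxHeartbeats 1000000

open SimpleGraph Finset

namespace Zito

variable {V : Type*} [Fintype V] [DecidableEq V] {G : SimpleGraph V} [DecidableRel G.Adj]


/-- independent subsets of `s` -/
def indSets (G : SimpleGraph V) [DecidableRel G.Adj] (s : Finset V) : Finset (Finset V) :=
  s.powerset.filter fun t => ∀ u ∈ t, ∀ v ∈ t, ¬ G.Adj u v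

def aOn (G : SimpleGraph V) [DecidableRel G.Adj] (s : Finset V) : ℕ :=
  (indSets G s).sup Finset.card

lemma mem_indSets {s t : Finset V} :
    t ∈ indSets G s ↔ t ⊆ s ∧ ∀ u ∈ t, ∀ v ∈ t, ¬ G.Adj u v := by
  simp [indSets]

lemma indSets_nonempty (s : Finset V) : (indSets G s).Nonempty :=
  ⟨∅, by simp [mem_indSets]⟩

lemma exists_max_ind (s : Finset V) : ∃ t ∈ indSets G s, t.card = aOn G s := by
  obtain ⟨t, ht, h⟩ := Finset.exists_mem_eq_sup _ (indSets_nonempty (G := G) s) Finset.card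
  exact ⟨t, ht, h.symm⟩

lemma card_le_aOn {s t : Finset V} (h : t ∈ indSets G s) : t.card ≤ aOn G s :=
  Finset.le_sup h

lemma aOn_le_card (s : Finset V) : aOn G s ≤ s.card :=
  Finset.sup_le fun t ht => Finset.card_le_card (mem_indSets.1 ht).1

/-- a matching inside `s`, as a finset of ordered pairs -/
def IsMatchOn (G : SimpleGraph V) (s : Finset V) (M : Finset (V × V)) : Prop :=
  (∀ p ∈ M, G.Adj p.1 p.2 ∧ p.1 ∈ s ∧ p.2 ∈ s) ∧
  (∀ p ∈ M, ∀ q ∈ M, p.1 ≠ q.2) ∧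
  (∀ p ∈ M, ∀ q ∈ M, p ≠ q → p.1 ≠ q.1 ∧ p.2 ≠ q.2)

def coords (M : Finset (V × V)) : Finset V := M.biUnion fun p => {p.1, p.2}

lemma mem_coords {M : Finset (V × V)} {v : V} :
    v ∈ coords M ↔ ∃ p ∈ M, v = p.1 ∨ v = p.2 := by
  simp [coords, eq_comm]

lemma coords_card {M : Finset (V × V)} (hM : ∀ p ∈ M, ∀ q ∈ M, p.1 ≠ q.2)
    (hM2 : ∀ p ∈ M, ∀ q ∈ M, p ≠ q → p.1 ≠ q.1 ∧ p.2 ≠ q.2) :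
    (coords M).card = 2 * M.card := by
  rw [coords, Finset.card_biUnion, Finset.sum_congr rfl (fun p hp => ?_), Finset.sum_const,
    smul_eq_mul, mul_comm]
  · rw [Finset.card_insert_of_notMem (by simp [hM p hp p hp]), Finset.card_singleton]
  · intro p hp q hq hne
    have h1 := hM2 p hp q hq hne
    have h2 := hM p hp q hq
    have h3 := hM q hq p hp
    simp only [Finset.disjoint_left, Finset.mem_insert, Finset.mem_singleton]
    rintro a (rfl | rfl) (h | h) <;> simp_all



lemma interior_two_nbrs : ∀ {a b : V} (p : G.Walk a b), p.IsPath →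
    ∀ {y : V}, y ∈ p.support → y ≠ a → y ≠ b →
    ∃ u ∈ p.support, ∃ w ∈ p.support, u ≠ w ∧ G.Adj u y ∧ G.Adj w y
  | a, _, SimpleGraph.Walk.nil, _, y, hy, hya, _ => by
      simp only [SimpleGraph.Walk.support_nil, List.mem_singleton] at hy
      exact absurd hy hya
  | a, b, SimpleGraph.Walk.cons h q, hp, y, hy, hya, hyb => by
      rw [SimpleGraph.Walk.support_cons, List.mem_cons] at hy
      rcases hy with rfl | hy
      · exact absurd rfl hya
      · rcases eq_or_ne y (q.getVert 0) with hyc | hyc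
        · -- y is the second vertex of the walk
          have hyc' : q.getVert 0 = _ := SimpleGraph.Walk.getVert_zero q
          rw [hyc'] at hyc; subst hyc
          obtain ⟨d, hyd, q2, rfl⟩ := q.exists_eq_cons_of_ne hyb
          have hans : a ∉ (SimpleGraph.Walk.cons hyd q2).support :=
            ((SimpleGraph.Walk.cons_isPath_iff _ _).1 hp).2
          refine ⟨a, by simp, d, by simp, fun had => hans ?_, h, hyd.symm⟩
          subst had; simp
        · rw [SimpleGraph.Walk.getVert_zero] at hyc
          obtain ⟨u, hu, w, hw, h1, h2, h3⟩ :=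
            interior_two_nbrs q hp.of_cons hy hyc hyb
          exact ⟨u, by simp [hu], w, by simp [hw], h1, h2, h3⟩

lemma adj_start_eq_second (hac : G.IsAcyclic) {a c b : V} (h : G.Adj a c) (q : G.Walk c b)
    (hp : (SimpleGraph.Walk.cons h q).IsPath) {w : V}
    (hw : w ∈ (SimpleGraph.Walk.cons h q).support) (haw : G.Adj a w) : w = c := by
  have hpath := isAcyclic_iff_path_unique.1 hac
  have h1 : (⟨(SimpleGraph.Walk.cons h q).takeUntil w hw, hp.takeUntil hw⟩ : G.Path a w)
      = SimpleGraph.Path.singleton haw := hpath _ _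
  have h2 : (SimpleGraph.Walk.cons h q).takeUntil w hw
      = SimpleGraph.Walk.cons haw SimpleGraph.Walk.nil := congrArg Subtype.val h1
  have h3 := (SimpleGraph.Walk.cons h q).take_spec hw
  rw [h2, SimpleGraph.Walk.cons_append, SimpleGraph.Walk.nil_append] at h3
  have h4 := congrArg SimpleGraph.Walk.support h3
  rw [SimpleGraph.Walk.support_cons, SimpleGraph.Walk.support_cons] at h4
  have h5 : ((SimpleGraph.Walk.cons h q).dropUntil w hw).support = q.support :=
    List.tail_eq_of_cons_eq h4
  have h6 := SimpleGraph.Walk.support_eq_cons ((SimpleGraph.Walk.cons h q).dropUntil w hw)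
  rw [h5, SimpleGraph.Walk.support_eq_cons q] at h6
  exact (List.cons_eq_cons.1 h6).1.symm

lemma exists_max_path {s : Finset V} (hG : ∃ x ∈ s, ∃ y ∈ s, G.Adj x y) :
    ∃ (a b : V) (p : G.Walk a b), p.IsPath ∧ (∀ v ∈ p.support, v ∈ s) ∧ 1 ≤ p.length ∧
      ∀ (c d : V) (q : G.Walk c d), q.IsPath → (∀ v ∈ q.support, v ∈ s) →
        q.length ≤ p.length := by
  obtain ⟨x, hx, y, hy, hxy⟩ := hG
  set L : Set ℕ := {n | ∃ (a b : V) (p : G.Walk a b), p.IsPath ∧ (∀ v ∈ p.support, v ∈ s) ∧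
    p.length = n} with hL
  have hne : 1 ∈ L := by
    refine ⟨x, y, SimpleGraph.Walk.cons hxy SimpleGraph.Walk.nil, ?_, ?_, rfl⟩
    · rw [SimpleGraph.Walk.cons_isPath_iff]
      exact ⟨SimpleGraph.Walk.IsPath.nil, by simp [hxy.ne]⟩
    · intro v hv
      simp only [SimpleGraph.Walk.support_cons, SimpleGraph.Walk.support_nil,
        List.mem_cons, List.mem_singleton] at hv
      rcases hv with rfl | rfl | h
      · exact hx
      · exact hy
      · simp at h
  have hbdd : BddAbove L := by
    refine ⟨Fintype.card V, fun n hn => ?_⟩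
    obtain ⟨a, b, p, hp, _, hl⟩ := hn
    exact hl ▸ hp.length_lt.le
  have hmem := Nat.sSup_mem ⟨1, hne⟩ hbdd
  obtain ⟨a, b, p, hp, hps, hpl⟩ := hmem
  refine ⟨a, b, p, hp, hps, ?_, ?_⟩
  · rw [hpl]; exact le_csSup hbdd hne
  · intro c d q hq hqs
    rw [hpl]; exact le_csSup hbdd ⟨c, d, q, hq, hqs, rfl⟩

lemma exists_edge (hconn : G.Connected) (h2 : 2 ≤ Fintype.card V) : ∃ x y, G.Adj x y := by
  obtain ⟨x, y, hxy⟩ := Fintype.exists_pair_of_one_lt_card h2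
  obtain ⟨p⟩ := hconn.preconnected x y
  cases p with
  | nil => exact absurd rfl hxy
  | cons h q => exact ⟨_, _, h⟩

lemma insert_ind {s t : Finset V} {x : V} (hx : x ∈ s) (ht : t ∈ indSets G s)
    (hnot : ∀ v ∈ t, ¬ G.Adj x v) : insert x t ∈ indSets G s := by
  rw [mem_indSets] at ht ⊢
  refine ⟨insert_subset hx ht.1, ?_⟩
  intro u hu v hv h
  rcases mem_insert.1 hu with hux | hu <;> rcases mem_insert.1 hv with hvx | hv
  · exact G.irrefl (hux ▸ hvx ▸ h)
  · exact hnot v hv (hux ▸ h)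
  · exact hnot u hu (hvx ▸ h).symm
  · exact ht.2 u hu v hv h

lemma aOn_delete_leaf {s : Finset V} {x y : V} (hx : x ∈ s) (hy : y ∈ s)
    (hxy : G.Adj x y) (hleaf : ∀ w ∈ s, G.Adj x w → w = y) :
    aOn G s = aOn G ((s.erase x).erase y) + 1 := by
  have hxy' : x ≠ y := hxy.ne
  have hsub : (s.erase x).erase y ⊆ s := (erase_subset _ _).trans (erase_subset _ _)
  refine le_antisymm ?_ ?_
  · obtain ⟨t, ht, htc⟩ := exists_max_ind (G := G) s
    have htind := (mem_indSets.1 ht).2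
    have hts := (mem_indSets.1 ht).1
    by_cases hxt : x ∈ t
    · have hyt : y ∉ t := fun hyt => htind x hxt y hyt hxy
      have h1 : t.erase x ∈ indSets G ((s.erase x).erase y) := by
        rw [mem_indSets]
        refine ⟨fun v hv => ?_, fun u hu v hv => htind u (mem_of_mem_erase hu) v
          (mem_of_mem_erase hv)⟩
        have hvx := Finset.ne_of_mem_erase hv
        have hvt := Finset.mem_of_mem_erase hv
        exact mem_erase.2 ⟨fun hvy => hyt (hvy ▸ hvt), mem_erase.2 ⟨hvx, hts hvt⟩⟩
      have h2 := card_le_aOn h1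
      rw [Finset.card_erase_of_mem hxt] at h2
      have h3 : 1 ≤ t.card := Finset.card_pos.2 ⟨x, hxt⟩
      omega
    · by_cases hyt : y ∈ t
      · have h1 : t.erase y ∈ indSets G ((s.erase x).erase y) := by
          rw [mem_indSets]
          refine ⟨fun v hv => ?_, fun u hu v hv => htind u (mem_of_mem_erase hu) v
            (mem_of_mem_erase hv)⟩
          have hvy := Finset.ne_of_mem_erase hv
          have hvt := Finset.mem_of_mem_erase hv
          exact mem_erase.2 ⟨hvy, mem_erase.2 ⟨fun hvx => hxt (hvx ▸ hvt), hts hvt⟩⟩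
        have h2 := card_le_aOn h1
        rw [Finset.card_erase_of_mem hyt] at h2
        have h3 : 1 ≤ t.card := Finset.card_pos.2 ⟨y, hyt⟩
        omega
      · exfalso
        have h1 : insert x t ∈ indSets G s := by
          refine insert_ind hx ht fun v hv hadj => ?_
          exact hyt ((hleaf v (hts hv) hadj) ▸ hv)
        have h2 := card_le_aOn h1
        rw [Finset.card_insert_of_notMem hxt, htc] at h2
        omega
  · obtain ⟨t', ht', htc'⟩ := exists_max_ind (G := G) ((s.erase x).erase y)
    have hts' := (mem_indSets.1 ht').1
    have h1 : insert x t' ∈ indSets G s := by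
      refine insert_ind hx (mem_indSets.2 ⟨hts'.trans hsub, (mem_indSets.1 ht').2⟩)
        fun v hv hadj => ?_
      have hvy := hleaf v (hsub (hts' hv)) hadj
      exact (Finset.ne_of_mem_erase (hts' hv)) (hvy)
    have h2 := card_le_aOn h1
    have hxt' : x ∉ t' := fun hxt' =>
      (Finset.ne_of_mem_erase (Finset.mem_of_mem_erase (hts' hxt'))) rfl
    rw [Finset.card_insert_of_notMem hxt', htc'] at h2
    omega


lemma koenig (hac : G.IsAcyclic) (s : Finset V) :
    ∃ M : Finset (V × V), IsMatchOn G s M ∧ M.card + aOn G s = s.card := by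
  induction s using Finset.strongInduction with
  | _ s ih =>
    by_cases hedge : ∃ x ∈ s, ∃ y ∈ s, G.Adj x y
    · obtain ⟨a, b, p, hp, hps, hlen, hmax⟩ := exists_max_path hedge
      have hab : a ≠ b := by
        rintro rfl
        rw [Walk.isPath_iff_eq_nil] at hp
        subst hp; simp at hlen
      obtain ⟨c, h, q, rfl⟩ := p.exists_eq_cons_of_ne hab
      have hxs : a ∈ s := hps a (Walk.start_mem_support _)
      have hcs : c ∈ s := hps c (by simp)
      have hleaf : ∀ w ∈ s, G.Adj a w → w = c := by
        intro w hw haw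
        by_cases hwp : w ∈ (Walk.cons h q).support
        · exact adj_start_eq_second hac h q hp hwp haw
        · exfalso
          have hr : (Walk.cons haw.symm (Walk.cons h q)).IsPath := hp.cons hwp
          have hle := hmax _ _ _ hr (by
            intro v hv
            rw [Walk.support_cons, List.mem_cons] at hv
            rcases hv with rfl | hv
            · exact hw
            · exact hps v hv)
          simp [Walk.length_cons] at hle
      set s' := (s.erase a).erase c with hs'
      have hcna : c ≠ a := h.ne'
      have hcs2 : c ∈ s.erase a := mem_erase.2 ⟨hcna, hcs⟩
      have hss' : s' ⊂ s :=
        Finset.ssubset_of_subset_of_ssubset (erase_subset _ _) (Finset.erase_ssubset hxs)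
      obtain ⟨M', hM', hsum'⟩ := ih s' hss'
      have hMs' : ∀ p ∈ M', p.1 ∈ s' ∧ p.2 ∈ s' :=
        fun p hp' => ⟨(hM'.1 p hp').2.1, (hM'.1 p hp').2.2⟩
      have hnas' : a ∉ s' := fun hmem => (Finset.ne_of_mem_erase (mem_of_mem_erase hmem)) rfl
      have hncs' : c ∉ s' := fun hmem => (Finset.ne_of_mem_erase hmem) rfl
      have hsub' : s' ⊆ s := (erase_subset _ _).trans (erase_subset _ _)
      refine ⟨insert (a, c) M', ⟨?_, ?_, ?_⟩, ?_⟩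
      · intro p hp'
        rcases mem_insert.1 hp' with rfl | hp'
        · exact ⟨h, hxs, hcs⟩
        · exact ⟨(hM'.1 p hp').1, hsub' (hMs' p hp').1, hsub' (hMs' p hp').2⟩
      · intro p hp' q' hq'
        rcases mem_insert.1 hp' with rfl | hp' <;> rcases mem_insert.1 hq' with rfl | hq'
        · exact hcna.symm
        · exact fun e => hnas' ((show a = q'.2 from e).symm ▸ (hMs' q' hq').2)
        · exact fun e => hncs' ((show p.1 = c from e) ▸ (hMs' p hp').1)
        · exact hM'.2.1 p hp' q' hq'
      · intro p hp' q' hq' hne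
        rcases mem_insert.1 hp' with rfl | hp' <;> rcases mem_insert.1 hq' with rfl | hq'
        · exact absurd rfl hne
        · exact ⟨fun e => hnas' ((show a = q'.1 from e).symm ▸ (hMs' q' hq').1),
            fun e => hncs' ((show c = q'.2 from e).symm ▸ (hMs' q' hq').2)⟩
        · exact ⟨fun e => hnas' ((show p.1 = a from e) ▸ (hMs' p hp').1),
            fun e => hncs' ((show p.2 = c from e) ▸ (hMs' p hp').2)⟩
        · exact hM'.2.2 p hp' q' hq' hne
      · have hnotM' : (a, c) ∉ M' := fun hm => hnas' (hMs' _ hm).1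
        rw [card_insert_of_notMem hnotM', aOn_delete_leaf hxs hcs h hleaf, ← hs']
        have h1 : 2 ≤ s.card := Finset.one_lt_card.2 ⟨a, hxs, c, hcs, hcna.symm⟩
        have h2 : (s.erase a).card = s.card - 1 := Finset.card_erase_of_mem hxs
        have h3 : s'.card = (s.erase a).card - 1 := Finset.card_erase_of_mem hcs2
        omega
    · push_neg at hedge
      have hs : s ∈ indSets G s := mem_indSets.2 ⟨Finset.Subset.refl s, hedge⟩
      have haOn : aOn G s = s.card := le_antisymm (aOn_le_card s) (card_le_aOn hs)
      exact ⟨∅, ⟨by simp, by simp, by simp⟩, by simp [haOn]⟩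

lemma matching_le {s : Finset V} {M : Finset (V × V)} (hM : IsMatchOn G s M)
    {t : Finset V} (ht : t ∈ indSets G s) : M.card + t.card ≤ s.card := by
  have htind := (mem_indSets.1 ht).2
  have hts := (mem_indSets.1 ht).1
  set f : V × V → V := fun p => if p.1 ∈ t then p.2 else p.1 with hf
  have hfmem : ∀ p ∈ M, f p ∈ s \ t := by
    intro p hp
    have hadj := (hM.1 p hp).1
    by_cases h1 : p.1 ∈ t
    · have h2 : p.2 ∉ t := fun h2 => htind _ h1 _ h2 hadj
      simp [hf, h1, (hM.1 p hp).2.2, h2]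
    · simp [hf, h1, (hM.1 p hp).2.1]
  have hinj : Set.InjOn f M := by
    intro p hp q hq he
    by_contra hne
    have h1 := hM.2.2 p hp q hq hne
    have h2 := hM.2.1 p hp q hq
    have h3 := hM.2.1 q hq p hp
    by_cases hp1 : p.1 ∈ t <;> by_cases hq1 : q.1 ∈ t <;> simp [hf, hp1, hq1] at he <;>
      first | exact h1.1 he | exact h1.2 he | exact h2 he | exact h3 he.symm
  have hle : M.card ≤ (s \ t).card := Finset.card_le_card_of_injOn f hfmem hinj
  have h4 : (s \ t).card = s.card - t.card := Finset.card_sdiff_of_subset hts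
  have h5 : t.card ≤ s.card := Finset.card_le_card hts
  omega

lemma cover_structure {s : Finset V} {M : Finset (V × V)} (hM : IsMatchOn G s M) {C : Finset V}
    (hcov : ∀ p ∈ M, p.1 ∈ C ∨ p.2 ∈ C) (hcard : C.card ≤ M.card) :
    (∀ p ∈ M, (p.1 ∈ C ↔ p.2 ∉ C)) ∧ (∀ v ∈ C, ∃ p ∈ M, v = p.1 ∨ v = p.2) := by
  set f : V × V → V := fun p => if p.1 ∈ C then p.1 else p.2 with hf
  have hfC : ∀ p ∈ M, f p ∈ C := by
    intro p hp; by_cases h : p.1 ∈ C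
    · simpa [hf, h] using h
    · rcases hcov p hp with h1 | h2
      · exact absurd h1 h
      · simpa [hf, h] using h2
  have hinj : Set.InjOn f M := by
    intro p hp q hq he
    by_contra hne
    have h1 := hM.2.2 p hp q hq hne
    have h2 := hM.2.1 p hp q hq
    have h3 := hM.2.1 q hq p hp
    by_cases hp1 : p.1 ∈ C <;> by_cases hq1 : q.1 ∈ C <;> simp [hf, hp1, hq1] at he <;>
      first | exact h1.1 he | exact h1.2 he | exact h2 he | exact h3 he.symm
  have himage : M.image f = C := by
    apply Finset.eq_of_subset_of_card_le
    · intro v hv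
      obtain ⟨p, hp, rfl⟩ := Finset.mem_image.1 hv
      exact hfC p hp
    · rw [Finset.card_image_of_injOn hinj]; exact hcard
  constructor
  · intro p hp
    constructor
    · intro h1 h2
      have hmem : p.2 ∈ M.image f := himage ▸ h2
      obtain ⟨q, hq, he⟩ := Finset.mem_image.1 hmem
      by_cases hqq : q = p
      · subst hqq
        simp [hf, h1] at he
        exact hM.2.1 q hq q hq he
      · by_cases hq1 : q.1 ∈ C
        · simp [hf, hq1] at he
          exact hM.2.1 q hq p hp he
        · simp [hf, hq1] at he
          exact (hM.2.2 q hq p hp hqq).2 he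
    · intro h2
      rcases hcov p hp with h | h
      · exact h
      · exact absurd h h2
  · intro v hv
    have hmem : v ∈ M.image f := himage ▸ hv
    obtain ⟨q, hq, he⟩ := Finset.mem_image.1 hmem
    by_cases hq1 : q.1 ∈ C
    · refine ⟨q, hq, Or.inl ?_⟩
      simp [hf, hq1] at he
      exact he.symm
    · refine ⟨q, hq, Or.inr ?_⟩
      simp [hf, hq1] at he
      exact he.symm

def maxIndSets (G : SimpleGraph V) [DecidableRel G.Adj] (s : Finset V) : Finset (Finset V) :=
  (indSets G s).filter fun t => t.card = aOn G s

def covSets (G : SimpleGraph V) [DecidableRel G.Adj] (s : Finset V) (M : Finset (V × V)) :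
    Finset (Finset V) :=
  s.powerset.filter fun C => (∀ u ∈ s, ∀ v ∈ s, G.Adj u v → u ∈ C ∨ v ∈ C) ∧
    ∀ p ∈ M, (p.1 ∈ C ↔ p.2 ∉ C)

lemma insert_matching {s : Finset V} {M : Finset (V × V)} (hM : IsMatchOn G s M) {x y : V}
    (hadj : G.Adj x y) (hx : x ∈ s) (hy : y ∈ s) (hxM : x ∉ coords M) (hyM : y ∉ coords M) :
    IsMatchOn G s (insert (x, y) M) := by
  have hcds : ∀ p ∈ M, p.1 ∈ coords M ∧ p.2 ∈ coords M := fun p hp =>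
    ⟨mem_coords.2 ⟨p, hp, Or.inl rfl⟩, mem_coords.2 ⟨p, hp, Or.inr rfl⟩⟩
  refine ⟨?_, ?_, ?_⟩
  · intro p hp
    rcases mem_insert.1 hp with rfl | hp
    · exact ⟨hadj, hx, hy⟩
    · exact hM.1 p hp
  · intro p hp q hq
    rcases mem_insert.1 hp with rfl | hp <;> rcases mem_insert.1 hq with rfl | hq
    · exact hadj.ne
    · exact fun e => hxM ((show x = q.2 from e).symm ▸ (hcds q hq).2)
    · exact fun e => hyM ((show p.1 = y from e) ▸ (hcds p hp).1)
    · exact hM.2.1 p hp q hq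
  · intro p hp q hq hne
    rcases mem_insert.1 hp with rfl | hp <;> rcases mem_insert.1 hq with rfl | hq
    · exact absurd rfl hne
    · exact ⟨fun e => hxM ((show x = q.1 from e).symm ▸ (hcds q hq).1),
        fun e => hyM ((show y = q.2 from e).symm ▸ (hcds q hq).2)⟩
    · exact ⟨fun e => hxM ((show p.1 = x from e) ▸ (hcds p hp).1),
        fun e => hyM ((show p.2 = y from e) ▸ (hcds p hp).2)⟩
    · exact hM.2.2 p hp q hq hne

lemma compl_max_ind {M : Finset (V × V)} (hM : IsMatchOn G Finset.univ M)
    (hsum : M.card + aOn G Finset.univ = Fintype.card V)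
    {t : Finset V} (ht : t ∈ maxIndSets G Finset.univ) :
    (Finset.univ \ t) ∈ covSets G Finset.univ M ∧
    (∀ p ∈ M, (p.1 ∈ Finset.univ \ t ↔ p.2 ∉ Finset.univ \ t)) ∧
    (∀ v ∈ Finset.univ \ t, ∃ p ∈ M, v = p.1 ∨ v = p.2) := by
  have htI : t ∈ indSets G Finset.univ := (Finset.mem_filter.1 ht).1
  have htc : t.card = aOn G Finset.univ := (Finset.mem_filter.1 ht).2
  have htind := (mem_indSets.1 htI).2
  have hCcard : (Finset.univ \ t).card = M.card := by
    rw [Finset.card_sdiff_of_subset (Finset.subset_univ t), Finset.card_univ]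
    omega
  have hcovE : ∀ u ∈ Finset.univ, ∀ v ∈ Finset.univ, G.Adj u v →
      u ∈ Finset.univ \ t ∨ v ∈ Finset.univ \ t := by
    intro u _ v _ hadj
    by_cases hu : u ∈ t
    · right
      simp only [Finset.mem_sdiff, Finset.mem_univ, true_and]
      exact fun hv => htind u hu v hv hadj
    · left
      simp [Finset.mem_sdiff, hu]
  have hcovM : ∀ p ∈ M, p.1 ∈ Finset.univ \ t ∨ p.2 ∈ Finset.univ \ t :=
    fun p hp => hcovE p.1 (Finset.mem_univ _) p.2 (Finset.mem_univ _) (hM.1 p hp).1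
  obtain ⟨hone, hcoord⟩ := cover_structure hM hcovM (le_of_eq hCcard)
  exact ⟨Finset.mem_filter.2 ⟨Finset.mem_powerset.2 (Finset.subset_univ _), hcovE, hone⟩,
    hone, hcoord⟩

lemma count_nonperfect {M : Finset (V × V)} (hM : IsMatchOn G Finset.univ M)
    (hconn : G.Connected) (h2 : 2 ≤ Fintype.card V)
    (hsum : M.card + aOn G Finset.univ = Fintype.card V) {u : V} (hu : u ∉ coords M) :
    (maxIndSets G Finset.univ).card ≤ 2 ^ (M.card - 1) := by
  -- u has a neighbour w
  obtain ⟨z, hz⟩ := Fintype.exists_ne_of_one_lt_card (by omega) u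
  obtain ⟨pz⟩ := hconn.preconnected u z
  obtain ⟨w, haw⟩ : ∃ w, G.Adj u w := by
    cases pz with
    | nil => exact absurd rfl hz.symm
    | cons h q => exact ⟨_, h⟩
  -- w is matched
  have hwM : w ∈ coords M := by
    by_contra hwM
    obtain ⟨t, ht, htc⟩ := exists_max_ind (G := G) Finset.univ
    have := matching_le (insert_matching hM haw (Finset.mem_univ _) (Finset.mem_univ _) hu hwM) ht
    have hcardi : (insert (u, w) M).card = M.card + 1 := by
      rw [Finset.card_insert_of_notMem]
      intro hmem
      exact hu (mem_coords.2 ⟨(u, w), hmem, Or.inl rfl⟩)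
    rw [hcardi, htc, Finset.card_univ] at this
    omega
  obtain ⟨pw, hpw, hwend⟩ := mem_coords.1 hwM
  set Φ : Finset V → Finset (V × V) := fun t => (M.erase pw).filter (fun p => p.1 ∉ t) with hΦ
  -- the characterization of the complement of a maximum independent set
  have key : ∀ t ∈ maxIndSets G Finset.univ, ∀ v : V, v ∈ Finset.univ \ t ↔
      (v = w ∨ ∃ p ∈ M.erase pw, (v = p.1 ∧ p ∈ Φ t) ∨ (v = p.2 ∧ p ∉ Φ t)) := by
    intro t ht v
    obtain ⟨hcovT, hone, hcoord⟩ := compl_max_ind hM hsum ht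
    have htI : t ∈ indSets G Finset.univ := (Finset.mem_filter.1 ht).1
    have htind := (mem_indSets.1 htI).2
    -- u is unmatched hence in t
    have hut : u ∈ t := by
      by_contra hut
      have : u ∈ Finset.univ \ t := Finset.mem_sdiff.2 ⟨Finset.mem_univ _, hut⟩
      obtain ⟨p, hp, he⟩ := hcoord u this
      exact hu (mem_coords.2 ⟨p, hp, he⟩)
    -- w is in the complement
    have hwC : w ∈ Finset.univ \ t := by
      refine Finset.mem_sdiff.2 ⟨Finset.mem_univ _, fun hwt => ?_⟩
      exact htind u hut w hwt haw
    have hmemΦ : ∀ p ∈ M.erase pw, (p ∈ Φ t ↔ p.1 ∉ t) := by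
      intro p hp
      simp [hΦ, Finset.mem_filter, hp]
    constructor
    · intro hv
      obtain ⟨p, hp, he⟩ := hcoord v hv
      by_cases hppw : p = pw
      · subst hppw
        left
        rcases hwend with hw1 | hw1 <;> rcases he with he | he
        · rw [he, ← hw1]
        · exfalso
          rw [hw1] at hwC
          rw [he] at hv
          exact ((hone p hp).1 hwC) hv
        · exfalso
          rw [hw1] at hwC
          rw [he] at hv
          exact ((hone p hp).1 hv) hwC
        · rw [he, ← hw1]
      · right
        refine ⟨p, Finset.mem_erase.2 ⟨hppw, hp⟩, ?_⟩
        rcases he with he | he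
        · left
          refine ⟨he, (hmemΦ p (Finset.mem_erase.2 ⟨hppw, hp⟩)).2 ?_⟩
          rw [← he]
          exact (Finset.mem_sdiff.1 hv).2
        · right
          refine ⟨he, fun hmem => ?_⟩
          have h1 : p.1 ∉ t := (hmemΦ p (Finset.mem_erase.2 ⟨hppw, hp⟩)).1 hmem
          have h2 : p.1 ∈ Finset.univ \ t := Finset.mem_sdiff.2 ⟨Finset.mem_univ _, h1⟩
          rw [he] at hv
          exact (hone p hp).1 h2 hv
    · rintro (rfl | ⟨p, hp, ⟨rfl, hmem⟩ | ⟨rfl, hmem⟩⟩)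
      · exact hwC
      · have h1 : p.1 ∉ t := (hmemΦ p hp).1 hmem
        exact Finset.mem_sdiff.2 ⟨Finset.mem_univ _, h1⟩
      · have h1 : p.1 ∈ t := by
          by_contra h1
          exact hmem ((hmemΦ p hp).2 h1)
        have h2 : p.1 ∉ Finset.univ \ t := fun hmem2 => (Finset.mem_sdiff.1 hmem2).2 h1
        have h3 := (hone p (Finset.mem_of_mem_erase hp))
        by_contra h4
        exact h2 (h3.2 h4)
  -- injectivity
  have hinj : Set.InjOn Φ (maxIndSets G Finset.univ : Set (Finset V)) := by
    intro t1 ht1 t2 ht2 he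
    have h1 := key t1 ht1
    have h2 := key t2 ht2
    have h3 : ∀ v, v ∈ Finset.univ \ t1 ↔ v ∈ Finset.univ \ t2 := fun v => by
      rw [h1 v, he, ← h2 v]
    ext v
    constructor
    · intro hv
      by_contra hv2
      exact (Finset.mem_sdiff.1 ((h3 v).2 (Finset.mem_sdiff.2 ⟨Finset.mem_univ _, hv2⟩))).2 hv
    · intro hv
      by_contra hv2
      exact (Finset.mem_sdiff.1 ((h3 v).1 (Finset.mem_sdiff.2 ⟨Finset.mem_univ _, hv2⟩))).2 hv
  have hmaps : ∀ t ∈ (maxIndSets G Finset.univ : Finset (Finset V)), Φ t ∈ (M.erase pw).powerset :=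
    fun t _ => Finset.mem_powerset.2 (Finset.filter_subset _ _)
  have hcard := Finset.card_le_card_of_injOn Φ hmaps (by exact_mod_cast hinj)
  rw [Finset.card_powerset, Finset.card_erase_of_mem hpw] at hcard
  exact hcard

def ConnOn (G : SimpleGraph V) (s : Finset V) : Prop :=
  ∀ a ∈ s, ∀ b ∈ s, ∃ p : G.Walk a b, ∀ v ∈ p.support, v ∈ s

lemma tree_pm_structure (hac : G.IsAcyclic) {s : Finset V} {M : Finset (V × V)}
    (hM : IsMatchOn G s M) (hcoords : coords M = s) (hconn : ConnOn G s)
    (hμ : 2 ≤ M.card) :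
    ∃ (x y d : V) (e : V × V), e ∈ M ∧ (e = (x, y) ∨ e = (y, x)) ∧
      x ∈ s ∧ y ∈ s ∧ d ∈ s ∧ d ≠ x ∧ d ≠ y ∧ G.Adj x y ∧ G.Adj y d ∧
      (∀ w ∈ s, G.Adj x w → w = y) ∧ (∀ w ∈ s, G.Adj y w → w = x ∨ w = d) := by
  have hpath := isAcyclic_iff_path_unique.1 hac
  have hscard : s.card = 2 * M.card := by
    rw [← hcoords, coords_card hM.2.1 hM.2.2]
  -- an edge exists
  obtain ⟨e0, he0⟩ := Finset.card_pos.1 (by omega : 0 < M.card)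
  have hedge : ∃ x ∈ s, ∃ y ∈ s, G.Adj x y :=
    ⟨e0.1, (hM.1 e0 he0).2.1, e0.2, (hM.1 e0 he0).2.2, (hM.1 e0 he0).1⟩
  obtain ⟨a, b, p, hp, hps, hlen, hmax⟩ := exists_max_path hedge
  have hab : a ≠ b := by
    rintro rfl
    rw [Walk.isPath_iff_eq_nil] at hp
    subst hp; simp at hlen
  obtain ⟨c, h, q, rfl⟩ := p.exists_eq_cons_of_ne hab
  have hxs : a ∈ s := hps a (Walk.start_mem_support _)
  have hcs : c ∈ s := hps c (by simp)
  have hleafx : ∀ w ∈ s, G.Adj a w → w = c := by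
    intro w hw haw
    by_cases hwp : w ∈ (Walk.cons h q).support
    · exact adj_start_eq_second hac h q hp hwp haw
    · exfalso
      have hr : (Walk.cons haw.symm (Walk.cons h q)).IsPath := hp.cons hwp
      have hle := hmax _ _ _ hr (by
        intro v hv
        rw [Walk.support_cons, List.mem_cons] at hv
        rcases hv with rfl | hv
        · exact hw
        · exact hps v hv)
      simp [Walk.length_cons] at hle
  -- the matching edge at a
  obtain ⟨e, he, hend⟩ := mem_coords.1 (hcoords ▸ hxs : a ∈ coords M)
  have hexy : e = (a, c) ∨ e = (c, a) := by
    rcases hend with h1 | h1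
    · left
      have h2 : G.Adj a e.2 := h1 ▸ (hM.1 e he).1
      have h3 : e.2 = c := hleafx e.2 (hM.1 e he).2.2 h2
      exact Prod.ext h1.symm h3
    · right
      have h2 : G.Adj a e.1 := h1 ▸ ((hM.1 e he).1.symm)
      have h3 : e.1 = c := hleafx e.1 (hM.1 e he).2.1 h2
      exact Prod.ext h3 h1.symm
  -- the path has length at least 2
  have hlen2 : 2 ≤ (Walk.cons h q).length := by
    by_contra hcon
    have hq0 : q.length = 0 := by
      simp [Walk.length_cons] at hcon ⊢
      omega
    have hbc : c = b := Walk.eq_of_length_eq_zero hq0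
    -- find a third vertex
    have hcard3 : 2 < s.card := by omega
    have : ((s.erase a).erase c).Nonempty := by
      rw [← Finset.card_pos]
      have h2 : (s.erase a).card = s.card - 1 := Finset.card_erase_of_mem hxs
      have h3 : ((s.erase a).erase c).card = (s.erase a).card - 1 := by
        apply Finset.card_erase_of_mem
        exact Finset.mem_erase.2 ⟨h.ne', hcs⟩
      omega
    obtain ⟨z, hzmem⟩ := this
    have hzc : z ≠ c := Finset.ne_of_mem_erase hzmem
    have hza : z ≠ a := Finset.ne_of_mem_erase (Finset.mem_of_mem_erase hzmem)
    have hzs : z ∈ s := Finset.mem_of_mem_erase (Finset.mem_of_mem_erase hzmem)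
    obtain ⟨r0, hr0⟩ := hconn z hzs a hxs
    have hr0' := (Walk.support_toPath_subset r0)
    have hrps : ∀ v ∈ (r0.toPath : G.Walk z a).support, v ∈ s := fun v hv => hr0 v (hr0' hv)
    have hr0p : (r0.toPath : G.Walk z a).IsPath := r0.toPath.2
    have hrlen := hmax _ _ _ hr0p hrps
    have hrlen1 : (r0.toPath : G.Walk z a).length = 1 := by
      have h0 : (r0.toPath : G.Walk z a).length ≠ 0 := fun h0 =>
        hza (Walk.eq_of_length_eq_zero h0)
      omega
    obtain ⟨w0, hzw0, r1, hr1⟩ := (r0.toPath : G.Walk z a).exists_eq_cons_of_ne hza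
    have hr1len : r1.length = 0 := by
      rw [hr1] at hrlen1
      simp [Walk.length_cons] at hrlen1
      exact Walk.nil_iff_length_eq.mp hrlen1
    have hw0a : w0 = a := Walk.eq_of_length_eq_zero hr1len
    have hzadj : G.Adj z a := by rw [← hw0a]; exact hzw0
    -- build a path z - a - c of length 2
    have hnew : (Walk.cons hzadj (Walk.cons h Walk.nil)).IsPath := by
      rw [Walk.cons_isPath_iff, Walk.cons_isPath_iff]
      refine ⟨⟨Walk.IsPath.nil, by simp [h.ne]⟩, ?_⟩
      simp [hza, hzc]
    have hle2 := hmax _ _ _ hnew (by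
      intro v hv
      simp only [Walk.support_cons, Walk.support_nil, List.mem_cons, List.mem_singleton] at hv
      rcases hv with rfl | rfl | rfl | hfalse
      · exact hzs
      · exact hxs
      · exact hcs
      · simp at hfalse)
    simp [Walk.length_cons] at hle2 hcon
    omega
  -- destructure the third vertex
  have hcb : c ≠ b := by
    rintro rfl
    have hqnil : q = Walk.nil := Walk.isPath_iff_eq_nil.1 hp.of_cons
    subst hqnil
    simp [Walk.length_cons] at hlen2
  obtain ⟨d, h2, q2, rfl⟩ := q.exists_eq_cons_of_ne hcb
  have hds : d ∈ s := hps d (by simp)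
  have hqsupp : ∀ v ∈ (Walk.cons h2 q2).support, v ∈ (Walk.cons h (Walk.cons h2 q2)).support := by
    intro v hv
    rw [Walk.support_cons, List.mem_cons]
    exact Or.inr hv
  have hanq : a ∉ (Walk.cons h2 q2).support := ((Walk.cons_isPath_iff _ _).1 hp).2
  have hda : d ≠ a := fun hda => hanq (hda ▸ (by simp : d ∈ (Walk.cons h2 q2).support))
  have hdc : d ≠ c := h2.ne'
  -- y = c has neighbours only a and d
  have hleafy : ∀ w ∈ s, G.Adj c w → w = a ∨ w = d := by
    intro w hw hcw
    by_cases hwp : w ∈ (Walk.cons h (Walk.cons h2 q2)).support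
    · rw [Walk.support_cons, List.mem_cons] at hwp
      rcases hwp with rfl | hwp
      · exact Or.inl rfl
      · exact Or.inr (adj_start_eq_second hac h2 q2 hp.of_cons hwp hcw)
    · exfalso
      -- every neighbour of w in s equals c
      have hwnbr : ∀ z' ∈ s, G.Adj w z' → z' = c := by
        intro z' hz's hwz'
        by_contra hz'c
        by_cases hz'p : z' ∈ (Walk.cons h (Walk.cons h2 q2)).support
        · rw [Walk.support_cons, List.mem_cons] at hz'p
          rcases hz'p with rfl | hz'p
          · -- z' = a : two paths from c to a
            have hP2 : (Walk.cons hcw (Walk.cons hwz' Walk.nil)).IsPath := by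
              rw [Walk.cons_isPath_iff, Walk.cons_isPath_iff]
              refine ⟨⟨Walk.IsPath.nil, by simp [hwz'.ne]⟩, ?_⟩
              simp only [Walk.support_cons, Walk.support_nil, List.mem_cons, List.mem_singleton]
              push_neg
              exact ⟨hcw.ne, fun e => hz'c e.symm, by simp⟩
            have heq := hpath ⟨Walk.cons hcw (Walk.cons hwz' Walk.nil), hP2⟩
              (SimpleGraph.Path.singleton (h.symm))
            have hlen := congrArg (fun r : G.Path c z' => (r : G.Walk c z').length) heq
            simp [SimpleGraph.Path.singleton, Walk.length_cons] at hlen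
          · -- z' in the tail : two paths from c to z'
            have htake := (hp.of_cons).takeUntil hz'p
            have hP2 : (Walk.cons hcw (Walk.cons hwz' Walk.nil)).IsPath := by
              rw [Walk.cons_isPath_iff, Walk.cons_isPath_iff]
              refine ⟨⟨Walk.IsPath.nil, by simp [hwz'.ne]⟩, ?_⟩
              simp only [Walk.support_cons, Walk.support_nil, List.mem_cons, List.mem_singleton]
              push_neg
              exact ⟨hcw.ne, fun e => hz'c e.symm, by simp⟩
            have heq := hpath ⟨(Walk.cons h2 q2).takeUntil z' hz'p, htake⟩
              ⟨Walk.cons hcw (Walk.cons hwz' Walk.nil), hP2⟩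
            have hmem : w ∈ ((Walk.cons h2 q2).takeUntil z' hz'p).support := by
              have : w ∈ (Walk.cons hcw (Walk.cons hwz' Walk.nil)).support := by simp
              rw [show ((Walk.cons h2 q2).takeUntil z' hz'p) =
                (Walk.cons hcw (Walk.cons hwz' Walk.nil)) from congrArg Subtype.val heq]
              exact this
            exact hwp (hqsupp w (Walk.support_takeUntil_subset _ hz'p hmem))
        · -- z' off the path : extend to a longer path
          have hwq : w ∉ (Walk.cons h2 q2).support := fun hmem => hwp (hqsupp w hmem)
          have hr : (Walk.cons hwz'.symm (Walk.cons hcw.symm (Walk.cons h2 q2))).IsPath := by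
            rw [Walk.cons_isPath_iff]
            constructor
            · rw [Walk.cons_isPath_iff]
              exact ⟨hp.of_cons, hwq⟩
            · rw [Walk.support_cons, List.mem_cons]
              push_neg
              exact ⟨hwz'.ne', fun hmem => hz'p (hqsupp z' hmem)⟩
          have hle := hmax _ _ _ hr (by
            intro v hv
            rw [Walk.support_cons, List.mem_cons] at hv
            rcases hv with rfl | hv
            · exact hz's
            · rw [Walk.support_cons, List.mem_cons] at hv
              rcases hv with rfl | hv
              · exact hw
              · exact hps v (hqsupp v hv))
          simp [Walk.length_cons] at hle
      -- w is matched, necessarily to c, contradiction with e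
      obtain ⟨e', he', hend'⟩ := mem_coords.1 (hcoords ▸ hw : w ∈ coords M)
      have he'c : (w = e'.1 ∧ e'.2 = c) ∨ (w = e'.2 ∧ e'.1 = c) := by
        rcases hend' with h1 | h1
        · exact Or.inl ⟨h1, hwnbr e'.2 (hM.1 e' he').2.2 (h1 ▸ (hM.1 e' he').1)⟩
        · exact Or.inr ⟨h1, hwnbr e'.1 (hM.1 e' he').2.1 (h1 ▸ (hM.1 e' he').1.symm)⟩
      have hwa : w ≠ a := fun hwa => hwp (by rw [hwa]; exact Walk.start_mem_support _)
      have hwc : w ≠ c := hcw.ne'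
      have hee' : e ≠ e' := by
        intro hee'
        subst hee'
        rcases hexy with rfl | rfl <;> rcases he'c with ⟨h1, _⟩ | ⟨h1, _⟩ <;>
          simp_all
      rcases hexy with rfl | rfl <;> rcases he'c with ⟨_, h1⟩ | ⟨_, h1⟩
      · exact (hM.2.2 _ he _ he' hee').2 (by simp [h1])
      · exact (hM.2.1 _ he' _ he) (by simp [h1])
      · exact (hM.2.1 _ he _ he') (by simp [h1])
      · exact (hM.2.2 _ he _ he' hee').1 (by simp [h1])
  exact ⟨a, c, d, e, he, hexy, hxs, hcs, hds, hda, hdc, h, h2, hleafx, hleafy⟩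

lemma covcount (hac : G.IsAcyclic) (μ : ℕ) : ∀ (s : Finset V) (M : Finset (V × V)),
    IsMatchOn G s M → coords M = s → ConnOn G s → M.card = μ →
    (covSets G s M).card ≤ 2 ^ (μ - 1) + 1 ∧
    ∀ w ∈ s, ((covSets G s M).filter (fun C => w ∈ C)).card ≤ 2 ^ (μ - 1) ∧
      ((covSets G s M).filter (fun C => w ∉ C)).card ≤ 2 ^ (μ - 1) := by
  induction μ using Nat.strong_induction_on with
  | _ μ ih =>
    intro s M hM hcoords hconn hμ
    subst hμ
    by_cases hbase : M.card ≤ 1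
    · -- base cases
      by_cases h0 : M.card = 0
      · have hMe : M = ∅ := Finset.card_eq_zero.1 h0
        subst hMe
        have hse : s = ∅ := by rw [← hcoords]; simp [coords]
        subst hse
        constructor
        · have h2 : covSets G ∅ ∅ ⊆ (∅ : Finset V).powerset := Finset.filter_subset _ _
          have h3 := Finset.card_le_card h2
          simp only [Finset.powerset_empty, Finset.card_singleton] at h3
          have h4 : (2:ℕ) ^ (Finset.card (∅ : Finset (V × V)) - 1) + 1 = 2 := by simp
          omega
        · intro w hw
          simp at hw
      · have h1 : M.card = 1 := by omega
        obtain ⟨e, rfl⟩ := Finset.card_eq_one.1 h1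
        have hne : e.1 ≠ e.2 := hM.2.1 e (Finset.mem_singleton_self e) e (Finset.mem_singleton_self e)
        have hse : s = {e.1, e.2} := by
          rw [← hcoords]; simp [coords]
        have hsub2 : covSets G s {e} ⊆ {{e.1}, {e.2}} := by
          intro C hC
          have hCs : C ⊆ s := Finset.mem_powerset.1 (Finset.mem_filter.1 hC).1
          have hone := (Finset.mem_filter.1 hC).2.2 e (Finset.mem_singleton_self e)
          rw [Finset.mem_insert, Finset.mem_singleton]
          by_cases he1 : e.1 ∈ C
          · left
            ext v
            rw [Finset.mem_singleton]
            constructor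
            · intro hv
              have hvs := hCs hv
              rw [hse, Finset.mem_insert, Finset.mem_singleton] at hvs
              rcases hvs with rfl | rfl
              · rfl
              · exact absurd hv (hone.1 he1)
            · rintro rfl; exact he1
          · right
            have he2 : e.2 ∈ C := by
              by_contra he2
              exact he1 (hone.2 he2)
            ext v
            rw [Finset.mem_singleton]
            constructor
            · intro hv
              have hvs := hCs hv
              rw [hse, Finset.mem_insert, Finset.mem_singleton] at hvs
              rcases hvs with rfl | rfl
              · exact absurd hv he1
              · rfl
            · rintro rfl; exact he2
        constructor
        · have h3 := Finset.card_le_card hsub2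
          have h4 : ({{e.1}, {e.2}} : Finset (Finset V)).card ≤ 2 := by
            apply le_trans (Finset.card_insert_le _ _)
            simp
          have h5 : (2:ℕ) ^ (Finset.card ({e} : Finset (V × V)) - 1) + 1 = 2 := by simp
          omega
        · intro w hw
          rw [hse, Finset.mem_insert, Finset.mem_singleton] at hw
          have hkey : ∀ (b : V), b ∈ ({e.1, e.2} : Finset V) →
              ((covSets G s {e}).filter (fun C => b ∈ C)).card ≤ 1 ∧
              ((covSets G s {e}).filter (fun C => b ∉ C)).card ≤ 1 := by
            intro b hb
            rw [Finset.mem_insert, Finset.mem_singleton] at hb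
            constructor
            · have : (covSets G s {e}).filter (fun C => b ∈ C) ⊆ {{b}} := by
                intro C hC
                have h5 := Finset.mem_filter.1 hC
                have h6 := hsub2 h5.1
                rw [Finset.mem_insert, Finset.mem_singleton] at h6
                rw [Finset.mem_singleton]
                rcases h6 with rfl | rfl <;> rcases hb with rfl | rfl
                · rfl
                · have h5b := h5.2
                  rw [Finset.mem_singleton] at h5b
                  exact absurd h5b hne.symm
                · have h5b := h5.2
                  rw [Finset.mem_singleton] at h5b
                  exact absurd h5b hne
                · rfl
              have h7 := Finset.card_le_card this
              simpa using h7
            · have : (covSets G s {e}).filter (fun C => b ∉ C) ⊆ {{e.1}, {e.2}} \ {{b}} := by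
                intro C hC
                have h5 := Finset.mem_filter.1 hC
                have h6 := hsub2 h5.1
                rw [Finset.mem_sdiff, Finset.mem_singleton]
                refine ⟨h6, fun hCb => ?_⟩
                subst hCb
                exact h5.2 (Finset.mem_singleton_self b)
              have h7 := Finset.card_le_card this
              have h8 : (({{e.1}, {e.2}} : Finset (Finset V)) \ {{b}}).card ≤ 1 := by
                rcases hb with hb1 | hb1
                · have hsub3 : (({{e.1}, {e.2}} : Finset (Finset V)) \ {{b}}) ⊆ {{e.2}} := by
                    intro C hC2
                    rw [Finset.mem_sdiff, Finset.mem_insert, Finset.mem_singleton,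
                      Finset.mem_singleton] at hC2
                    rw [Finset.mem_singleton]
                    rcases hC2.1 with h | h
                    · exact absurd (by rw [h, hb1] : C = {b}) hC2.2
                    · exact h
                  simpa using Finset.card_le_card hsub3
                · have hsub3 : (({{e.1}, {e.2}} : Finset (Finset V)) \ {{b}}) ⊆ {{e.1}} := by
                    intro C hC2
                    rw [Finset.mem_sdiff, Finset.mem_insert, Finset.mem_singleton,
                      Finset.mem_singleton] at hC2
                    rw [Finset.mem_singleton]
                    rcases hC2.1 with h | h
                    · exact h
                    · exact absurd (by rw [h, hb1] : C = {b}) hC2.2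
                  simpa using Finset.card_le_card hsub3
              omega
          have h9 := hkey w (by simp only [Finset.mem_insert, Finset.mem_singleton]; exact hw)
          have h10 : (1:ℕ) ≤ 2 ^ (Finset.card ({e} : Finset (V × V)) - 1) := Nat.one_le_two_pow
          exact ⟨h9.1.trans h10, h9.2.trans h10⟩
    · -- inductive step : 2 ≤ M.card
      push_neg at hbase
      obtain ⟨x, y, d, e, he, hexy, hxs, hys, hds, hdx, hdy, hxy, hyd, hleafx, hleafy⟩ :=
        tree_pm_structure hac hM hcoords hconn hbase
      have hxyine : (e.1 = x ∧ e.2 = y) ∨ (e.1 = y ∧ e.2 = x) := by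
        rcases hexy with rfl | rfl <;> simp
      set s' := (s.erase x).erase y with hs'
      set M' := M.erase e with hM'def
      have hsub' : s' ⊆ s := (Finset.erase_subset _ _).trans (Finset.erase_subset _ _)
      have hxcoord : ∀ p ∈ M', p.1 ≠ x ∧ p.1 ≠ y ∧ p.2 ≠ x ∧ p.2 ≠ y := by
        intro p hp
        have hpe : p ≠ e := (Finset.mem_erase.1 hp).1
        have hpM : p ∈ M := Finset.mem_of_mem_erase hp
        have t1 := hM.2.2 p hpM e he hpe
        have t2 := hM.2.1 p hpM e he
        have t3 := (hM.2.1 e he p hpM).symm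
        rcases hxyine with ⟨h1, h2⟩ | ⟨h1, h2⟩
        · exact ⟨h1 ▸ t1.1, h2 ▸ t2, h1 ▸ t3, h2 ▸ t1.2⟩
        · exact ⟨h2 ▸ t2, h1 ▸ t1.1, h2 ▸ t1.2, h1 ▸ t3⟩
      have hM'match : IsMatchOn G s' M' := by
        refine ⟨?_, fun p hp q hq => hM.2.1 p (Finset.mem_of_mem_erase hp) q
          (Finset.mem_of_mem_erase hq),
          fun p hp q hq hne => hM.2.2 p (Finset.mem_of_mem_erase hp) q
          (Finset.mem_of_mem_erase hq) hne⟩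
        intro p hp
        have h0 := hM.1 p (Finset.mem_of_mem_erase hp)
        have hc := hxcoord p hp
        exact ⟨h0.1, Finset.mem_erase.2 ⟨hc.2.1, Finset.mem_erase.2 ⟨hc.1, h0.2.1⟩⟩,
          Finset.mem_erase.2 ⟨hc.2.2.2, Finset.mem_erase.2 ⟨hc.2.2.1, h0.2.2⟩⟩⟩
      have hcoords' : coords M' = s' := by
        ext v
        constructor
        · intro hv
          obtain ⟨p, hp, hpv⟩ := mem_coords.1 hv
          have hc := hxcoord p hp
          have h0 := hM.1 p (Finset.mem_of_mem_erase hp)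
          rcases hpv with rfl | rfl
          · exact Finset.mem_erase.2 ⟨hc.2.1, Finset.mem_erase.2 ⟨hc.1, h0.2.1⟩⟩
          · exact Finset.mem_erase.2 ⟨hc.2.2.2, Finset.mem_erase.2 ⟨hc.2.2.1, h0.2.2⟩⟩
        · intro hv
          have hvy := (Finset.mem_erase.1 hv).1
          have hvx := (Finset.mem_erase.1 (Finset.mem_erase.1 hv).2).1
          have hvs := (Finset.mem_erase.1 (Finset.mem_erase.1 hv).2).2
          obtain ⟨p, hp, hpv⟩ := mem_coords.1 (hcoords ▸ hvs : v ∈ coords M)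
          refine mem_coords.2 ⟨p, Finset.mem_erase.2 ⟨?_, hp⟩, hpv⟩
          rintro rfl
          rcases hxyine with ⟨h1, h2⟩ | ⟨h1, h2⟩ <;> rcases hpv with rfl | rfl <;> simp_all
      have hconn' : ConnOn G s' := by
        intro a' ha' b' hb'
        obtain ⟨p0, hp0⟩ := hconn a' (hsub' ha') b' (hsub' hb')
        have hrs : ∀ v ∈ (p0.toPath : G.Walk a' b').support, v ∈ s :=
          fun v hv => hp0 v (Walk.support_toPath_subset p0 hv)
        have hxa : x ≠ a' := fun hh =>
          (Finset.mem_erase.1 (Finset.mem_erase.1 ha').2).1 hh.symm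
        have hxb : x ≠ b' := fun hh =>
          (Finset.mem_erase.1 (Finset.mem_erase.1 hb').2).1 hh.symm
        have hya : y ≠ a' := fun hh => (Finset.mem_erase.1 ha').1 hh.symm
        have hyb : y ≠ b' := fun hh => (Finset.mem_erase.1 hb').1 hh.symm
        have hxnr : x ∉ (p0.toPath : G.Walk a' b').support := by
          intro hxr
          obtain ⟨u, hu, w', hw', hne, hu2, hw2⟩ :=
            interior_two_nbrs (p0.toPath : G.Walk a' b') p0.toPath.2 hxr hxa hxb
          have e1 := hleafx u (hrs u hu) hu2.symm
          have e2 := hleafx w' (hrs w' hw') hw2.symm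
          exact hne (e1.trans e2.symm)
        have hynr : y ∉ (p0.toPath : G.Walk a' b').support := by
          intro hyr
          obtain ⟨u, hu, w', hw', hne, hu2, hw2⟩ :=
            interior_two_nbrs (p0.toPath : G.Walk a' b') p0.toPath.2 hyr hya hyb
          rcases hleafy u (hrs u hu) hu2.symm with rfl | rfl
          · exact hxnr hu
          · rcases hleafy w' (hrs w' hw') hw2.symm with rfl | rfl
            · exact hxnr hw'
            · exact hne rfl
        exact ⟨(p0.toPath : G.Walk a' b'), fun v hv => Finset.mem_erase.2
          ⟨fun hh => hynr (hh ▸ hv), Finset.mem_erase.2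
            ⟨fun hh => hxnr (hh ▸ hv), hrs v hv⟩⟩⟩
      have hM'card : M'.card = M.card - 1 := Finset.card_erase_of_mem he
      have hds' : d ∈ s' := Finset.mem_erase.2 ⟨hdy, Finset.mem_erase.2 ⟨hdx, hds⟩⟩
      obtain ⟨htot', hfil'⟩ := ih M'.card (by omega) s' M' hM'match hcoords' hconn' rfl
      have he1 : M'.card - 1 = M.card - 2 := by omega
      rw [he1] at htot' hfil'
      -- decomposition of covers
      have hxyone : ∀ C ∈ covSets G s M, (x ∈ C ↔ y ∉ C) := by
        intro C hC
        have hone := (Finset.mem_filter.1 hC).2.2 e he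
        rcases hxyine with ⟨h1, h2⟩ | ⟨h1, h2⟩
        · rwa [h1, h2] at hone
        · rw [h1, h2] at hone
          tauto
      have hcovE : ∀ C ∈ covSets G s M, ∀ u ∈ s, ∀ v ∈ s, G.Adj u v → u ∈ C ∨ v ∈ C :=
        fun C hC => (Finset.mem_filter.1 hC).2.1
      have hCsub : ∀ C ∈ covSets G s M, C ⊆ s :=
        fun C hC => Finset.mem_powerset.1 (Finset.mem_filter.1 hC).1
      have hdecomp : ∀ C ∈ covSets G s M, ∃ C' ∈ covSets G s' M',
          (C = insert y C' ∧ y ∈ C ∧ x ∉ C) ∨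
          (C = insert x C' ∧ x ∈ C ∧ y ∉ C ∧ d ∈ C') := by
        intro C hC
        have hCs := hCsub C hC
        have hcov := hcovE C hC
        have honeM := (Finset.mem_filter.1 hC).2.2
        have hmemC' : ∀ v, v ∈ (C.erase x).erase y ↔ (v ≠ x ∧ v ≠ y ∧ v ∈ C) := by
          intro v
          rw [Finset.mem_erase, Finset.mem_erase]
          tauto
        have htrans : ∀ v ∈ s', (v ∈ (C.erase x).erase y ↔ v ∈ C) := by
          intro v hv
          have h1 := (Finset.mem_erase.1 hv).1
          have h2 := (Finset.mem_erase.1 (Finset.mem_erase.1 hv).2).1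
          rw [hmemC' v]
          tauto
        have hC'cov : (C.erase x).erase y ∈ covSets G s' M' := by
          refine Finset.mem_filter.2 ⟨Finset.mem_powerset.2 ?_, ?_, ?_⟩
          · intro v hv
            obtain ⟨hvx, hvy, hvC⟩ := (hmemC' v).1 hv
            exact Finset.mem_erase.2 ⟨hvy, Finset.mem_erase.2 ⟨hvx, hCs hvC⟩⟩
          · intro u hu v hv hadj
            rcases hcov u (hsub' hu) v (hsub' hv) hadj with hh | hh
            · exact Or.inl ((htrans u hu).2 hh)
            · exact Or.inr ((htrans v hv).2 hh)
          · intro p hp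
            have h0 := hM'match.1 p hp
            have hone := honeM p (Finset.mem_of_mem_erase hp)
            rw [htrans p.1 h0.2.1, htrans p.2 h0.2.2]
            exact hone
        refine ⟨(C.erase x).erase y, hC'cov, ?_⟩
        by_cases hyC : y ∈ C
        · have hxC : x ∉ C := fun hxC => (hxyone C hC).1 hxC hyC
          left
          refine ⟨?_, hyC, hxC⟩
          ext v
          rw [Finset.mem_insert]
          constructor
          · intro hvC
            rcases eq_or_ne v y with rfl | hvy
            · exact Or.inl rfl
            · exact Or.inr ((hmemC' v).2 ⟨fun hvx => hxC (hvx ▸ hvC), hvy, hvC⟩)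
          · rintro (rfl | hv)
            · exact hyC
            · exact ((hmemC' v).1 hv).2.2
        · have hxC : x ∈ C := by
            rcases hcov x hxs y hys hxy with hh | hh
            · exact hh
            · exact absurd hh hyC
          have hdC : d ∈ C := by
            rcases hcov y hys d hds hyd with hh | hh
            · exact absurd hh hyC
            · exact hh
          right
          refine ⟨?_, hxC, hyC, (hmemC' d).2 ⟨hdx, hdy, hdC⟩⟩
          ext v
          rw [Finset.mem_insert]
          constructor
          · intro hvC
            rcases eq_or_ne v x with rfl | hvx
            · exact Or.inl rfl
            · exact Or.inr ((hmemC' v).2 ⟨hvx, fun hvy => hyC (hvy ▸ hvC), hvC⟩)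
          · rintro (rfl | hv)
            · exact hxC
            · exact ((hmemC' v).1 hv).2.2
      -- arithmetic helpers
      have hpow : 2 ^ (M.card - 1) = 2 ^ (M.card - 2) + 2 ^ (M.card - 2) := by
        have hh : M.card - 1 = (M.card - 2) + 1 := by omega
        rw [hh, pow_succ]
        ring
      have hpow2 : 2 ^ (M.card - 2) + 1 ≤ 2 ^ (M.card - 1) := by
        have h6 : 1 ≤ 2 ^ (M.card - 2) := Nat.one_le_two_pow
        omega
      constructor
      · -- total bound
        have hsubU : covSets G s M ⊆ (covSets G s' M').image (insert y ·) ∪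
            ((covSets G s' M').filter (fun C => d ∈ C)).image (insert x ·) := by
          intro C hC
          obtain ⟨C', hC', hcase⟩ := hdecomp C hC
          rcases hcase with ⟨heq, _, _⟩ | ⟨heq, _, _, hd⟩
          · exact Finset.mem_union_left _ (Finset.mem_image.2 ⟨C', hC', heq.symm⟩)
          · exact Finset.mem_union_right _
              (Finset.mem_image.2 ⟨C', Finset.mem_filter.2 ⟨hC', hd⟩, heq.symm⟩)
        have h2 := (Finset.card_le_card hsubU).trans (Finset.card_union_le _ _)
        have h3 := Finset.card_image_le (s := covSets G s' M') (f := (insert y ·))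
        have h4 := Finset.card_image_le
          (s := (covSets G s' M').filter (fun C => d ∈ C)) (f := (insert x ·))
        have h5 := (hfil' d hds').1
        omega
      · -- filtered bounds
        intro w hw
        by_cases hwx : w = x
        · subst hwx
          constructor
          · have hsubF : (covSets G s M).filter (fun C => w ∈ C) ⊆
                ((covSets G s' M').filter (fun C => d ∈ C)).image (insert w ·) := by
              intro C hC0
              have hC := (Finset.mem_filter.1 hC0).1
              have hwC := (Finset.mem_filter.1 hC0).2
              obtain ⟨C', hC', hcase⟩ := hdecomp C hC
              rcases hcase with ⟨heq, _, hxC⟩ | ⟨heq, _, _, hd⟩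
              · exact absurd hwC hxC
              · exact Finset.mem_image.2 ⟨C', Finset.mem_filter.2 ⟨hC', hd⟩, heq.symm⟩
            have h2 := (Finset.card_le_card hsubF).trans (Finset.card_image_le)
            have h5 := (hfil' d hds').1
            omega
          · have hsubF : (covSets G s M).filter (fun C => w ∉ C) ⊆
                (covSets G s' M').image (insert y ·) := by
              intro C hC0
              have hC := (Finset.mem_filter.1 hC0).1
              have hwC := (Finset.mem_filter.1 hC0).2
              obtain ⟨C', hC', hcase⟩ := hdecomp C hC
              rcases hcase with ⟨heq, _, _⟩ | ⟨heq, hxC, _, _⟩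
              · exact Finset.mem_image.2 ⟨C', hC', heq.symm⟩
              · exact absurd hxC hwC
            have h2 := (Finset.card_le_card hsubF).trans (Finset.card_image_le)
            omega
        · by_cases hwy : w = y
          · subst hwy
            constructor
            · have hsubF : (covSets G s M).filter (fun C => w ∈ C) ⊆
                  (covSets G s' M').image (insert w ·) := by
                intro C hC0
                have hC := (Finset.mem_filter.1 hC0).1
                have hwC := (Finset.mem_filter.1 hC0).2
                obtain ⟨C', hC', hcase⟩ := hdecomp C hC
                rcases hcase with ⟨heq, _, _⟩ | ⟨heq, _, hyC, _⟩
                · exact Finset.mem_image.2 ⟨C', hC', heq.symm⟩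
                · exact absurd hwC hyC
              have h2 := (Finset.card_le_card hsubF).trans (Finset.card_image_le)
              omega
            · have hsubF : (covSets G s M).filter (fun C => w ∉ C) ⊆
                  ((covSets G s' M').filter (fun C => d ∈ C)).image (insert x ·) := by
                intro C hC0
                have hC := (Finset.mem_filter.1 hC0).1
                have hwC := (Finset.mem_filter.1 hC0).2
                obtain ⟨C', hC', hcase⟩ := hdecomp C hC
                rcases hcase with ⟨heq, hyC, _⟩ | ⟨heq, _, _, hd⟩
                · exact absurd hyC hwC
                · exact Finset.mem_image.2 ⟨C', Finset.mem_filter.2 ⟨hC', hd⟩, heq.symm⟩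
              have h2 := (Finset.card_le_card hsubF).trans (Finset.card_image_le)
              have h5 := (hfil' d hds').1
              omega
          · -- w in s'
            have hw' : w ∈ s' := Finset.mem_erase.2 ⟨hwy, Finset.mem_erase.2 ⟨hwx, hw⟩⟩
            have hmem1 : ∀ C' ∈ covSets G s' M', (w ∈ insert y C' ↔ w ∈ C') := by
              intro C' _
              rw [Finset.mem_insert]
              constructor
              · rintro (rfl | hh)
                · exact absurd rfl hwy
                · exact hh
              · exact Or.inr
            have hmem2 : ∀ C' ∈ covSets G s' M', (w ∈ insert x C' ↔ w ∈ C') := by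
              intro C' _
              rw [Finset.mem_insert]
              constructor
              · rintro (rfl | hh)
                · exact absurd rfl hwx
                · exact hh
              · exact Or.inr
            constructor
            · have hsubF : (covSets G s M).filter (fun C => w ∈ C) ⊆
                  ((covSets G s' M').filter (fun C => w ∈ C)).image (insert y ·) ∪
                  ((covSets G s' M').filter (fun C => w ∈ C)).image (insert x ·) := by
                intro C hC0
                have hC := (Finset.mem_filter.1 hC0).1
                have hwC := (Finset.mem_filter.1 hC0).2
                obtain ⟨C', hC', hcase⟩ := hdecomp C hC
                rcases hcase with ⟨heq, _, _⟩ | ⟨heq, _, _, _⟩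
                · refine Finset.mem_union_left _ (Finset.mem_image.2 ⟨C',
                    Finset.mem_filter.2 ⟨hC', (hmem1 C' hC').1 (heq ▸ hwC)⟩, heq.symm⟩)
                · refine Finset.mem_union_right _ (Finset.mem_image.2 ⟨C',
                    Finset.mem_filter.2 ⟨hC', (hmem2 C' hC').1 (heq ▸ hwC)⟩, heq.symm⟩)
              have h2 := (Finset.card_le_card hsubF).trans (Finset.card_union_le _ _)
              have h3 := Finset.card_image_le
                (s := (covSets G s' M').filter (fun C => w ∈ C)) (f := (insert y ·))
              have h4 := Finset.card_image_le
                (s := (covSets G s' M').filter (fun C => w ∈ C)) (f := (insert x ·))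
              have h5 := (hfil' w hw').1
              omega
            · have hsubF : (covSets G s M).filter (fun C => w ∉ C) ⊆
                  ((covSets G s' M').filter (fun C => w ∉ C)).image (insert y ·) ∪
                  ((covSets G s' M').filter (fun C => w ∉ C)).image (insert x ·) := by
                intro C hC0
                have hC := (Finset.mem_filter.1 hC0).1
                have hwC := (Finset.mem_filter.1 hC0).2
                obtain ⟨C', hC', hcase⟩ := hdecomp C hC
                rcases hcase with ⟨heq, _, _⟩ | ⟨heq, _, _, _⟩
                · refine Finset.mem_union_left _ (Finset.mem_image.2 ⟨C',
                    Finset.mem_filter.2 ⟨hC', fun hh => hwC (heq.symm ▸ (hmem1 C' hC').2 hh)⟩,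
                    heq.symm⟩)
                · refine Finset.mem_union_right _ (Finset.mem_image.2 ⟨C',
                    Finset.mem_filter.2 ⟨hC', fun hh => hwC (heq.symm ▸ (hmem2 C' hC').2 hh)⟩,
                    heq.symm⟩)
              have h2 := (Finset.card_le_card hsubF).trans (Finset.card_union_le _ _)
              have h3 := Finset.card_image_le
                (s := (covSets G s' M').filter (fun C => w ∉ C)) (f := (insert y ·))
              have h4 := Finset.card_image_le
                (s := (covSets G s' M').filter (fun C => w ∉ C)) (f := (insert x ·))
              have h5 := (hfil' w hw').2
              omega



lemma isIndepSet'_iff {t : Finset V} : G.IsIndepSet' ↑t ↔ ∀ u ∈ t, ∀ v ∈ t, ¬ G.Adj u v := by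
  constructor
  · intro h u hu v hv hadj
    rcases eq_or_ne u v with rfl | hne
    · exact G.irrefl hadj
    · exact h (Finset.mem_coe.2 hu) (Finset.mem_coe.2 hv) hne hadj
  · intro h u hu v hv hne hadj
    exact h u (Finset.mem_coe.1 hu) v (Finset.mem_coe.1 hv) hadj

lemma indepNum_eq : _root_.indepNum G = aOn G Finset.univ := by
  have hbdd : BddAbove {k | ∃ s : Finset V, G.IsIndepSet' ↑s ∧ s.card = k} := by
    refine ⟨Fintype.card V, ?_⟩
    rintro k ⟨t, ht, rfl⟩
    exact Finset.card_le_univ t |>.trans (le_of_eq Finset.card_univ)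
  apply le_antisymm
  · refine csSup_le ⟨0, ⟨∅, by simp [SimpleGraph.IsIndepSet'], rfl⟩⟩ ?_
    rintro k ⟨t, ht, rfl⟩
    exact card_le_aOn (mem_indSets.2 ⟨Finset.subset_univ t, isIndepSet'_iff.1 ht⟩)
  · obtain ⟨t, ht, htc⟩ := exists_max_ind (G := G) Finset.univ
    rw [← htc]
    exact le_csSup hbdd ⟨t, isIndepSet'_iff.2 (mem_indSets.1 ht).2, rfl⟩

lemma numMaxIndep_eq : numMaxIndep G = (maxIndSets G Finset.univ).card := by
  rw [numMaxIndep]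
  have hset : {t : Finset V | G.IsIndepSet' ↑t ∧ t.card = _root_.indepNum G} =
      ↑(maxIndSets G Finset.univ) := by
    ext t
    simp only [Set.mem_setOf_eq, Finset.mem_coe, maxIndSets, Finset.mem_filter]
    constructor
    · rintro ⟨h1, h2⟩
      exact ⟨mem_indSets.2 ⟨Finset.subset_univ t, isIndepSet'_iff.1 h1⟩,
        by rw [← indepNum_eq]; exact h2⟩
    · rintro ⟨h1, h2⟩
      exact ⟨isIndepSet'_iff.2 (mem_indSets.1 h1).2, by rw [indepNum_eq]; exact h2⟩
  rw [hset, Set.ncard_coe_finset]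

end Zito

open Zito in
theorem stmt7 {V : Type*} [Fintype V] (T : SimpleGraph V) (hT : T.IsTree) (n : ℕ)
    (hn : Fintype.card V = n) (h2 : 2 ≤ n) :
    (Even n → numMaxIndep T ≤ 2 ^ ((n - 2) / 2) + 1) ∧
    (Odd n → numMaxIndep T ≤ 2 ^ ((n - 3) / 2)) := by
  classical
  subst hn
  obtain ⟨M, hM, hsum⟩ := Zito.koenig (G := T) hT.2 Finset.univ
  rw [Finset.card_univ] at hsum
  have hnum : numMaxIndep T = (Zito.maxIndSets T Finset.univ).card := Zito.numMaxIndep_eq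
  have hM1 : 1 ≤ M.card := by
    by_contra h0
    have hM0 : M.card = 0 := by omega
    obtain ⟨x, y, hadj⟩ := Zito.exists_edge hT.1 h2
    obtain ⟨t, ht, htc⟩ := Zito.exists_max_ind (G := T) Finset.univ
    have htu : t = Finset.univ := Finset.eq_univ_of_card t (by rw [← Finset.card_univ] at hsum ⊢; omega)
    exact (Zito.mem_indSets.1 ht).2 x (htu ▸ Finset.mem_univ x) y (htu ▸ Finset.mem_univ y) hadj
  by_cases hperf : Zito.coords M = Finset.univ
  · -- perfect matching : n is even
    have h2μ : 2 * M.card = Fintype.card V := by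
      rw [← Zito.coords_card hM.2.1 hM.2.2, hperf, Finset.card_univ]
    have hconn : Zito.ConnOn T Finset.univ := by
      intro a _ b _
      obtain ⟨p⟩ := hT.1.preconnected a b
      exact ⟨p, fun v _ => Finset.mem_univ v⟩
    obtain ⟨htot, _⟩ := Zito.covcount hT.2 M.card Finset.univ M hM hperf hconn rfl
    have hsdd : ∀ t : Finset V, Finset.univ \ (Finset.univ \ t) = t := fun t => by
      rw [Finset.sdiff_sdiff_self_left, Finset.univ_inter]
    have hinj2 : (Zito.maxIndSets T Finset.univ).card ≤ (Zito.covSets T Finset.univ M).card := by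
      apply Finset.card_le_card_of_injOn (fun t => Finset.univ \ t)
      · intro t ht
        exact (Zito.compl_max_ind hM hsum ht).1
      · intro t1 _ t2 _ he
        rw [← hsdd t1, ← hsdd t2]
        simp only at he
        rw [he]
    have hfinal : numMaxIndep T ≤ 2 ^ (M.card - 1) + 1 := by
      rw [hnum]
      exact hinj2.trans htot
    constructor
    · intro _
      have heq : M.card - 1 = (Fintype.card V - 2) / 2 := by omega
      rwa [← heq]
    · intro hodd
      obtain ⟨k, hk⟩ := hodd
      omega
  · -- no perfect matching
    obtain ⟨u, hu⟩ : ∃ u, u ∉ Zito.coords M := by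
      by_contra h
      push_neg at h
      exact hperf (Finset.eq_univ_iff_forall.2 h)
    have hb : (Zito.maxIndSets T Finset.univ).card ≤ 2 ^ (M.card - 1) :=
      Zito.count_nonperfect hM hT.1 h2 hsum hu
    have hlt : 2 * M.card < Fintype.card V := by
      have hcc := Zito.coords_card hM.2.1 hM.2.2
      have hss : Zito.coords M ⊂ Finset.univ := ⟨Finset.subset_univ _, fun hcon =>
        hperf (Finset.Subset.antisymm (Finset.subset_univ _) hcon)⟩
      have := Finset.card_lt_card hss
      rw [Finset.card_univ] at this
      omega
    have hle : numMaxIndep T ≤ 2 ^ (M.card - 1) := by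
      rw [hnum]; exact hb
    constructor
    · intro heven
      obtain ⟨k, hk⟩ := heven
      refine le_trans hle (le_trans (Nat.pow_le_pow_right (by norm_num) ?_)
        (Nat.le_add_right _ 1))
      omega
    · intro hodd
      obtain ⟨k, hk⟩ := hodd
      refine le_trans hle (Nat.pow_le_pow_right (by norm_num) ?_)
      omega
end
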